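/- arXiv:2205.03697 — 5 statements merged into one kernel-verified Lean document; each statement's English description precedes it below -/
import Mathlib

section
/- For all n ≥ 1, the number of partitions of n in which exactly one even part value is repeated (all other even part values are distinct) and odd parts are unrestricted equals the number of partitions of n in which the set of parts congruent to 0 modulo 4 is a singleton. -/
/-- `d_e(n)`: partitions of `n` in which exactly one even part value is repeated
(all other even part values appear exactly once) and odd parts are unrestricted. -/
noncomputable def dE (n : ℕ) : ℕ :=
  Nat.card {lam : n.Partition //
    ∃ j, Even j ∧ 2 ≤ lam.parts.count j ∧
      ∀ i, Even i → i ≠ j → lam.parts.count i ≤ 1}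

/-- `f_0(n)`: partitions of `n` in which the set of parts congruent to `0` modulo `4`
is a singleton. -/
noncomputable def fZero (n : ℕ) : ℕ :=
  Nat.card {lam : n.Partition //
    ∃ j, 4 ∣ j ∧ j ∈ lam.parts ∧ ∀ i ∈ lam.parts, 4 ∣ i → i = j}


open Multiset

namespace DEFZ

/-- exponent of 2 -/
def ePow (k : ℕ) : ℕ := k.factorization 2

/-- odd part -/
def oddPart (k : ℕ) : ℕ := ordCompl[2] k

lemma oddPart_not_dvd {k : ℕ} (hk : k ≠ 0) : ¬ 2 ∣ oddPart k :=
  Nat.not_dvd_ordCompl Nat.prime_two hk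

lemma oddPart_pos {k : ℕ} (hk : k ≠ 0) : 0 < oddPart k := Nat.ordCompl_pos 2 hk

lemma two_pow_mul_oddPart (k : ℕ) : 2 ^ ePow k * oddPart k = k :=
  Nat.ordProj_mul_ordCompl_eq_self k 2

lemma ePow_pos {k : ℕ} (h2 : 2 ∣ k) (hk : k ≠ 0) : 1 ≤ ePow k :=
  Nat.Prime.factorization_pos_of_dvd Nat.prime_two hk h2

lemma ePow_two_pow_mul {a o : ℕ} (ho : ¬ 2 ∣ o) : ePow (2 ^ a * o) = a := by
  have ho0 : o ≠ 0 := by rintro rfl; exact ho ⟨0, rfl⟩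
  unfold ePow
  rw [Nat.factorization_mul (pow_ne_zero _ two_ne_zero) ho0]
  simp [Nat.Prime.factorization_pow Nat.prime_two,
    Nat.factorization_eq_zero_of_not_dvd ho]

lemma oddPart_two_pow_mul {a o : ℕ} (ho : ¬ 2 ∣ o) : oddPart (2 ^ a * o) = o := by
  have ho0 : o ≠ 0 := by rintro rfl; exact ho ⟨0, rfl⟩
  have h := two_pow_mul_oddPart (2 ^ a * o)
  rw [ePow_two_pow_mul ho] at h
  exact (Nat.eq_of_mul_eq_mul_left (pow_pos two_pos a) h)

end DEFZ

namespace DEFZ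
open Multiset

/-- merge an even number `k = 2^a * o` into `2^(a-1)` copies of `2*o`. -/
def mergeOne (k : ℕ) : Multiset ℕ := Multiset.replicate (k / (2 * oddPart k)) (2 * oddPart k)

lemma two_pow_sub_one_mul {a o : ℕ} (ha : 1 ≤ a) : 2 ^ a * o = 2 ^ (a - 1) * (2 * o) := by
  obtain ⟨b, rfl⟩ := Nat.exists_eq_add_of_le ha
  have hb : 1 + b - 1 = b := by omega
  rw [hb, pow_add]
  ring

lemma mergeOne_two_pow_mul {a o : ℕ} (ha : 1 ≤ a) (ho : ¬ 2 ∣ o) :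
    mergeOne (2 ^ a * o) = Multiset.replicate (2 ^ (a - 1)) (2 * o) := by
  have ho0 : 0 < o := by rcases Nat.eq_zero_or_pos o with h | h; · exact absurd (h ▸ ⟨0, rfl⟩) ho
                         · exact h
  unfold mergeOne
  rw [oddPart_two_pow_mul ho, two_pow_sub_one_mul ha, Nat.mul_div_cancel _ (by positivity)]

/-- canonical decomposition of a positive even number -/
lemma even_decomp {k : ℕ} (h2 : 2 ∣ k) (hk : k ≠ 0) :
    ∃ a o, 1 ≤ a ∧ ¬ 2 ∣ o ∧ 0 < o ∧ k = 2 ^ a * o :=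
  ⟨ePow k, oddPart k, ePow_pos h2 hk, oddPart_not_dvd hk, oddPart_pos hk,
    (two_pow_mul_oddPart k).symm⟩

def glaisher (s : Multiset ℕ) : Multiset ℕ :=
  Multiset.filter (fun k => ¬ 2 ∣ k) s + (Multiset.filter (fun k => 2 ∣ k) s).bind mergeOne

def binMS (o m : ℕ) : Multiset ℕ := ↑(m.bitIndices.map (fun i => 2 ^ (i + 1) * o))

def unglaisher (t : Multiset ℕ) : Multiset ℕ :=
  Multiset.filter (fun k => ¬ 2 ∣ k) t +
    ∑ x ∈ (Multiset.filter (fun k => 2 ∣ k) t).toFinset, binMS (x / 2) (t.count x)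

lemma sum_bind' {α : Type*} (s : Multiset α) (f : α → Multiset ℕ) :
    (s.bind f).sum = (s.map (fun a => (f a).sum)).sum := by
  induction s using Multiset.induction with
  | empty => simp
  | cons a s ih => simp [Multiset.cons_bind, ih]

lemma sum_mergeOne {k : ℕ} (h2 : 2 ∣ k) (hk : k ≠ 0) : (mergeOne k).sum = k := by
  obtain ⟨a, o, ha, ho, ho0, rfl⟩ := even_decomp h2 hk
  rw [mergeOne_two_pow_mul ha ho, Multiset.sum_replicate, smul_eq_mul,
    ← two_pow_sub_one_mul ha]

lemma sum_glaisher {s : Multiset ℕ} (hs : ∀ k ∈ s, k ≠ 0) : (glaisher s).sum = s.sum := by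
  unfold glaisher
  rw [Multiset.sum_add, sum_bind']
  have h1 : ((Multiset.filter (fun k => 2 ∣ k) s).map (fun a => (mergeOne a).sum))
      = (Multiset.filter (fun k => 2 ∣ k) s).map id := by
    apply Multiset.map_congr rfl
    intro k hk
    have h2 := Multiset.of_mem_filter hk
    exact sum_mergeOne h2 (hs k (Multiset.mem_of_mem_filter hk))
  rw [h1, Multiset.map_id]
  rw [← Multiset.sum_add, add_comm, Multiset.filter_add_not]

lemma sum_binMS (o m : ℕ) : (binMS o m).sum = 2 * o * m := by
  unfold binMS
  rw [Multiset.sum_coe]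
  have : (m.bitIndices.map (fun i => 2 ^ (i + 1) * o))
      = m.bitIndices.map (fun i => (2 * o) * 2 ^ i) := by
    apply List.map_congr_left; intro i _; rw [pow_succ]; ring
  rw [this, List.sum_map_mul_left, Nat.twoPowSum_bitIndices]

end DEFZ

namespace DEFZ
open Multiset

lemma sum_finsetSum {β : Type*} (F : Finset β) (f : β → Multiset ℕ) :
    (∑ x ∈ F, f x).sum = ∑ x ∈ F, (f x).sum := by
  classical
  induction F using Finset.induction_on with
  | empty => simp
  | insert _ _ hx ih => simp [Finset.sum_insert hx, Multiset.sum_add, ih]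

lemma mem_finsetSum {α β : Type*} [DecidableEq β] {F : Finset β} {f : β → Multiset α} {a : α} :
    a ∈ ∑ x ∈ F, f x ↔ ∃ x ∈ F, a ∈ f x := by
  classical
  induction F using Finset.induction_on with
  | empty => simp
  | insert _ _ hx ih => simp [Finset.sum_insert hx, Multiset.mem_add, ih]

lemma bind_finsetSum {β : Type*} (F : Finset β) (f : β → Multiset ℕ) (g : ℕ → Multiset ℕ) :
    (∑ x ∈ F, f x).bind g = ∑ x ∈ F, (f x).bind g := by
  classical
  induction F using Finset.induction_on with
  | empty => simp
  | insert _ _ hx ih => simp [Finset.sum_insert hx, Multiset.add_bind, ih]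

lemma filter_finsetSum {β : Type*} (F : Finset β) (f : β → Multiset ℕ)
    (p : ℕ → Prop) [DecidablePred p] :
    (∑ x ∈ F, f x).filter p = ∑ x ∈ F, (f x).filter p := by
  classical
  induction F using Finset.induction_on with
  | empty => simp
  | insert _ _ hx ih => simp [Finset.sum_insert hx, Multiset.filter_add, ih]

lemma mem_binMS {o m v : ℕ} : v ∈ binMS o m ↔ ∃ i ∈ m.bitIndices, v = 2 ^ (i + 1) * o := by
  unfold binMS
  rw [Multiset.mem_coe, List.mem_map]
  constructor <;> rintro ⟨i, hi, h⟩ <;> exact ⟨i, hi, h.symm⟩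

lemma sum_unglaisher {t : Multiset ℕ} : (unglaisher t).sum = t.sum := by
  unfold unglaisher
  rw [Multiset.sum_add, sum_finsetSum]
  have h1 : ∀ x ∈ (Multiset.filter (fun k => 2 ∣ k) t).toFinset,
      (binMS (x / 2) (t.count x)).sum
        = (Multiset.filter (fun k => 2 ∣ k) t).count x • id x := by
    intro x hx
    have hx2 : 2 ∣ x := (Multiset.of_mem_filter (Multiset.mem_toFinset.mp hx))
    rw [sum_binMS, Nat.mul_div_cancel' hx2, Multiset.count_filter, if_pos hx2]
    simp [mul_comm]
  rw [Finset.sum_congr rfl h1, ← Finset.sum_multiset_map_count, Multiset.map_id]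
  conv_rhs => rw [← Multiset.filter_add_not (fun k => ¬ 2 ∣ k) t]
  rw [Multiset.sum_add]
  congr 1
  · apply congrArg
    apply Multiset.filter_congr
    intro x _
    tauto

lemma mem_glaisher_pos {s : Multiset ℕ} (hs : ∀ k ∈ s, k ≠ 0) :
    ∀ k ∈ glaisher s, k ≠ 0 := by
  intro k hk
  rcases Multiset.mem_add.mp hk with h | h
  · exact hs k (Multiset.mem_of_mem_filter h)
  · obtain ⟨k', hk', hm⟩ := Multiset.mem_bind.mp h
    have hk'0 : k' ≠ 0 := hs k' (Multiset.mem_of_mem_filter hk')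
    simp only [mergeOne] at hm
    rw [Multiset.eq_of_mem_replicate hm]
    have := oddPart_pos hk'0
    omega

lemma glaisher_noFour {s : Multiset ℕ} (hs : ∀ k ∈ s, k ≠ 0) :
    ∀ v ∈ glaisher s, ¬ 4 ∣ v := by
  intro v hv h4
  rcases Multiset.mem_add.mp hv with h | h
  · exact (Multiset.of_mem_filter h) (dvd_trans (by norm_num) h4)
  · obtain ⟨k', hk', hm⟩ := Multiset.mem_bind.mp h
    have hk'0 : k' ≠ 0 := hs k' (Multiset.mem_of_mem_filter hk')
    simp only [mergeOne] at hm
    have hveq : v = 2 * oddPart k' := Multiset.eq_of_mem_replicate hm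
    have : 2 ∣ oddPart k' := by omega
    exact oddPart_not_dvd hk'0 this

lemma count_glaisher_odd {s : Multiset ℕ} {v : ℕ} (hv : ¬ 2 ∣ v) :
    (glaisher s).count v = s.count v := by
  unfold glaisher
  rw [Multiset.count_add, Multiset.count_filter, if_pos hv]
  have : v ∉ (Multiset.filter (fun k => 2 ∣ k) s).bind mergeOne := by
    intro hmem
    obtain ⟨k', _, hm⟩ := Multiset.mem_bind.mp hmem
    simp only [mergeOne] at hm
    have := Multiset.eq_of_mem_replicate hm
    exact hv (by omega)
  rw [Multiset.count_eq_zero_of_notMem this, add_zero]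

lemma count_unglaisher_odd {t : Multiset ℕ} {v : ℕ} (hv : ¬ 2 ∣ v) :
    (unglaisher t).count v = t.count v := by
  unfold unglaisher
  rw [Multiset.count_add, Multiset.count_filter, if_pos hv]
  have : v ∉ ∑ x ∈ (Multiset.filter (fun k => 2 ∣ k) t).toFinset,
      binMS (x / 2) (t.count x) := by
    intro hmem
    obtain ⟨x, _, hm⟩ := mem_finsetSum.mp hmem
    obtain ⟨i, _, rfl⟩ := mem_binMS.mp hm
    exact hv ⟨2 ^ i * (x / 2), by rw [pow_succ]; ring⟩
  rw [Multiset.count_eq_zero_of_notMem this, add_zero]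

end DEFZ

namespace DEFZ
open Multiset

lemma bitIndices_finset_sum (S : Finset ℕ) :
    (∑ i ∈ S, 2 ^ i).bitIndices = S.sort (· ≤ ·) := by
  have h := Nat.bitIndices_twoPowsum (L := S.sort (· ≤ ·)) (Finset.sortedLT_sort S)
  rw [← h]
  congr 1
  have : ((S.sort (· ≤ ·)).map (fun i => 2 ^ i)).sum
      = ((S.sort (· ≤ ·) : Multiset ℕ).map (fun i => 2 ^ i)).sum := by
    rw [Multiset.map_coe, Multiset.sum_coe]
  rw [this, Finset.sort_eq]
  rfl

lemma count_glaisher_two_mul {s : Multiset ℕ} (hs : ∀ k ∈ s, k ≠ 0)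
    (hDE : ∀ k, 2 ∣ k → s.count k ≤ 1) {o : ℕ} (ho : ¬ 2 ∣ o) :
    (glaisher s).count (2 * o) =
      ∑ i ∈ (((s.filter (fun k => 2 ∣ k)).toFinset.filter
          (fun k => oddPart k = o)).image (fun k => ePow k - 1)), 2 ^ i := by
  classical
  set E := s.filter (fun k => 2 ∣ k) with hE
  have hnd : E.Nodup := by
    rw [Multiset.nodup_iff_count_le_one]
    intro a
    rw [Multiset.count_filter]
    split
    · exact hDE a ‹_›
    · exact Nat.zero_le 1
  unfold glaisher
  rw [Multiset.count_add, Multiset.count_filter,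
    if_neg (by simp : ¬ ¬ 2 ∣ 2 * o), Multiset.count_bind, zero_add]
  have hEval : E = E.toFinset.val := by
    rw [Multiset.toFinset_val, Multiset.dedup_eq_self.mpr hnd]
  have hsum : (E.map (fun k => (mergeOne k).count (2 * o))).sum
      = ∑ k ∈ E.toFinset, (mergeOne k).count (2 * o) := by
    rw [Finset.sum]
    rw [← hEval]
  rw [hsum]
  have hterm : ∀ k ∈ E.toFinset,
      (mergeOne k).count (2 * o)
        = if oddPart k = o then 2 ^ (ePow k - 1) else 0 := by
    intro k hk
    have hk2 : 2 ∣ k := Multiset.of_mem_filter (Multiset.mem_toFinset.mp hk)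
    have hk0 : k ≠ 0 := hs k (Multiset.mem_of_mem_filter (Multiset.mem_toFinset.mp hk))
    have hdec : 2 ^ ePow k * oddPart k = k := two_pow_mul_oddPart k
    have hmo : mergeOne k = Multiset.replicate (2 ^ (ePow k - 1)) (2 * oddPart k) := by
      conv_lhs => rw [← hdec]
      exact mergeOne_two_pow_mul (ePow_pos hk2 hk0) (oddPart_not_dvd hk0)
    rw [hmo, Multiset.count_replicate]
    by_cases h : oddPart k = o
    · rw [if_pos (by rw [h]), if_pos h]
    · rw [if_neg (by intro hc; exact h (by omega)), if_neg h]
  have hinj : ∀ x ∈ E.toFinset.filter (fun k => oddPart k = o),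
      ∀ y ∈ E.toFinset.filter (fun k => oddPart k = o),
      ePow x - 1 = ePow y - 1 → x = y := by
    intro k1 h1 k2 h2 heq
    simp only [Finset.mem_filter, Multiset.mem_toFinset] at h1 h2
    have hk10 : k1 ≠ 0 := hs k1 (Multiset.mem_of_mem_filter h1.1)
    have hk20 : k2 ≠ 0 := hs k2 (Multiset.mem_of_mem_filter h2.1)
    have he1 : 1 ≤ ePow k1 := ePow_pos (Multiset.of_mem_filter h1.1) hk10
    have he2 : 1 ≤ ePow k2 := ePow_pos (Multiset.of_mem_filter h2.1) hk20
    have : ePow k1 = ePow k2 := by omega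
    calc k1 = 2 ^ ePow k1 * oddPart k1 := (two_pow_mul_oddPart k1).symm
      _ = 2 ^ ePow k2 * oddPart k2 := by rw [this, h1.2, h2.2]
      _ = k2 := two_pow_mul_oddPart k2
  rw [Finset.sum_congr rfl hterm, Finset.sum_ite, Finset.sum_const_zero, add_zero,
    Finset.sum_image hinj]

lemma mem_bitIndices_count_glaisher {s : Multiset ℕ} (hs : ∀ k ∈ s, k ≠ 0)
    (hDE : ∀ k, 2 ∣ k → s.count k ≤ 1) {o a : ℕ} (ho : ¬ 2 ∣ o) (ha : 1 ≤ a) :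
    (a - 1) ∈ ((glaisher s).count (2 * o)).bitIndices ↔ (2 ^ a * o) ∈ s := by
  classical
  rw [count_glaisher_two_mul hs hDE ho, bitIndices_finset_sum, Finset.mem_sort,
    Finset.mem_image]
  constructor
  · rintro ⟨k, hk, hek⟩
    simp only [Finset.mem_filter, Multiset.mem_toFinset] at hk
    have hk2 : 2 ∣ k := Multiset.of_mem_filter hk.1
    have hks : k ∈ s := Multiset.mem_of_mem_filter hk.1
    have hk0 : k ≠ 0 := hs k hks
    have he : 1 ≤ ePow k := ePow_pos hk2 hk0
    have hea : ePow k = a := by omega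
    have : k = 2 ^ a * o := by
      rw [← hea, ← hk.2]
      exact (two_pow_mul_oddPart k).symm
    rwa [← this]
  · intro hmem
    refine ⟨2 ^ a * o, ?_, ?_⟩
    · simp only [Finset.mem_filter, Multiset.mem_toFinset]
      refine ⟨Multiset.mem_filter_of_mem hmem ?_, oddPart_two_pow_mul ho⟩
      exact ⟨2 ^ (a - 1) * o, two_pow_sub_one_mul ha ▸ by ring⟩
    · rw [ePow_two_pow_mul ho]

end DEFZ

namespace DEFZ
open Multiset

lemma two_pow_mul_inj {o : ℕ} (ho0 : o ≠ 0) :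
    Function.Injective (fun i : ℕ => 2 ^ (i + 1) * o) := by
  intro i j hij
  simp only at hij
  have := Nat.eq_of_mul_eq_mul_right (Nat.pos_of_ne_zero ho0) hij
  have := Nat.pow_right_injective (le_refl 2) this
  omega

lemma two_pow_mul_eq_iff {a b o p : ℕ} (ha : 1 ≤ a) (hb : 1 ≤ b)
    (ho : ¬ 2 ∣ o) (hp : ¬ 2 ∣ p) : 2 ^ a * o = 2 ^ b * p ↔ a = b ∧ o = p := by
  constructor
  · intro h
    have h1 : ePow (2 ^ a * o) = ePow (2 ^ b * p) := by rw [h]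
    have h2 : oddPart (2 ^ a * o) = oddPart (2 ^ b * p) := by rw [h]
    rw [ePow_two_pow_mul ho, ePow_two_pow_mul hp] at h1
    rw [oddPart_two_pow_mul ho, oddPart_two_pow_mul hp] at h2
    exact ⟨h1, h2⟩
  · rintro ⟨rfl, rfl⟩; rfl

lemma count_binMS {o m v : ℕ} (ho : ¬ 2 ∣ o) {a p : ℕ} (ha : 1 ≤ a) (hp : ¬ 2 ∣ p)
    (hv : v = 2 ^ a * p) :
    (binMS o m).count v = if p = o ∧ (a - 1) ∈ m.bitIndices then 1 else 0 := by
  have ho0 : o ≠ 0 := fun h => ho (h ▸ ⟨0, rfl⟩)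
  unfold binMS
  rw [Multiset.coe_count]
  by_cases hpo : p = o
  · subst hpo
    have hv' : v = (fun i : ℕ => 2 ^ (i + 1) * p) (a - 1) := by
      simp only [hv]
      have h' : a - 1 + 1 = a := by omega
      rw [h']
    rw [hv', List.count_map_of_injective _ _ (two_pow_mul_inj ho0)]
    have hnd : m.bitIndices.Nodup := Nat.bitIndices_sorted.nodup
    by_cases hmem : (a - 1) ∈ m.bitIndices
    · rw [List.count_eq_one_of_mem hnd hmem, if_pos ⟨rfl, hmem⟩]
    · rw [List.count_eq_zero_of_not_mem hmem, if_neg (by tauto)]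
  · rw [if_neg (by tauto), List.count_eq_zero_of_not_mem]
    intro hmem
    obtain ⟨i, _, hi⟩ := List.mem_map.mp hmem
    rw [hv] at hi
    exact hpo ((two_pow_mul_eq_iff ha (by omega) hp ho).mp hi.symm).2

lemma count_unglaisher {t : Multiset ℕ} (ht4 : ∀ k ∈ t, ¬ 4 ∣ k) (ht0 : ∀ k ∈ t, k ≠ 0)
    {a o : ℕ} (ha : 1 ≤ a) (ho : ¬ 2 ∣ o) :
    (unglaisher t).count (2 ^ a * o) =
      if (a - 1) ∈ (t.count (2 * o)).bitIndices then 1 else 0 := by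
  classical
  have ho0 : o ≠ 0 := fun h => ho (h ▸ ⟨0, rfl⟩)
  set F := (Multiset.filter (fun k => 2 ∣ k) t).toFinset with hF
  have hx_fact : ∀ x ∈ F, x = 2 * (x / 2) ∧ ¬ 2 ∣ (x / 2) := by
    intro x hx
    rw [hF, Multiset.mem_toFinset] at hx
    have hx2 : 2 ∣ x := Multiset.of_mem_filter hx
    have hxt : x ∈ t := Multiset.mem_of_mem_filter hx
    have hx4 : ¬ 4 ∣ x := ht4 x hxt
    exact ⟨(Nat.mul_div_cancel' hx2).symm, by omega⟩
  unfold unglaisher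
  rw [Multiset.count_add, Multiset.count_filter,
    if_neg (not_not_intro ⟨2 ^ (a - 1) * o, by rw [two_pow_sub_one_mul ha]; ring⟩), zero_add,
    Multiset.count_sum']
  have hterm : ∀ x ∈ F, (binMS (x / 2) (t.count x)).count (2 ^ a * o)
      = if x = 2 * o then (if (a - 1) ∈ (t.count (2 * o)).bitIndices then 1 else 0)
        else 0 := by
    intro x hx
    obtain ⟨hxeq, hxodd⟩ := hx_fact x hx
    rw [count_binMS hxodd ha ho rfl]
    by_cases hxo : x = 2 * o
    · have : o = x / 2 := by omega
      rw [if_pos hxo, ← this, if_congr (by tauto) rfl rfl, hxo]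
    · rw [if_neg hxo, if_neg (by intro ⟨h1, _⟩; exact hxo (by omega))]
  rw [Finset.sum_congr rfl hterm, Finset.sum_ite_eq' F (2 * o)]
  by_cases hmem : 2 * o ∈ F
  · rw [if_pos hmem]
  · rw [if_neg hmem]
    have : t.count (2 * o) = 0 := by
      rw [Multiset.count_eq_zero]
      intro hc
      exact hmem (by
        rw [hF, Multiset.mem_toFinset]
        exact Multiset.mem_filter_of_mem hc ⟨o, rfl⟩)
    rw [this]
    simp

end DEFZ

namespace DEFZ
open Multiset

lemma mem_unglaisher_pos {t : Multiset ℕ} (ht : ∀ k ∈ t, k ≠ 0) :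
    ∀ k ∈ unglaisher t, k ≠ 0 := by
  intro k hk
  rcases Multiset.mem_add.mp hk with h | h
  · exact ht k (Multiset.mem_of_mem_filter h)
  · obtain ⟨x, hx, hm⟩ := mem_finsetSum.mp h
    obtain ⟨i, _, rfl⟩ := mem_binMS.mp hm
    rw [Multiset.mem_toFinset] at hx
    have hx2 : 2 ∣ x := Multiset.of_mem_filter hx
    have hx0 : x ≠ 0 := ht x (Multiset.mem_of_mem_filter hx)
    have : x / 2 ≠ 0 := by omega
    positivity

lemma unglaisher_DE {t : Multiset ℕ} (ht4 : ∀ k ∈ t, ¬ 4 ∣ k) (ht0 : ∀ k ∈ t, k ≠ 0) :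
    ∀ v, 2 ∣ v → (unglaisher t).count v ≤ 1 := by
  intro v hv2
  by_cases hv0 : v = 0
  · subst hv0
    rw [Multiset.count_eq_zero_of_notMem (fun h => mem_unglaisher_pos ht0 0 h rfl)]
    omega
  · obtain ⟨a, o, ha, ho, _, rfl⟩ := even_decomp hv2 hv0
    rw [count_unglaisher ht4 ht0 ha ho]
    split <;> omega

lemma bind_coe_map_mergeOne {o : ℕ} (ho : ¬ 2 ∣ o) (L : List ℕ) :
    ((L.map (fun i => 2 ^ (i + 1) * o) : List ℕ) : Multiset ℕ).bind mergeOne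
      = Multiset.replicate ((L.map (fun i => 2 ^ i)).sum) (2 * o) := by
  induction L with
  | nil => simp
  | cons i L ih =>
    simp only [List.map_cons, List.sum_cons, ← Multiset.cons_coe, Multiset.cons_bind, ih]
    rw [mergeOne_two_pow_mul (by omega : 1 ≤ i + 1) ho, Multiset.replicate_add]
    norm_num

lemma bind_binMS {o : ℕ} (ho : ¬ 2 ∣ o) (m : ℕ) :
    (binMS o m).bind mergeOne = Multiset.replicate m (2 * o) := by
  unfold binMS
  rw [bind_coe_map_mergeOne ho, Nat.twoPowSum_bitIndices]

lemma glaisher_unglaisher {t : Multiset ℕ} (ht4 : ∀ k ∈ t, ¬ 4 ∣ k) (ht0 : ∀ k ∈ t, k ≠ 0) :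
    glaisher (unglaisher t) = t := by
  classical
  set E := Multiset.filter (fun k => 2 ∣ k) t with hE
  set B := ∑ x ∈ E.toFinset, binMS (x / 2) (t.count x) with hB
  have hBeven : ∀ v ∈ B, 2 ∣ v := by
    intro v hv
    obtain ⟨x, _, hm⟩ := mem_finsetSum.mp hv
    obtain ⟨i, _, rfl⟩ := mem_binMS.mp hm
    exact ⟨2 ^ i * (x / 2), by rw [pow_succ]; ring⟩
  have hx_fact : ∀ x ∈ E.toFinset, 2 ∣ x ∧ x ∈ t ∧ x ≠ 0 ∧ ¬ 2 ∣ (x / 2) := by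
    intro x hx
    rw [Multiset.mem_toFinset, hE] at hx
    have hx2 : 2 ∣ x := Multiset.of_mem_filter hx
    have hxt : x ∈ t := Multiset.mem_of_mem_filter hx
    have hx0 : x ≠ 0 := ht0 x hxt
    have hx4 : ¬ 4 ∣ x := ht4 x hxt
    exact ⟨hx2, hxt, hx0, by omega⟩
  have hfil : unglaisher t = Multiset.filter (fun k => ¬ 2 ∣ k) t + B := rfl
  have h1 : Multiset.filter (fun k => ¬ 2 ∣ k) (unglaisher t)
      = Multiset.filter (fun k => ¬ 2 ∣ k) t := by
    rw [hfil, Multiset.filter_add]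
    have e1 : Multiset.filter (fun k => ¬ 2 ∣ k) (Multiset.filter (fun k => ¬ 2 ∣ k) t)
        = Multiset.filter (fun k => ¬ 2 ∣ k) t :=
      Multiset.filter_eq_self.mpr (fun a ha => (Multiset.mem_filter.mp ha).2)
    have e2 : Multiset.filter (fun k => ¬ 2 ∣ k) B = 0 :=
      Multiset.filter_eq_nil.mpr (fun a ha => not_not_intro (hBeven a ha))
    rw [e1, e2, add_zero]
  have h2 : Multiset.filter (fun k => 2 ∣ k) (unglaisher t) = B := by
    rw [hfil, Multiset.filter_add]
    have e1 : Multiset.filter (fun k => 2 ∣ k) (Multiset.filter (fun k => ¬ 2 ∣ k) t) = 0 :=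
      Multiset.filter_eq_nil.mpr (fun a ha => (Multiset.mem_filter.mp ha).2)
    have e2 : Multiset.filter (fun k => 2 ∣ k) B = B :=
      Multiset.filter_eq_self.mpr hBeven
    rw [e1, e2, zero_add]
  have h3 : B.bind mergeOne = E := by
    rw [hB, bind_finsetSum]
    have hterm : ∀ x ∈ E.toFinset,
        (binMS (x / 2) (t.count x)).bind mergeOne = E.count x • ({x} : Multiset ℕ) := by
      intro x hx
      obtain ⟨hx2, hxt, hx0, hxodd⟩ := hx_fact x hx
      rw [bind_binMS hxodd, Multiset.nsmul_singleton, Nat.mul_div_cancel' hx2, hE,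
        Multiset.count_filter, if_pos hx2]
    rw [Finset.sum_congr rfl hterm, Multiset.toFinset_sum_count_nsmul_eq]
  unfold glaisher
  rw [h1, h2, h3, add_comm]
  exact Multiset.filter_add_not (fun k => 2 ∣ k) t

end DEFZ

namespace DEFZ
open Multiset

lemma unglaisher_glaisher {s : Multiset ℕ} (hs : ∀ k ∈ s, k ≠ 0)
    (hDE : ∀ k, 2 ∣ k → s.count k ≤ 1) : unglaisher (glaisher s) = s := by
  have ht0 : ∀ k ∈ glaisher s, k ≠ 0 := mem_glaisher_pos hs
  have ht4 : ∀ k ∈ glaisher s, ¬ 4 ∣ k := glaisher_noFour hs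
  ext v
  by_cases h2 : 2 ∣ v
  · by_cases h0 : v = 0
    · subst h0
      rw [Multiset.count_eq_zero_of_notMem (fun h => mem_unglaisher_pos ht0 0 h rfl),
        Multiset.count_eq_zero_of_notMem (fun h => hs 0 h rfl)]
    · obtain ⟨a, o, ha, ho, ho0, rfl⟩ := even_decomp h2 h0
      rw [count_unglaisher ht4 ht0 ha ho]
      rw [if_congr (mem_bitIndices_count_glaisher hs hDE ho ha) rfl rfl]
      by_cases hmem : 2 ^ a * o ∈ s
      · rw [if_pos hmem]
        have hle := hDE _ h2
        have hge := Multiset.one_le_count_iff_mem.mpr hmem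
        omega
      · rw [if_neg hmem, Multiset.count_eq_zero_of_notMem hmem]
  · rw [count_unglaisher_odd h2, count_glaisher_odd h2]

/-! ### the top-level maps -/

/-- forward map on multisets, given the repeated even value `j` -/
def fwdMS (s : Multiset ℕ) (j : ℕ) : Multiset ℕ :=
  glaisher (s.filter (· ≠ j) + Multiset.replicate (s.count j % 2) j)
    + Multiset.replicate (s.count j / 2) (2 * j)

/-- backward map on multisets, given the (unique) value `j'` divisible by 4 -/
def bwdMS (t : Multiset ℕ) (j' : ℕ) : Multiset ℕ :=
  unglaisher (t.filter (· ≠ j')) + Multiset.replicate (2 * t.count j') (j' / 2)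

end DEFZ

namespace DEFZ
open Multiset

lemma split_at (s : Multiset ℕ) (j : ℕ) :
    s = s.filter (· ≠ j) + Multiset.replicate (s.count j) j := by
  conv_lhs => rw [← Multiset.filter_add_not (fun k => k ≠ j) s]
  congr 1
  rw [Multiset.filter_congr (fun x _ => by tauto : ∀ x ∈ s, (¬ x ≠ j) ↔ (x = j)),
    Multiset.filter_eq']

section Fwd

variable {s : Multiset ℕ} {j : ℕ}

/-- the auxiliary "reduced" multiset -/
private def uMS (s : Multiset ℕ) (j : ℕ) : Multiset ℕ :=
  s.filter (· ≠ j) + Multiset.replicate (s.count j % 2) j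

lemma fwdMS_eq : fwdMS s j = glaisher (uMS s j) + Multiset.replicate (s.count j / 2) (2 * j) :=
  rfl

lemma j_ne_zero (h0 : ∀ k ∈ s, k ≠ 0) (hc : 2 ≤ s.count j) : j ≠ 0 :=
  h0 j (Multiset.count_pos.mp (by omega))

lemma uMS_pos (h0 : ∀ k ∈ s, k ≠ 0) (hc : 2 ≤ s.count j) : ∀ k ∈ uMS s j, k ≠ 0 := by
  intro k hk
  rcases Multiset.mem_add.mp hk with h | h
  · exact h0 k (Multiset.mem_of_mem_filter h)
  · rw [(Multiset.eq_of_mem_replicate h : k = j)]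
    exact j_ne_zero h0 hc

lemma uMS_DE (hother : ∀ i, 2 ∣ i → i ≠ j → s.count i ≤ 1) :
    ∀ k, 2 ∣ k → (uMS s j).count k ≤ 1 := by
  intro k hk
  unfold uMS
  rw [Multiset.count_add, Multiset.count_filter, Multiset.count_replicate]
  by_cases h : k = j
  · subst h
    simp only [ne_eq, not_true_eq_false, if_false, if_true, reduceIte]
    omega
  · rw [if_pos (by simpa using h), if_neg (by omega)]
    have := hother k hk h
    omega

lemma fwdMS_sum (h0 : ∀ k ∈ s, k ≠ 0) (hc : 2 ≤ s.count j) :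
    (fwdMS s j).sum = s.sum := by
  rw [fwdMS_eq, Multiset.sum_add, sum_glaisher (uMS_pos h0 hc), Multiset.sum_replicate,
    smul_eq_mul]
  unfold uMS
  rw [Multiset.sum_add, Multiset.sum_replicate, smul_eq_mul]
  conv_rhs => rw [split_at s j, Multiset.sum_add, Multiset.sum_replicate, smul_eq_mul]
  have h2 : s.count j % 2 * j + s.count j / 2 * (2 * j) = s.count j * j := by
    have := Nat.mod_add_div (s.count j) 2
    calc s.count j % 2 * j + s.count j / 2 * (2 * j)
        = (s.count j % 2 + 2 * (s.count j / 2)) * j := by ring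
      _ = s.count j * j := by rw [this]
  omega

lemma fwdMS_pos (h0 : ∀ k ∈ s, k ≠ 0) (hc : 2 ≤ s.count j) :
    ∀ k ∈ fwdMS s j, k ≠ 0 := by
  intro k hk
  rcases Multiset.mem_add.mp hk with h | h
  · exact mem_glaisher_pos (uMS_pos h0 hc) k h
  · rw [(Multiset.eq_of_mem_replicate h : k = 2 * j)]
    have := j_ne_zero h0 hc
    omega

lemma fwdMS_count_two_j (h0 : ∀ k ∈ s, k ≠ 0) (hj : 2 ∣ j) (hc : 2 ≤ s.count j) :
    (fwdMS s j).count (2 * j) = s.count j / 2 := by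
  rw [fwdMS_eq, Multiset.count_add, Multiset.count_replicate, if_pos rfl,
    Multiset.count_eq_zero_of_notMem, zero_add]
  intro hmem
  exact glaisher_noFour (uMS_pos h0 hc) _ hmem (by omega)

lemma fwdMS_prop (h0 : ∀ k ∈ s, k ≠ 0) (hj : 2 ∣ j) (hc : 2 ≤ s.count j) :
    4 ∣ 2 * j ∧ (2 * j) ∈ fwdMS s j ∧ ∀ i ∈ fwdMS s j, 4 ∣ i → i = 2 * j := by
  refine ⟨by omega, ?_, ?_⟩
  · rw [← Multiset.count_pos, fwdMS_count_two_j h0 hj hc]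
    omega
  · intro i hi h4
    rcases Multiset.mem_add.mp hi with h | h
    · exact absurd h4 (glaisher_noFour (uMS_pos h0 hc) _ h)
    · exact Multiset.eq_of_mem_replicate h

lemma fwdMS_bwdMS (h0 : ∀ k ∈ s, k ≠ 0) (hj : 2 ∣ j) (hc : 2 ≤ s.count j)
    (hother : ∀ i, 2 ∣ i → i ≠ j → s.count i ≤ 1) :
    bwdMS (fwdMS s j) (2 * j) = s := by
  have hj0 : j ≠ 0 := j_ne_zero h0 hc
  have hfil : (fwdMS s j).filter (· ≠ 2 * j) = glaisher (uMS s j) := by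
    rw [fwdMS_eq, Multiset.filter_add]
    have e1 : (glaisher (uMS s j)).filter (· ≠ 2 * j) = glaisher (uMS s j) :=
      Multiset.filter_eq_self.mpr (fun a ha => by
        intro hc'
        exact glaisher_noFour (uMS_pos h0 hc) a ha (by omega))
    have e2 : (Multiset.replicate (s.count j / 2) (2 * j)).filter (· ≠ 2 * j) = 0 :=
      Multiset.filter_eq_nil.mpr (fun a ha => by
        simp [Multiset.eq_of_mem_replicate ha])
    rw [e1, e2, add_zero]
  unfold bwdMS
  rw [hfil, fwdMS_count_two_j h0 hj hc,
    (by omega : 2 * j / 2 = j),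
    unglaisher_glaisher (uMS_pos h0 hc) (uMS_DE hother)]
  unfold uMS
  rw [add_assoc, ← Multiset.replicate_add]
  rw [(by omega : s.count j % 2 + 2 * (s.count j / 2) = s.count j)]
  exact (split_at s j).symm

end Fwd

end DEFZ

namespace DEFZ
open Multiset

section Bwd

variable {t : Multiset ℕ} {j' : ℕ}

lemma t0_pos (ht0 : ∀ k ∈ t, k ≠ 0) : ∀ k ∈ t.filter (· ≠ j'), k ≠ 0 :=
  fun k hk => ht0 k (Multiset.mem_of_mem_filter hk)

lemma t0_noFour (huniq : ∀ i ∈ t, 4 ∣ i → i = j') :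
    ∀ k ∈ t.filter (· ≠ j'), ¬ 4 ∣ k := by
  intro k hk h4
  have hm := Multiset.mem_filter.mp hk
  exact hm.2 (huniq k hm.1 h4)

lemma bwdMS_sum (hj4 : 4 ∣ j') : (bwdMS t j').sum = t.sum := by
  unfold bwdMS
  rw [Multiset.sum_add, sum_unglaisher, Multiset.sum_replicate, smul_eq_mul]
  conv_rhs => rw [split_at t j', Multiset.sum_add, Multiset.sum_replicate, smul_eq_mul]
  have : 2 * t.count j' * (j' / 2) = t.count j' * j' := by
    have h2 : 2 ∣ j' := dvd_trans (by norm_num) hj4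
    have := Nat.mul_div_cancel' h2
    calc 2 * t.count j' * (j' / 2) = t.count j' * (2 * (j' / 2)) := by ring
      _ = t.count j' * j' := by rw [this]
  omega

lemma bwdMS_pos (ht0 : ∀ k ∈ t, k ≠ 0) (hj4 : 4 ∣ j') (hjmem : j' ∈ t) :
    ∀ k ∈ bwdMS t j', k ≠ 0 := by
  intro k hk
  rcases Multiset.mem_add.mp hk with h | h
  · exact mem_unglaisher_pos (t0_pos ht0) k h
  · rw [Multiset.eq_of_mem_replicate h]
    have hj0 : j' ≠ 0 := ht0 j' hjmem
    omega

lemma bwdMS_count_j (ht0 : ∀ k ∈ t, k ≠ 0) (hj4 : 4 ∣ j')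
    (hjmem : j' ∈ t) (huniq : ∀ i ∈ t, 4 ∣ i → i = j') :
    (bwdMS t j').count (j' / 2)
      = (unglaisher (t.filter (· ≠ j'))).count (j' / 2) + 2 * t.count j' := by
  unfold bwdMS
  rw [Multiset.count_add, Multiset.count_replicate, if_pos rfl]

lemma j_half_even (ht0 : ∀ k ∈ t, k ≠ 0) (hj4 : 4 ∣ j') (hjmem : j' ∈ t) :
    2 ∣ j' / 2 ∧ j' / 2 ≠ 0 := by
  have hj0 : j' ≠ 0 := ht0 j' hjmem
  obtain ⟨m, rfl⟩ := hj4
  constructor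
  · have : 4 * m / 2 = 2 * m := by omega
    rw [this]; exact ⟨m, rfl⟩
  · omega

lemma bwdMS_prop (ht0 : ∀ k ∈ t, k ≠ 0) (hj4 : 4 ∣ j')
    (hjmem : j' ∈ t) (huniq : ∀ i ∈ t, 4 ∣ i → i = j') :
    2 ∣ (j' / 2) ∧ 2 ≤ (bwdMS t j').count (j' / 2) ∧
      ∀ i, 2 ∣ i → i ≠ j' / 2 → (bwdMS t j').count i ≤ 1 := by
  obtain ⟨hhalf, _⟩ := j_half_even ht0 hj4 hjmem
  refine ⟨hhalf, ?_, ?_⟩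
  · rw [bwdMS_count_j ht0 hj4 hjmem huniq]
    have : 1 ≤ t.count j' := Multiset.one_le_count_iff_mem.mpr hjmem
    omega
  · intro i hi hne
    unfold bwdMS
    rw [Multiset.count_add, Multiset.count_replicate, if_neg (by omega), add_zero]
    exact unglaisher_DE (t0_noFour huniq) (t0_pos ht0) i hi

lemma bwdMS_fwdMS (ht0 : ∀ k ∈ t, k ≠ 0) (hj4 : 4 ∣ j')
    (hjmem : j' ∈ t) (huniq : ∀ i ∈ t, 4 ∣ i → i = j') :
    fwdMS (bwdMS t j') (j' / 2) = t := by
  obtain ⟨hhalf, hj0⟩ := j_half_even ht0 hj4 hjmem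
  have h2j : 2 * (j' / 2) = j' := Nat.mul_div_cancel' (dvd_trans (by norm_num) hj4)
  set t₀ := t.filter (· ≠ j') with ht₀
  set U := unglaisher t₀ with hU
  have hDEu : ∀ v, 2 ∣ v → U.count v ≤ 1 := unglaisher_DE (t0_noFour huniq) (t0_pos ht0)
  have hε : U.count (j' / 2) ≤ 1 := hDEu _ hhalf
  have hcount : (bwdMS t j').count (j' / 2) = U.count (j' / 2) + 2 * t.count j' :=
    bwdMS_count_j ht0 hj4 hjmem huniq
  have hmod : (bwdMS t j').count (j' / 2) % 2 = U.count (j' / 2) := by omega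
  have hdiv : (bwdMS t j').count (j' / 2) / 2 = t.count j' := by omega
  have hufil : (bwdMS t j').filter (· ≠ j' / 2) = U.filter (· ≠ j' / 2) := by
    unfold bwdMS
    have e2 : (Multiset.replicate (2 * t.count j') (j' / 2)).filter (· ≠ j' / 2) = 0 :=
      Multiset.filter_eq_nil.mpr (fun a ha => by simp [Multiset.eq_of_mem_replicate ha])
    rw [Multiset.filter_add, e2, add_zero]
  have huu : uMS (bwdMS t j') (j' / 2) = U := by
    unfold uMS
    rw [hufil, hmod]
    exact (split_at U (j' / 2)).symm
  rw [fwdMS_eq, huu, hdiv, hU, glaisher_unglaisher (t0_noFour huniq) (t0_pos ht0), h2j]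
  exact (split_at t j').symm

end Bwd

end DEFZ

namespace DEFZ
open Multiset

lemma even_iff_two_dvd' {n : ℕ} : Even n ↔ 2 ∣ n :=
  ⟨fun ⟨r, hr⟩ => ⟨r, by omega⟩, fun ⟨r, hr⟩ => ⟨r, by omega⟩⟩

lemma bwdMS_prop' {t : Multiset ℕ} {j' : ℕ} (ht0 : ∀ k ∈ t, k ≠ 0) (hj4 : 4 ∣ j')
    (hjmem : j' ∈ t) (huniq : ∀ i ∈ t, 4 ∣ i → i = j') :
    Even (j' / 2) ∧ 2 ≤ (bwdMS t j').count (j' / 2) ∧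
      ∀ i, Even i → i ≠ j' / 2 → (bwdMS t j').count i ≤ 1 := by
  obtain ⟨h1, h2, h3⟩ := bwdMS_prop ht0 hj4 hjmem huniq
  exact ⟨even_iff_two_dvd'.mpr h1, h2,
    fun i hi hne => h3 i (even_iff_two_dvd'.mp hi) hne⟩

lemma dwit_unique {s : Multiset ℕ} {j₁ j₂ : ℕ}
    (h₁ : Even j₁ ∧ 2 ≤ s.count j₁ ∧ ∀ i, Even i → i ≠ j₁ → s.count i ≤ 1)
    (h₂ : Even j₂ ∧ 2 ≤ s.count j₂ ∧ ∀ i, Even i → i ≠ j₂ → s.count i ≤ 1) :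
    j₁ = j₂ := by
  by_contra hne
  have := h₂.2.2 j₁ h₁.1 hne
  have := h₁.2.1
  omega

lemma fwit_unique {t : Multiset ℕ} {j₁ j₂ : ℕ}
    (h₁ : 4 ∣ j₁ ∧ j₁ ∈ t ∧ ∀ i ∈ t, 4 ∣ i → i = j₁)
    (h₂ : 4 ∣ j₂ ∧ j₂ ∈ t ∧ ∀ i ∈ t, 4 ∣ i → i = j₂) : j₁ = j₂ :=
  (h₂.2.2 j₁ h₁.2.1 h₁.1)

lemma parts_ne_zero {n : ℕ} (lam : n.Partition) : ∀ k ∈ lam.parts, k ≠ 0 :=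
  fun _ hk => (lam.parts_pos hk).ne'

/-- the forward map on partitions -/
noncomputable def fwdP {n : ℕ} (lam : n.Partition)
    (h : ∃ j, Even j ∧ 2 ≤ lam.parts.count j ∧
      ∀ i, Even i → i ≠ j → lam.parts.count i ≤ 1) : n.Partition where
  parts := fwdMS lam.parts h.choose
  parts_pos := by
    intro i hi
    exact Nat.pos_of_ne_zero (fwdMS_pos (parts_ne_zero lam) h.choose_spec.2.1 i hi)
  parts_sum := by
    rw [fwdMS_sum (parts_ne_zero lam) h.choose_spec.2.1, lam.parts_sum]

lemma fwdP_prop {n : ℕ} (lam : n.Partition)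
    (h : ∃ j, Even j ∧ 2 ≤ lam.parts.count j ∧
      ∀ i, Even i → i ≠ j → lam.parts.count i ≤ 1) :
    ∃ j', 4 ∣ j' ∧ j' ∈ (fwdP lam h).parts ∧
      ∀ i ∈ (fwdP lam h).parts, 4 ∣ i → i = j' :=
  ⟨2 * h.choose, fwdMS_prop (parts_ne_zero lam)
    (even_iff_two_dvd'.mp h.choose_spec.1) h.choose_spec.2.1⟩

/-- the backward map on partitions -/
noncomputable def bwdP {n : ℕ} (lam : n.Partition)
    (h : ∃ j', 4 ∣ j' ∧ j' ∈ lam.parts ∧ ∀ i ∈ lam.parts, 4 ∣ i → i = j') :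
    n.Partition where
  parts := bwdMS lam.parts h.choose
  parts_pos := by
    intro i hi
    exact Nat.pos_of_ne_zero (bwdMS_pos (parts_ne_zero lam) h.choose_spec.1
      h.choose_spec.2.1 i hi)
  parts_sum := by
    rw [bwdMS_sum h.choose_spec.1, lam.parts_sum]

lemma bwdP_prop {n : ℕ} (lam : n.Partition)
    (h : ∃ j', 4 ∣ j' ∧ j' ∈ lam.parts ∧ ∀ i ∈ lam.parts, 4 ∣ i → i = j') :
    ∃ j, Even j ∧ 2 ≤ (bwdP lam h).parts.count j ∧
      ∀ i, Even i → i ≠ j → (bwdP lam h).parts.count i ≤ 1 :=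
  ⟨h.choose / 2, bwdMS_prop' (parts_ne_zero lam) h.choose_spec.1
    h.choose_spec.2.1 h.choose_spec.2.2⟩

/-- the bijection -/
noncomputable def theEquiv (n : ℕ) :
    {lam : n.Partition // ∃ j, Even j ∧ 2 ≤ lam.parts.count j ∧
      ∀ i, Even i → i ≠ j → lam.parts.count i ≤ 1} ≃
    {lam : n.Partition // ∃ j, 4 ∣ j ∧ j ∈ lam.parts ∧
      ∀ i ∈ lam.parts, 4 ∣ i → i = j} where
  toFun x := ⟨fwdP x.1 x.2, fwdP_prop x.1 x.2⟩
  invFun y := ⟨bwdP y.1 y.2, bwdP_prop y.1 y.2⟩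
  left_inv := by
    rintro ⟨lam, h⟩
    apply Subtype.ext
    apply Nat.Partition.ext
    show bwdMS (fwdMS lam.parts h.choose) (fwdP_prop lam h).choose = lam.parts
    have h0 := parts_ne_zero lam
    have hje := h.choose_spec.1
    have hc := h.choose_spec.2.1
    have hother := h.choose_spec.2.2
    have hj2 := even_iff_two_dvd'.mp hje
    have hother' : ∀ i, 2 ∣ i → i ≠ h.choose → lam.parts.count i ≤ 1 :=
      fun i hi hne => hother i (even_iff_two_dvd'.mpr hi) hne
    have hw : (fwdP_prop lam h).choose = 2 * h.choose :=
      fwit_unique (fwdP_prop lam h).choose_spec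
        (fwdMS_prop h0 hj2 hc)
    rw [hw]
    exact fwdMS_bwdMS h0 hj2 hc hother'
  right_inv := by
    rintro ⟨lam, h⟩
    apply Subtype.ext
    apply Nat.Partition.ext
    show fwdMS (bwdMS lam.parts h.choose) (bwdP_prop lam h).choose = lam.parts
    have h0 := parts_ne_zero lam
    have hj4 := h.choose_spec.1
    have hjmem := h.choose_spec.2.1
    have huniq := h.choose_spec.2.2
    have hw : (bwdP_prop lam h).choose = h.choose / 2 :=
      dwit_unique (bwdP_prop lam h).choose_spec
        (bwdMS_prop' h0 hj4 hjmem huniq)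
    rw [hw]
    exact bwdMS_fwdMS h0 hj4 hjmem huniq

end DEFZ

theorem dE_eq_fZero (n : ℕ) (hn : 1 ≤ n) : dE n = fZero n := by
  unfold dE fZero
  exact Nat.card_congr (DEFZ.theEquiv n)
end

section
/- For all n ≥ 1, the number of partitions of n in which exactly one odd part value is repeated (all other odd part values are distinct) and even parts are unrestricted equals the number of partitions of n in which the set of parts congruent to 2 modulo 4 is a singleton. -/
open Multiset

namespace DOFT


/-- split each part ≡ 2 mod 4 into two halves -/
def splitM (s : Multiset ℕ) : Multiset ℕ :=
  s.bind (fun i => if i % 4 = 2 then {i / 2, i / 2} else {i})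

lemma splitM_cons (i : ℕ) (s : Multiset ℕ) :
    splitM (i ::ₘ s) = (if i % 4 = 2 then {i / 2, i / 2} else {i}) + splitM s :=
  Multiset.cons_bind _ _ _

lemma count_splitM (a : ℕ) (s : Multiset ℕ) :
    (splitM s).count a =
      if a % 2 = 1 then s.count a + 2 * s.count (2 * a)
      else if a % 4 = 2 then 0 else s.count a := by
  induction s using Multiset.induction with
  | empty => simp [splitM]
  | cons i s ih =>
      rw [splitM_cons, count_add, ih, count_cons, count_cons]
      by_cases h : i % 4 = 2
      · simp only [if_pos h, Multiset.insert_eq_cons, count_cons,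
          count_singleton, count_zero]
        split_ifs <;> omega
      · simp only [if_neg h, Multiset.insert_eq_cons, count_cons,
          count_singleton, count_zero]
        split_ifs <;> omega

lemma sum_splitM (s : Multiset ℕ) : (splitM s).sum = s.sum := by
  induction s using Multiset.induction with
  | empty => simp [splitM]
  | cons i s ih =>
      rw [splitM_cons, Multiset.sum_add, ih, Multiset.sum_cons]
      split_ifs with h
      · simp only [Multiset.insert_eq_cons, Multiset.sum_cons, Multiset.sum_singleton]
        omega
      · simp




/-- merge pairs of equal odd parts -/
def mergeOne (w c : ℕ) : Multiset ℕ :=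
  if w % 2 = 1 then replicate (c % 2) w + replicate (c / 2) (2 * w)
  else replicate c w

def mergeM (s : Multiset ℕ) : Multiset ℕ :=
  ∑ w ∈ s.toFinset, mergeOne w (s.count w)

lemma count_mergeM_odd (a : ℕ) (ha : a % 2 = 1) (s : Multiset ℕ) :
    (mergeM s).count a = s.count a % 2 := by
  unfold mergeM
  rw [Multiset.count_sum']
  have h1 : ∀ w ∈ s.toFinset, (mergeOne w (s.count w)).count a
      = if w = a then s.count w % 2 else 0 := by
    intro w _
    unfold mergeOne
    split_ifs with h h2 <;>
      simp only [count_add, count_replicate] <;> split_ifs <;> omega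
  rw [Finset.sum_congr rfl h1, Finset.sum_ite_eq' s.toFinset a (fun w => s.count w % 2)]
  split_ifs with h
  · rfl
  · rw [Multiset.count_eq_zero.2 (fun hm => h (Multiset.mem_toFinset.2 hm))]
    omega

lemma count_mergeM_two (a : ℕ) (ha : a % 4 = 2) (s : Multiset ℕ) (h0 : s.count a = 0) :
    (mergeM s).count a = s.count (a / 2) / 2 := by
  unfold mergeM
  rw [Multiset.count_sum']
  have h1 : ∀ w ∈ s.toFinset, (mergeOne w (s.count w)).count a
      = if w = a / 2 then s.count w / 2 else 0 := by
    intro w hw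
    have hwa : w ≠ a := by
      intro he; subst he
      exact absurd h0 (by simpa [Multiset.count_eq_zero] using Multiset.mem_toFinset.1 hw)
    unfold mergeOne
    split_ifs with h h2 <;>
      simp only [count_add, count_replicate] <;> split_ifs <;> omega
  rw [Finset.sum_congr rfl h1,
    Finset.sum_ite_eq' s.toFinset (a / 2) (fun w => s.count w / 2)]
  split_ifs with h
  · rfl
  · rw [Multiset.count_eq_zero.2 (fun hm => h (Multiset.mem_toFinset.2 hm))]
    omega

lemma count_mergeM_zero (a : ℕ) (ha : a % 4 = 0) (s : Multiset ℕ) :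
    (mergeM s).count a = s.count a := by
  unfold mergeM
  rw [Multiset.count_sum']
  have h1 : ∀ w ∈ s.toFinset, (mergeOne w (s.count w)).count a
      = if w = a then s.count w else 0 := by
    intro w _
    unfold mergeOne
    split_ifs with h h2 <;>
      simp only [count_add, count_replicate] <;> split_ifs <;> omega
  rw [Finset.sum_congr rfl h1, Finset.sum_ite_eq' s.toFinset a (fun w => s.count w)]
  split_ifs with h
  · rfl
  · rw [Multiset.count_eq_zero.2 (fun hm => h (Multiset.mem_toFinset.2 hm))]

lemma sum_mergeOne (w c : ℕ) : (mergeOne w c).sum = w * c := by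
  unfold mergeOne
  split_ifs with h
  · rw [Multiset.sum_add, Multiset.sum_replicate, Multiset.sum_replicate,
      smul_eq_mul, smul_eq_mul]
    have hc : c % 2 + 2 * (c / 2) = c := by omega
    calc c % 2 * w + c / 2 * (2 * w) = (c % 2 + 2 * (c / 2)) * w := by ring
    _ = w * c := by rw [hc]; ring
  · rw [Multiset.sum_replicate, smul_eq_mul]; ring

lemma sum_finsetSum (t : Finset ℕ) (f : ℕ → Multiset ℕ) :
    (∑ w ∈ t, f w).sum = ∑ w ∈ t, (f w).sum := by
  classical
  induction t using Finset.induction with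
  | empty => simp
  | insert _ _ h ih => rw [Finset.sum_insert h, Finset.sum_insert h, Multiset.sum_add, ih]

lemma sum_mergeM (s : Multiset ℕ) : (mergeM s).sum = s.sum := by
  unfold mergeM
  rw [sum_finsetSum]
  have h1 : ∀ w ∈ s.toFinset, (mergeOne w (s.count w)).sum = (s.count w • ({w} : Multiset ℕ)).sum := by
    intro w _
    rw [sum_mergeOne, Multiset.sum_nsmul, Multiset.sum_singleton, smul_eq_mul]
    ring
  rw [Finset.sum_congr rfl h1, ← sum_finsetSum]
  rw [Multiset.toFinset_sum_count_nsmul_eq]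




/-- forward core map: `v` the repeated odd value -/
def Fcore (s : Multiset ℕ) (v : ℕ) : Multiset ℕ :=
  splitM (s - replicate (2 * (s.count v / 2)) v) + replicate (s.count v / 2) (2 * v)

/-- backward core map: `j` the unique value ≡ 2 mod 4 -/
def Gcore (s : Multiset ℕ) (j : ℕ) : Multiset ℕ :=
  mergeM (s - replicate (s.count j) j) + replicate (2 * s.count j) (j / 2)

lemma fc_odd (s : Multiset ℕ) (v a : ℕ) (hv : v % 2 = 1) (ha : a % 2 = 1) :
    (Fcore s v).count a =
      (if a = v then s.count v % 2 else s.count a) + 2 * s.count (2 * a) := by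
  unfold Fcore
  rw [count_add, count_splitM, if_pos ha, count_replicate, Multiset.count_sub,
    Multiset.count_sub, count_replicate, count_replicate]
  split_ifs <;> subst_vars <;> omega

lemma fc_two (s : Multiset ℕ) (v a : ℕ) (hv : v % 2 = 1) (ha : a % 4 = 2) :
    (Fcore s v).count a = if a = 2 * v then s.count v / 2 else 0 := by
  unfold Fcore
  rw [count_add, count_splitM, count_replicate]
  split_ifs <;> subst_vars <;> omega

lemma fc_zero (s : Multiset ℕ) (v a : ℕ) (hv : v % 2 = 1) (ha : a % 4 = 0) :
    (Fcore s v).count a = s.count a := by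
  unfold Fcore
  rw [count_add, count_splitM, count_replicate, Multiset.count_sub, count_replicate]
  split_ifs <;> subst_vars <;> omega

lemma sum_Fcore (s : Multiset ℕ) (v : ℕ) : (Fcore s v).sum = s.sum := by
  unfold Fcore
  rw [Multiset.sum_add, sum_splitM, Multiset.sum_replicate, smul_eq_mul]
  have hle : replicate (2 * (s.count v / 2)) v ≤ s :=
    Multiset.le_count_iff_replicate_le.1 (by omega)
  have hs := Multiset.sum_replicate (2 * (s.count v / 2)) v
  have h2 : (s - replicate (2 * (s.count v / 2)) v).sum
      + (replicate (2 * (s.count v / 2)) v).sum = s.sum := by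
    rw [← Multiset.sum_add, tsub_add_cancel_of_le hle]
  rw [hs, smul_eq_mul] at h2
  have : s.count v / 2 * (2 * v) = 2 * (s.count v / 2) * v := by ring
  omega

lemma gc_odd (s : Multiset ℕ) (j a : ℕ) (hj : j % 4 = 2) (ha : a % 2 = 1) :
    (Gcore s j).count a = s.count a % 2 + (if a = j / 2 then 2 * s.count j else 0) := by
  unfold Gcore
  rw [count_add, count_mergeM_odd a ha, Multiset.count_sub, count_replicate,
    count_replicate]
  split_ifs <;> subst_vars <;> omega

lemma gc_two (s : Multiset ℕ) (j a : ℕ) (hj : j % 4 = 2) (ha : a % 4 = 2)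
    (hu : ∀ i ∈ s, i % 4 = 2 → i = j) :
    (Gcore s j).count a = s.count (a / 2) / 2 := by
  unfold Gcore
  have h0 : (s - replicate (s.count j) j).count a = 0 := by
    rw [Multiset.count_sub, count_replicate]
    by_cases hja : a = j
    · subst hja; simp
    · have : s.count a = 0 := by
        rw [Multiset.count_eq_zero]
        exact fun hm => hja (hu a hm ha)
      omega
  rw [count_add, count_mergeM_two a ha _ h0, Multiset.count_sub, count_replicate,
    count_replicate]
  split_ifs <;> subst_vars <;> omega

lemma gc_zero (s : Multiset ℕ) (j a : ℕ) (hj : j % 4 = 2) (ha : a % 4 = 0) :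
    (Gcore s j).count a = s.count a := by
  unfold Gcore
  rw [count_add, count_mergeM_zero a ha, Multiset.count_sub, count_replicate,
    count_replicate]
  split_ifs <;> subst_vars <;> omega

lemma sum_Gcore (s : Multiset ℕ) (j : ℕ) (hj : j % 4 = 2) : (Gcore s j).sum = s.sum := by
  unfold Gcore
  rw [Multiset.sum_add, sum_mergeM, Multiset.sum_replicate, smul_eq_mul]
  have hle : replicate (s.count j) j ≤ s :=
    Multiset.le_count_iff_replicate_le.1 (le_refl _)
  have h2 : (s - replicate (s.count j) j).sum
      + (replicate (s.count j) j).sum = s.sum := by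
    rw [← Multiset.sum_add, tsub_add_cancel_of_le hle]
  rw [Multiset.sum_replicate, smul_eq_mul] at h2
  have hj2 : 2 * (j / 2) = j := by omega
  have : 2 * s.count j * (j / 2) = s.count j * (2 * (j / 2)) := by ring
  rw [hj2] at this
  omega




variable {n : ℕ}

def P (lam : n.Partition) : Prop :=
  ∃ j, Odd j ∧ 2 ≤ lam.parts.count j ∧ ∀ i, Odd i → i ≠ j → lam.parts.count i ≤ 1

def Q (lam : n.Partition) : Prop :=
  ∃ j, j % 4 = 2 ∧ j ∈ lam.parts ∧ ∀ i ∈ lam.parts, i % 4 = 2 → i = j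

noncomputable def Fmap (lam : {lam : n.Partition // P lam}) : {lam : n.Partition // Q lam} := by
  refine ⟨⟨Fcore lam.1.parts lam.2.choose, ?_, ?_⟩, ?_⟩
  · -- positivity
    intro i hi
    rcases Nat.eq_zero_or_pos i with h0 | h
    swap
    · exact h
    subst h0
    have hv : lam.2.choose % 2 = 1 := Nat.odd_iff.1 lam.2.choose_spec.1
    have := fc_zero lam.1.parts lam.2.choose 0 hv (by norm_num)
    have h00 : lam.1.parts.count 0 = 0 :=
      Multiset.count_eq_zero.2 (fun hm => absurd (lam.1.parts_pos hm) (by simp))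
    rw [← Multiset.count_pos, this, h00] at hi
    omega
  · rw [sum_Fcore]; exact lam.1.parts_sum
  · -- membership in Q
    have hv : lam.2.choose % 2 = 1 := Nat.odd_iff.1 lam.2.choose_spec.1
    have hr : 2 ≤ lam.1.parts.count lam.2.choose := lam.2.choose_spec.2.1
    refine ⟨2 * lam.2.choose, by omega, ?_, ?_⟩
    · rw [← Multiset.count_pos, fc_two _ _ _ hv (by omega), if_pos rfl]
      omega
    · intro i hi hi2
      rw [← Multiset.count_pos, fc_two _ _ _ hv hi2] at hi
      by_contra hne
      rw [if_neg hne] at hi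
      omega

noncomputable def Gmap (lam : {lam : n.Partition // Q lam}) : {lam : n.Partition // P lam} := by
  refine ⟨⟨Gcore lam.1.parts lam.2.choose, ?_, ?_⟩, ?_⟩
  · intro i hi
    rcases Nat.eq_zero_or_pos i with h0 | h
    swap
    · exact h
    subst h0
    have hj : lam.2.choose % 4 = 2 := lam.2.choose_spec.1
    have := gc_zero lam.1.parts lam.2.choose 0 hj (by norm_num)
    have h00 : lam.1.parts.count 0 = 0 :=
      Multiset.count_eq_zero.2 (fun hm => absurd (lam.1.parts_pos hm) (by simp))
    rw [← Multiset.count_pos, this, h00] at hi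
    omega
  · rw [sum_Gcore _ _ lam.2.choose_spec.1]; exact lam.1.parts_sum
  · have hj : lam.2.choose % 4 = 2 := lam.2.choose_spec.1
    have hm : 1 ≤ lam.1.parts.count lam.2.choose :=
      Multiset.one_le_count_iff_mem.2 lam.2.choose_spec.2.1
    refine ⟨lam.2.choose / 2, Nat.odd_iff.2 (by omega), ?_, ?_⟩
    · rw [gc_odd _ _ _ hj (by omega), if_pos rfl]
      omega
    · intro i hio hine
      rw [gc_odd _ _ _ hj (Nat.odd_iff.1 hio), if_neg hine]
      omega



open Multiset
variable {n : ℕ}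

lemma Fmap_parts (lam : {lam : n.Partition // P (n := n) lam}) :
    (Fmap lam).1.parts = Fcore lam.1.parts lam.2.choose := rfl

lemma Gmap_parts (lam : {lam : n.Partition // Q (n := n) lam}) :
    (Gmap lam).1.parts = Gcore lam.1.parts lam.2.choose := rfl

lemma left_inv (lam : {lam : n.Partition // P (n := n) lam}) : Gmap (Fmap lam) = lam := by
  set s := lam.1.parts with hs
  set v := lam.2.choose with hvdef
  have hv : v % 2 = 1 := Nat.odd_iff.1 lam.2.choose_spec.1
  have hr : 2 ≤ s.count v := lam.2.choose_spec.2.1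
  have hother : ∀ i, Odd i → i ≠ v → s.count i ≤ 1 := lam.2.choose_spec.2.2
  -- the chosen witness for Fmap lam is 2 * v
  have hj' : (Fmap lam).2.choose = 2 * v := by
    have h2 := (Fmap lam).2.choose_spec.1
    have hmem : 0 < (Fcore s v).count ((Fmap lam).2.choose) :=
      Multiset.count_pos.2 (Fmap lam).2.choose_spec.2.1
    rw [fc_two _ _ _ hv h2] at hmem
    by_contra hne
    rw [if_neg hne] at hmem
    omega
  apply Subtype.ext
  apply Nat.Partition.ext
  show Gcore (Fcore s v) ((Fmap lam).2.choose) = s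
  rw [hj']
  have hj2 : (2 * v) % 4 = 2 := by omega
  ext a
  by_cases ha2 : a % 2 = 1
  · rw [gc_odd _ _ _ hj2 ha2, fc_odd _ _ _ hv ha2]
    have h2v : 2 * v / 2 = v := by omega
    rw [h2v, fc_two _ _ _ hv hj2, if_pos rfl]
    by_cases hav : a = v
    · subst hav; rw [if_pos rfl, if_pos rfl]; omega
    · rw [if_neg hav, if_neg hav]
      have := hother a (Nat.odd_iff.2 ha2) hav
      omega
  · by_cases ha4 : a % 4 = 2
    · have huniq : ∀ i ∈ Fcore s v, i % 4 = 2 → i = 2 * v := by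
        intro i hi hi2
        rw [← Multiset.count_pos, fc_two _ _ _ hv hi2] at hi
        by_contra hne
        rw [if_neg hne] at hi
        omega
      rw [gc_two _ _ _ hj2 ha4 huniq]
      have ha2' : a / 2 % 2 = 1 := by omega
      rw [fc_odd _ _ _ hv ha2']
      have haa : 2 * (a / 2) = a := by omega
      rw [haa]
      by_cases hav : a / 2 = v
      · rw [if_pos hav]
        have : a = 2 * v := by omega
        omega
      · rw [if_neg hav]
        have := hother (a / 2) (Nat.odd_iff.2 ha2') hav
        omega
    · have ha0 : a % 4 = 0 := by omega
      rw [gc_zero _ _ _ hj2 ha0, fc_zero _ _ _ hv ha0]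

lemma right_inv (mu : {lam : n.Partition // Q (n := n) lam}) : Fmap (Gmap mu) = mu := by
  set t := mu.1.parts with ht
  set j := mu.2.choose with hjdef
  have hj : j % 4 = 2 := mu.2.choose_spec.1
  have hm : 1 ≤ t.count j := Multiset.one_le_count_iff_mem.2 mu.2.choose_spec.2.1
  have huniq : ∀ i ∈ t, i % 4 = 2 → i = j := mu.2.choose_spec.2.2
  have hu : j / 2 % 2 = 1 := by omega
  have hcu : (Gcore t j).count (j / 2) = t.count (j / 2) % 2 + 2 * t.count j := by
    rw [gc_odd _ _ _ hj hu, if_pos rfl]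
  -- the chosen witness for Gmap mu is j / 2
  have hv' : (Gmap mu).2.choose = j / 2 := by
    have h2 := (Gmap mu).2.choose_spec.2.1
    have hoth := (Gmap mu).2.choose_spec.2.2
    by_contra hne
    have h1 := hoth (j / 2) (Nat.odd_iff.2 hu) (fun h => hne h.symm)
    have h1' : (Gcore t j).count (j / 2) ≤ 1 := h1
    rw [hcu] at h1'
    omega
  apply Subtype.ext
  apply Nat.Partition.ext
  show Fcore (Gcore t j) ((Gmap mu).2.choose) = t
  rw [hv']
  ext a
  by_cases ha2 : a % 2 = 1
  · rw [fc_odd _ _ _ hu ha2, hcu]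
    have h2a : (2 * a) % 4 = 2 := by omega
    rw [gc_two _ _ _ hj h2a huniq]
    have h2a2 : 2 * a / 2 = a := by omega
    rw [h2a2]
    by_cases hau : a = j / 2
    · rw [if_pos hau]; rw [hau]; omega
    · rw [if_neg hau, gc_odd _ _ _ hj ha2, if_neg hau]
      omega
  · by_cases ha4 : a % 4 = 2
    · rw [fc_two _ _ _ hu ha4, hcu]
      have h2u : 2 * (j / 2) = j := by omega
      rw [h2u]
      by_cases haj : a = j
      · rw [if_pos haj, haj]; omega
      · rw [if_neg haj]
        have : t.count a = 0 := by
          rw [Multiset.count_eq_zero]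
          exact fun hmem => haj (huniq a hmem ha4)
        omega
    · have ha0 : a % 4 = 0 := by omega
      rw [fc_zero _ _ _ hu ha0, gc_zero _ _ _ hj ha0]


noncomputable def theEquiv (n : ℕ) :
    {lam : n.Partition //
      ∃ j, Odd j ∧ 2 ≤ lam.parts.count j ∧
        ∀ i, Odd i → i ≠ j → lam.parts.count i ≤ 1} ≃
    {lam : n.Partition //
      ∃ j, j % 4 = 2 ∧ j ∈ lam.parts ∧ ∀ i ∈ lam.parts, i % 4 = 2 → i = j} :=
  ⟨Fmap, Gmap, left_inv, right_inv⟩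

end DOFT

/-- `d_o(n)`: partitions of `n` in which exactly one odd part value is repeated
(all other odd part values appear exactly once) and even parts are unrestricted. -/
noncomputable def dO (n : ℕ) : ℕ :=
  Nat.card {lam : n.Partition //
    ∃ j, Odd j ∧ 2 ≤ lam.parts.count j ∧
      ∀ i, Odd i → i ≠ j → lam.parts.count i ≤ 1}

/-- `f_2(n)`: partitions of `n` in which the set of parts congruent to `2` modulo `4`
is a singleton. -/
noncomputable def fTwo (n : ℕ) : ℕ :=
  Nat.card {lam : n.Partition //
    ∃ j, j % 4 = 2 ∧ j ∈ lam.parts ∧ ∀ i ∈ lam.parts, i % 4 = 2 → i = j}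

theorem dO_eq_fTwo (n : ℕ) (hn : 1 ≤ n) : dO n = fTwo n :=
  Nat.card_congr (DOFT.theEquiv n)
end

section
/- As formal power series, ∑_{n≥0} d_e(n) q^n = (q^4;q^4)_∞/(q;q)_∞ · ∑_{n≥1} q^{4n}/(1 − q^{4n}), where d_e(n) is the number of partitions of n in which exactly one even part value is repeated and odd parts are unrestricted. -/
open PowerSeries

/-- The infinite product `(q^k;q^k)_∞ = ∏_{j ≥ 1} (1 - q^{kj})` as a formal power series:
its `n`-th coefficient agrees with that of any truncation past `n` (for `k ≥ 1`). -/
noncomputable def pochhammerProd (k : ℕ) : PowerSeries ℚ :=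
  PowerSeries.mk fun n =>
    coeff n (∏ j ∈ Finset.Icc 1 n, (1 - (X : PowerSeries ℚ) ^ (k * j)))

/-- The series `∑_{n ≥ 1} q^{4n} / (1 - q^{4n})`: the `n`-th summand has order `4n ≥ n`,
so the `N`-th coefficient agrees with that of the partial sum. -/
noncomputable def lambertSum4 : PowerSeries ℚ :=
  PowerSeries.mk fun N =>
    coeff N (∑ n ∈ Finset.Icc 1 N,
      (X : PowerSeries ℚ) ^ (4 * n) * (1 - (X : PowerSeries ℚ) ^ (4 * n))⁻¹)

namespace DEAux

noncomputable section

variable {α : Type*}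

open Finset

open scoped Classical

/-- A convenience constructor for the power series whose coefficients indicate a subset. -/
def indicatorSeries (α : Type*) [Semiring α] (s : Set ℕ) : PowerSeries α :=
  PowerSeries.mk fun n => if n ∈ s then 1 else 0

theorem coeff_indicator (s : Set ℕ) [Semiring α] (n : ℕ) :
    coeff n (indicatorSeries α s) = if n ∈ s then 1 else 0 :=
  coeff_mk _ _

theorem coeff_indicator_pos (s : Set ℕ) [Semiring α] (n : ℕ) (h : n ∈ s) :
    coeff n (indicatorSeries α s) = 1 := by rw [coeff_indicator, if_pos h]

theorem coeff_indicator_neg (s : Set ℕ) [Semiring α] (n : ℕ) (h : n ∉ s) :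
    coeff n (indicatorSeries α s) = 0 := by rw [coeff_indicator, if_neg h]

theorem constantCoeff_indicator (s : Set ℕ) [Semiring α] :
    constantCoeff (indicatorSeries α s) = if 0 ∈ s then 1 else 0 :=
  rfl

theorem two_series (i : ℕ) [Semiring α] :
    1 + (X : PowerSeries α) ^ i.succ = indicatorSeries α {0, i.succ} := by
  ext n
  simp only [coeff_indicator, coeff_one, coeff_X_pow, Set.mem_insert_iff, Set.mem_singleton_iff,
    map_add]
  cases' n with d
  · simp [(Nat.succ_ne_zero i).symm]
  · simp [Nat.succ_ne_zero d]

theorem num_series' [Field α] (i : ℕ) :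
    (1 - (X : PowerSeries α) ^ (i + 1))⁻¹ = indicatorSeries α {k | i + 1 ∣ k} := by
  rw [PowerSeries.inv_eq_iff_mul_eq_one]
  · ext n
    cases n with
    | zero => simp [mul_sub, zero_pow, constantCoeff_indicator]
    | succ n =>
      simp only [coeff_one, if_false, mul_sub, mul_one, coeff_indicator,
        LinearMap.map_sub, reduceCtorEq]
      simp_rw [coeff_mul, coeff_X_pow, coeff_indicator, @boole_mul _ _ _ _]
      simp only [← ite_and]
      rw [@Finset.sum_boole _ α _ (fun x : ℕ × ℕ => x.1 ∈ {k | i + 1 ∣ k} ∧ x.2 = i + 1)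
        (fun x => @instDecidableAnd _ _ (Classical.propDecidable _) (instDecidableEqNat _ _)) _]
      rw [sub_eq_iff_eq_add, zero_add]
      symm
      split_ifs with h
      · suffices #{a ∈ antidiagonal (n + 1) | i + 1 ∣ a.fst ∧ a.snd = i + 1} = 1 by
          simp only [Set.mem_setOf_eq]; convert congr_arg ((↑) : ℕ → α) this; norm_cast
        rw [card_eq_one]
        cases' h with p hp
        refine ⟨((i + 1) * (p - 1), i + 1), ?_⟩
        ext ⟨a₁, a₂⟩
        simp only [mem_filter, Prod.mk.injEq, Finset.HasAntidiagonal.mem_antidiagonal, mem_singleton]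
        constructor
        · rintro ⟨a_left, ⟨a, rfl⟩, rfl⟩
          refine ⟨?_, rfl⟩
          rw [Nat.mul_sub_left_distrib, ← hp, ← a_left, mul_one, Nat.add_sub_cancel]
        · rintro ⟨rfl, rfl⟩
          match p with
          | 0 => rw [mul_zero] at hp; cases hp
          | p + 1 => rw [hp]; simp [mul_add]
      · suffices #{a ∈ antidiagonal (n + 1) | i + 1 ∣ a.fst ∧ a.snd = i + 1} = 0 by
          simp only [Set.mem_setOf_eq]; convert congr_arg ((↑) : ℕ → α) this; norm_cast
        rw [card_eq_zero]
        apply eq_empty_of_forall_notMem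
        simp only [Prod.forall, mem_filter, not_and, Finset.HasAntidiagonal.mem_antidiagonal]
        rintro _ h₁ h₂ ⟨a, rfl⟩ rfl
        apply h
        simp [← h₂]
  · simp [zero_pow]

def mkOdd : ℕ ↪ ℕ :=
  ⟨fun i => 2 * i + 1, fun x y h => by linarith⟩

-- The main workhorse of the partition theorem proof.
theorem partialGF_prop (α : Type*) [CommSemiring α] (n : ℕ) (s : Finset ℕ) (hs : ∀ i ∈ s, 0 < i)
    (c : ℕ → Set ℕ) (hc : ∀ i, i ∉ s → 0 ∈ c i) :
    #{p : n.Partition | (∀ j, p.parts.count j ∈ c j) ∧ ∀ j ∈ p.parts, j ∈ s} =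
      coeff n (∏ i ∈ s, indicatorSeries α ((· * i) '' c i)) := by
  simp_rw [coeff_prod, coeff_indicator, prod_boole, sum_boole]
  apply congr_arg
  simp only [mem_univ, forall_true_left, not_and, not_forall, exists_prop,
    Set.mem_image, not_exists]
  set φ : (a : Nat.Partition n) →
    a ∈ filter (fun p ↦ (∀ (j : ℕ), Multiset.count j p.parts ∈ c j) ∧ ∀ j ∈ p.parts, j ∈ s) univ →
    ℕ →₀ ℕ := fun p _ => {
      toFun := fun i => Multiset.count i p.parts • i
      support := Finset.filter (fun i => i ≠ 0) p.parts.toFinset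
      mem_support_toFun := fun a => by
        simp only [smul_eq_mul, ne_eq, mul_eq_zero, Multiset.count_eq_zero]
        rw [not_or, not_not]
        simp only [Multiset.mem_toFinset, not_not, mem_filter] }
  refine Finset.card_bij φ ?_ ?_ ?_
  · intro a ha
    simp only [φ, not_forall, not_exists, not_and, exists_prop, mem_filter]
    rw [mem_finsuppAntidiag]
    dsimp only [ne_eq, smul_eq_mul, id_eq, eq_mpr_eq_cast, le_eq_subset, Finsupp.coe_mk]
    simp only [mem_univ, forall_true_left, not_and, not_forall, exists_prop,
      mem_filter, true_and] at ha
    refine ⟨⟨?_, fun i ↦ ?_⟩, fun i _ ↦ ⟨a.parts.count i, ha.1 i, rfl⟩⟩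
    · conv_rhs => simp [← a.parts_sum]
      rw [sum_multiset_count_of_subset _ s]
      · simp only [smul_eq_mul]
      · intro i
        simp only [Multiset.mem_toFinset, not_not, mem_filter]
        apply ha.2
    · simp only [ne_eq, Multiset.mem_toFinset, not_not, mem_filter, and_imp]
      exact fun hi _ ↦ ha.2 i hi
  · intro p₁ hp₁ p₂ hp₂ h
    apply Nat.Partition.ext
    simp only [true_and, mem_univ, mem_filter] at hp₁ hp₂
    ext i
    simp only [φ, ne_eq, Multiset.mem_toFinset, not_not, smul_eq_mul, Finsupp.mk.injEq] at h
    by_cases hi : i = 0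
    · rw [hi]
      rw [Multiset.count_eq_zero_of_notMem]
      · rw [Multiset.count_eq_zero_of_notMem]
        intro a; exact Nat.lt_irrefl 0 (hs 0 (hp₂.2 0 a))
      intro a; exact Nat.lt_irrefl 0 (hs 0 (hp₁.2 0 a))
    · rw [← mul_left_inj' hi]
      rw [funext_iff] at h
      exact h.2 i
  · simp only [φ, mem_filter, mem_finsuppAntidiag, mem_univ, exists_prop, true_and, and_assoc]
    rintro f ⟨hf, hf₃, hf₄⟩
    have hf' : f ∈ finsuppAntidiag s n := mem_finsuppAntidiag.mpr ⟨hf, hf₃⟩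
    simp only [mem_finsuppAntidiag] at hf'
    refine ⟨⟨∑ i ∈ s, Multiset.replicate (f i / i) i, ?_, ?_⟩, ?_, ?_, ?_⟩
    · intro i hi
      simp only [exists_prop, Multiset.mem_sum, mem_map, Function.Embedding.coeFn_mk] at hi
      rcases hi with ⟨t, ht, z⟩
      apply hs
      rwa [Multiset.eq_of_mem_replicate z]
    · simp_rw [Multiset.sum_sum, Multiset.sum_replicate, Nat.nsmul_eq_mul]
      rw [← hf'.1]
      refine sum_congr rfl fun i hi => Nat.div_mul_cancel ?_
      rcases hf₄ i hi with ⟨w, _, hw₂⟩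
      rw [← hw₂]
      exact dvd_mul_left _ _
    · intro i
      simp_rw [Multiset.count_sum', Multiset.count_replicate, sum_ite_eq']
      split_ifs with h
      · rcases hf₄ i h with ⟨w, hw₁, hw₂⟩
        rwa [← hw₂, Nat.mul_div_cancel _ (hs i h)]
      · exact hc _ h
    · intro i hi
      rw [Multiset.mem_sum] at hi
      rcases hi with ⟨j, hj₁, hj₂⟩
      rwa [Multiset.eq_of_mem_replicate hj₂]
    · ext i
      simp_rw [Multiset.count_sum', Multiset.count_replicate, sum_ite_eq']
      simp only [ne_eq, Multiset.mem_toFinset, not_not, smul_eq_mul, ite_mul,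
        zero_mul, Finsupp.coe_mk]
      split_ifs with h
      · apply Nat.div_mul_cancel
        rcases hf₄ i h with ⟨w, _, hw₂⟩
        apply Dvd.intro_left _ hw₂
      · apply symm
        rw [← Finsupp.notMem_support_iff]
        exact notMem_mono hf'.2 h


end

end DEAux
namespace DEAux
noncomputable section
variable {α : Type*}
open Finset
open scoped Classical

/-- partitions with all even part values distinct -/
def distEven {n : ℕ} (p : n.Partition) : Prop := ∀ i, Even i → p.parts.count i ≤ 1

def D (n : ℕ) : ℕ := #(Finset.univ.filter (fun p : n.Partition => distEven p))

def Dser : PowerSeries ℚ := PowerSeries.mk fun n => ((D n : ℚ))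

lemma coeff_Dser (n : ℕ) : coeff n Dser = (D n : ℚ) := coeff_mk _ _

lemma D_eq_coeff (n m : ℕ) (hm : n ≤ m) :
    (D n : ℚ) = coeff n (∏ i ∈ Icc 1 m,
      if Even i then 1 + (X : PowerSeries ℚ) ^ i else (1 - (X : PowerSeries ℚ) ^ i)⁻¹) := by
  rw [D]
  convert partialGF_prop ℚ n (Icc 1 m) (fun i hi => (mem_Icc.mp hi).1)
    (fun i => if Even i then ({0, 1} : Set ℕ) else Set.univ)
    (fun i _ => by by_cases h : Even i <;> simp [h]) using 3
  · rfl
  · ext p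
    simp only [Set.mem_setOf_eq, mem_filter, mem_univ, true_and]
    constructor
    · intro hp
      refine ⟨fun j => ?_, fun j hj => ?_⟩
      · split_ifs with h
        · rcases Nat.le_one_iff_eq_zero_or_eq_one.mp (hp j h) with h' | h' <;> simp [h']
        · trivial
      · have h1 : 1 ≤ j := p.parts_pos hj
        have h2 : j ≤ n := by
          simpa [p.parts_sum] using Multiset.single_le_sum (fun _ _ => Nat.zero_le _) _ hj
        exact mem_Icc.mpr ⟨h1, h2.trans hm⟩
    · rintro ⟨hp, -⟩ j hj
      have := hp j
      rw [if_pos hj] at this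
      simp only [Set.mem_insert_iff, Set.mem_singleton_iff] at this
      omega
  · rename_i i hi
    symm
    obtain ⟨j, rfl⟩ : ∃ j, i = j + 1 := ⟨i - 1, by have := (mem_Icc.mp hi).1; omega⟩
    split_ifs with h
    · have hset : ((fun x => x * (j + 1)) '' {0, 1} : Set ℕ) = {0, j + 1} := by
        rw [Set.image_pair]
        norm_num
      rw [hset, two_series]
    · have hset : ((fun x => x * (j + 1)) '' Set.univ : Set ℕ) = {k | j + 1 ∣ k} := by
        rw [Set.image_univ]
        ext x
        simp only [Set.mem_range, Set.mem_setOf_eq]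
        constructor
        · rintro ⟨a, rfl⟩; exact dvd_mul_left _ _
        · rintro ⟨a, rfl⟩; exact ⟨a, mul_comm _ _⟩
      rw [hset, num_series']

end
end DEAux
namespace DEAux
noncomputable section
open Finset
open scoped Classical

lemma coeff_poch (k n m : ℕ) (hk : 1 ≤ k) (hm : n ≤ m) :
    coeff n (pochhammerProd k) =
      coeff n (∏ j ∈ Icc 1 m, (1 - (X : PowerSeries ℚ) ^ (k * j))) := by
  rw [pochhammerProd, coeff_mk]
  have hsub : Icc 1 n ⊆ Icc 1 m := Icc_subset_Icc le_rfl hm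
  rw [← prod_sdiff hsub, mul_comm]
  symm
  apply coeff_mul_prod_one_sub_of_lt_order
  intro i hi
  rw [order_X_pow]
  have h1 : ¬ (i ∈ Icc 1 n) := (mem_sdiff.mp hi).2
  have h2 : i ∈ Icc 1 m := (mem_sdiff.mp hi).1
  rw [mem_Icc] at h1 h2
  have : n < k * i := by
    have : n < i := by omega
    calc n < i := this
    _ ≤ k * i := Nat.le_mul_of_pos_left i hk
  exact_mod_cast this

lemma coeff_lambert (M : ℕ) :
    coeff M lambertSum4 = (#((Icc 1 M).filter (fun a => 4 * a ∣ M)) : ℚ) := by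
  rw [lambertSum4, coeff_mk, map_sum, card_filter, Nat.cast_sum]
  apply sum_congr rfl
  intro n hn
  rw [mem_Icc] at hn
  have h4 : (1 - (X : PowerSeries ℚ) ^ (4 * n))⁻¹ = indicatorSeries ℚ {k | 4 * n ∣ k} := by
    obtain ⟨j, hj⟩ : ∃ j, 4 * n = j + 1 := ⟨4 * n - 1, by omega⟩
    rw [hj]
    exact num_series' j
  rw [h4, coeff_X_pow_mul', coeff_indicator]
  simp only [Set.mem_setOf_eq]
  by_cases hd : 4 * n ∣ M
  · have hle : 4 * n ≤ M := Nat.le_of_dvd (by omega) hd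
    rw [if_pos hle, if_pos (Nat.dvd_sub hd dvd_rfl), if_pos hd]
    simp
  · rw [if_neg hd]
    split_ifs with h1 h2
    · exfalso
      apply hd
      have := Nat.dvd_add h2 (dvd_refl (4 * n))
      rwa [Nat.sub_add_cancel h1] at this
    · simp
    · simp

lemma key_prod (M : ℕ) :
    (∏ i ∈ Icc 1 (2 * M),
        (if Even i then 1 + (X : PowerSeries ℚ) ^ i else (1 - (X : PowerSeries ℚ) ^ i)⁻¹)) *
      ∏ j ∈ Icc 1 (2 * M), (1 - (X : PowerSeries ℚ) ^ (1 * j)) =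
    ∏ t ∈ Icc 1 M, (1 - (X : PowerSeries ℚ) ^ (4 * t)) := by
  rw [← prod_mul_distrib]
  have h1 : ∀ i ∈ Icc 1 (2 * M),
      (if Even i then 1 + (X : PowerSeries ℚ) ^ i else (1 - (X : PowerSeries ℚ) ^ i)⁻¹) *
        (1 - (X : PowerSeries ℚ) ^ (1 * i)) =
      (if Even i then 1 - (X : PowerSeries ℚ) ^ (2 * i) else 1) := by
    intro i hi
    have hi1 : 1 ≤ i := (mem_Icc.mp hi).1
    rw [one_mul]
    split_ifs with h
    · calc (1 + (X : PowerSeries ℚ) ^ i) * (1 - X ^ i) = 1 - ((X : PowerSeries ℚ) ^ i) ^ 2 := by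
            ring
      _ = 1 - (X : PowerSeries ℚ) ^ (2 * i) := by rw [← pow_mul, mul_comm]
    · apply PowerSeries.inv_mul_cancel
      have : constantCoeff ((X : PowerSeries ℚ) ^ i) = 0 := by
        rw [map_pow, constantCoeff_X, zero_pow (by omega : i ≠ 0)]
      simp [this]
  rw [prod_congr rfl h1, ← prod_filter]
  have himg : (Icc 1 (2 * M)).filter (fun i => Even i) = (Icc 1 M).image (fun t => 2 * t) := by
    ext i
    simp only [mem_filter, mem_Icc, mem_image]
    constructor
    · rintro ⟨⟨ha, hb⟩, ⟨c, rfl⟩⟩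
      exact ⟨c, ⟨by omega, by omega⟩, by omega⟩
    · rintro ⟨t, ⟨ha, hb⟩, rfl⟩
      exact ⟨⟨by omega, by omega⟩, ⟨t, by omega⟩⟩
  rw [himg, prod_image (fun x _ y _ h => by omega)]
  apply prod_congr rfl
  intro t _
  congr 2
  omega

lemma Dser_mul_poch : Dser * pochhammerProd 1 = pochhammerProd 4 := by
  ext n
  rw [coeff_mul]
  have step : ∀ p ∈ Finset.HasAntidiagonal.antidiagonal n,
      coeff p.1 Dser * coeff p.2 (pochhammerProd 1) =
      coeff p.1 (∏ i ∈ Icc 1 (2 * n),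
          (if Even i then 1 + (X : PowerSeries ℚ) ^ i else (1 - (X : PowerSeries ℚ) ^ i)⁻¹)) *
        coeff p.2 (∏ j ∈ Icc 1 (2 * n), (1 - (X : PowerSeries ℚ) ^ (1 * j))) := by
    intro p hp
    have hpn := Finset.HasAntidiagonal.mem_antidiagonal.mp hp
    rw [coeff_Dser, D_eq_coeff p.1 (2 * n) (by omega), coeff_poch 1 p.2 (2 * n) le_rfl (by omega)]
  rw [sum_congr rfl step, ← coeff_mul, key_prod n, ← coeff_poch 4 n n (by omega) le_rfl]

end
end DEAux
namespace DEAux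
noncomputable section
open Finset
open scoped Classical

def A (N : ℕ) : Finset N.Partition :=
  Finset.univ.filter (fun lam => ∃ j, Even j ∧ 2 ≤ lam.parts.count j ∧
      ∀ i, Even i → i ≠ j → lam.parts.count i ≤ 1)

def B (N : ℕ) : Finset ((p : ℕ × ℕ) × (ℕ × p.1.Partition)) :=
  (Finset.HasAntidiagonal.antidiagonal N).sigma (fun p =>
    ((Icc 1 p.2).filter (fun a => 4 * a ∣ p.2)) ×ˢ
      (Finset.univ.filter (fun μ : p.1.Partition => distEven μ)))

lemma mem_B_iff {N : ℕ} (b : (p : ℕ × ℕ) × (ℕ × p.1.Partition)) :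
    b ∈ B N ↔ b.1.1 + b.1.2 = N ∧ (1 ≤ b.2.1 ∧ b.2.1 ≤ b.1.2) ∧
      4 * b.2.1 ∣ b.1.2 ∧ distEven b.2.2 := by
  simp [B, Finset.mem_sigma, Finset.mem_product, Finset.mem_filter, Finset.mem_Icc,
    Finset.HasAntidiagonal.mem_antidiagonal, and_assoc]

def mkPart (N : ℕ) (b : (p : ℕ × ℕ) × (ℕ × p.1.Partition)) (hb : b ∈ B N) : N.Partition where
  parts := b.2.2.parts + Multiset.replicate (2 * (b.1.2 / (4 * b.2.1))) (2 * b.2.1)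
  parts_pos := by
    intro i hi
    rcases Multiset.mem_add.mp hi with h | h
    · exact b.2.2.parts_pos h
    · have h2 := Multiset.eq_of_mem_replicate h
      have h1 := ((mem_B_iff b).mp hb).2.1.1
      omega
  parts_sum := by
    obtain ⟨hsum, ⟨ha1, _⟩, hdvd, _⟩ := (mem_B_iff b).mp hb
    rw [Multiset.sum_add, Multiset.sum_replicate, b.2.2.parts_sum, smul_eq_mul]
    have h := Nat.mul_div_cancel' hdvd
    set q := b.1.2 / (4 * b.2.1)
    have h2 : 2 * q * (2 * b.2.1) = 4 * b.2.1 * q := by ring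
    omega

lemma count_mkPart (N : ℕ) (b : (p : ℕ × ℕ) × (ℕ × p.1.Partition)) (hb : b ∈ B N) (e : ℕ) :
    (mkPart N b hb).parts.count e =
      b.2.2.parts.count e + (if 2 * b.2.1 = e then 2 * (b.1.2 / (4 * b.2.1)) else 0) := by
  simp [mkPart, Multiset.count_add, Multiset.count_replicate]

lemma k_pos {N : ℕ} {b : (p : ℕ × ℕ) × (ℕ × p.1.Partition)} (hb : b ∈ B N) :
    1 ≤ b.1.2 / (4 * b.2.1) := by
  obtain ⟨_, ⟨ha1, haM⟩, hdvd, _⟩ := (mem_B_iff b).mp hb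
  have hle : 4 * b.2.1 ≤ b.1.2 := Nat.le_of_dvd (by omega) hdvd
  exact (Nat.one_le_div_iff (by omega)).mpr hle

lemma mkPart_mem_A (N : ℕ) : ∀ b (hb : b ∈ B N), mkPart N b hb ∈ A N := by
  intro b hb
  obtain ⟨hsum, ⟨ha1, haM⟩, hdvd, hde⟩ := (mem_B_iff b).mp hb
  rw [A, mem_filter]
  refine ⟨mem_univ _, 2 * b.2.1, ⟨b.2.1, by ring⟩, ?_, ?_⟩
  · rw [count_mkPart, if_pos rfl]
    have := k_pos hb
    omega
  · intro i hie hne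
    rw [count_mkPart, if_neg (fun h => hne h.symm)]
    have := hde i hie
    omega

lemma mkPart_inj (N : ℕ) : ∀ b₁ (hb₁ : b₁ ∈ B N) b₂ (hb₂ : b₂ ∈ B N),
    mkPart N b₁ hb₁ = mkPart N b₂ hb₂ → b₁ = b₂ := by
  rintro ⟨⟨r₁, M₁⟩, a₁, μ₁⟩ hb₁ ⟨⟨r₂, M₂⟩, a₂, μ₂⟩ hb₂ heq
  obtain ⟨hsum₁, ⟨ha₁, haM₁⟩, hdvd₁, hde₁⟩ := (mem_B_iff _).mp hb₁
  obtain ⟨hsum₂, ⟨ha₂, haM₂⟩, hdvd₂, hde₂⟩ := (mem_B_iff _).mp hb₂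
  dsimp only at hsum₁ ha₁ haM₁ hdvd₁ hde₁ hsum₂ ha₂ haM₂ hdvd₂ hde₂
  have hparts := congrArg Nat.Partition.parts heq
  have hcnt : ∀ e, μ₁.parts.count e + (if 2 * a₁ = e then 2 * (M₁ / (4 * a₁)) else 0)
      = μ₂.parts.count e + (if 2 * a₂ = e then 2 * (M₂ / (4 * a₂)) else 0) := by
    intro e
    have h := congrArg (Multiset.count e) hparts
    simpa [mkPart, Multiset.count_add, Multiset.count_replicate] using h
  have hk₁ : 1 ≤ M₁ / (4 * a₁) := k_pos hb₁
  have hk₂ : 1 ≤ M₂ / (4 * a₂) := k_pos hb₂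
  have haa : a₁ = a₂ := by
    by_contra hne
    have h1 := hcnt (2 * a₂)
    rw [if_neg (by omega), if_pos rfl] at h1
    have e₁ : μ₁.parts.count (2 * a₂) ≤ 1 := hde₁ _ ⟨a₂, by ring⟩
    omega
  subst haa
  have h2 := hcnt (2 * a₁)
  rw [if_pos rfl, if_pos rfl] at h2
  have e₁ : μ₁.parts.count (2 * a₁) ≤ 1 := hde₁ _ ⟨a₁, by ring⟩
  have e₂ : μ₂.parts.count (2 * a₁) ≤ 1 := hde₂ _ ⟨a₁, by ring⟩
  have hkk : M₁ / (4 * a₁) = M₂ / (4 * a₁) := by omega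
  have t₁ := Nat.mul_div_cancel' hdvd₁
  have t₂ := Nat.mul_div_cancel' hdvd₂
  rw [hkk] at t₁
  have hMM : M₁ = M₂ := t₁.symm.trans t₂
  subst hMM
  have hrr : r₁ = r₂ := by omega
  subst hrr
  have hμ : μ₁ = μ₂ := by
    apply Nat.Partition.ext
    apply Multiset.ext.mpr
    intro e
    have h := hcnt e
    split_ifs at h <;> omega
  rw [hμ]

lemma mkPart_surj (N : ℕ) : ∀ lam ∈ A N, ∃ b hb, mkPart N b hb = lam := by
  intro lam hlam
  rw [A, mem_filter] at hlam
  obtain ⟨-, j, hje, hj2, hju⟩ := hlam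
  obtain ⟨a, ha⟩ := hje
  have hjmem : j ∈ lam.parts := Multiset.count_pos.mp (by omega)
  have hjpos : 0 < j := lam.parts_pos hjmem
  have ha1 : 1 ≤ a := by omega
  set m := lam.parts.count j with hm
  set k := m / 2 with hk
  have hk1 : 1 ≤ k := by omega
  have h2k : 2 * k ≤ m := by omega
  have hrep : Multiset.replicate (2 * k) j ≤ lam.parts :=
    Multiset.le_count_iff_replicate_le.mp (by omega)
  set t := 4 * a * k with ht
  have hsum_rep : (Multiset.replicate (2 * k) j).sum = t := by
    rw [Multiset.sum_replicate, smul_eq_mul, ht, ha]; ring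
  set P := lam.parts - Multiset.replicate (2 * k) j with hP
  have hPadd : P + Multiset.replicate (2 * k) j = lam.parts := tsub_add_cancel_of_le hrep
  have hsumPt : P.sum + t = N := by
    rw [← hsum_rep, ← Multiset.sum_add, hPadd, lam.parts_sum]
  have htN : t ≤ N := by omega
  have hPsum : P.sum = N - t := by omega
  refine ⟨⟨(N - t, t), (a, ⟨P, ?_, hPsum⟩)⟩, ?_, ?_⟩
  · intro i hi
    exact lam.parts_pos (Multiset.mem_of_le tsub_le_self hi)
  · rw [mem_B_iff]
    dsimp only
    refine ⟨by omega, ⟨ha1, ?_⟩, ⟨k, ht⟩, ?_⟩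
    · have h := Nat.le_mul_of_pos_left a (show 0 < 4 * k by omega)
      calc a ≤ 4 * k * a := h
      _ = t := by rw [ht]; ring
    · intro i hie
      show Multiset.count i P ≤ 1
      have hcs : P.count i = lam.parts.count i - (Multiset.replicate (2 * k) j).count i :=
        Multiset.count_sub _ _ _
      rw [Multiset.count_replicate] at hcs
      by_cases hij : j = i
      · subst hij
        rw [if_pos rfl] at hcs
        omega
      · rw [if_neg hij] at hcs
        have := hju i hie (fun h => hij h.symm)
        omega
  · apply Nat.Partition.ext
    show P + Multiset.replicate (2 * (t / (4 * a))) (2 * a) = lam.parts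
    have hdiv : t / (4 * a) = k := by rw [ht]; exact Nat.mul_div_cancel_left k (by omega)
    have h2a : 2 * a = j := by omega
    rw [hdiv, h2a, hPadd]

lemma card_B_eq_card_A (N : ℕ) : #(B N) = #(A N) :=
  card_bij (mkPart N) (mkPart_mem_A N) (mkPart_inj N) (mkPart_surj N)

lemma dE_eq_card_A (N : ℕ) : dE N = #(A N) := by
  rw [dE, A, Nat.card_eq_fintype_card, Fintype.card_subtype]

lemma card_B_sum (N : ℕ) : #(B N) =
    ∑ p ∈ Finset.HasAntidiagonal.antidiagonal N, #((Icc 1 p.2).filter (fun a => 4 * a ∣ p.2)) * D p.1 := by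
  rw [B, card_sigma]
  apply sum_congr rfl
  intro p _
  rw [card_product]
  rfl

lemma mk_dE_eq : PowerSeries.mk (fun n => (dE n : ℚ)) = Dser * lambertSum4 := by
  ext N
  rw [coeff_mk, coeff_mul]
  have h1 : (dE N : ℚ) =
      ∑ p ∈ Finset.HasAntidiagonal.antidiagonal N,
        (#((Icc 1 p.2).filter (fun a => 4 * a ∣ p.2)) : ℚ) * (D p.1 : ℚ) := by
    rw [dE_eq_card_A, ← card_B_eq_card_A, card_B_sum]
    push_cast
    rfl
  rw [h1]
  apply sum_congr rfl
  intro p _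
  rw [coeff_Dser, coeff_lambert]
  ring

end
end DEAux

theorem dE_genFun :
    PowerSeries.mk (fun n => (dE n : ℚ)) =
      pochhammerProd 4 * (pochhammerProd 1)⁻¹ * lambertSum4 := by
  have hu : constantCoeff (pochhammerProd 1) ≠ 0 := by
    rw [pochhammerProd]
    rw [← coeff_zero_eq_constantCoeff, coeff_mk]
    rw [show Finset.Icc 1 0 = (∅ : Finset ℕ) by simp]
    simp
  have h4 : pochhammerProd 4 * (pochhammerProd 1)⁻¹ = DEAux.Dser := by
    rw [← DEAux.Dser_mul_poch, mul_assoc, PowerSeries.mul_inv_cancel _ hu, mul_one]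
  rw [h4]
  exact DEAux.mk_dE_eq
end

section
/- Let k, p ≥ 2 and 0 ≤ r < p be integers. For all n ≥ 1, the number of partitions of n in which exactly one part value congruent to r mod p appears at least k times (all other parts congruent to r mod p appear at most k−1 times, and parts not congruent to r mod p are unrestricted) equals the number of partitions of n in which the set of parts congruent to kr modulo pk is a singleton. -/
/-- `d_p(n,k,r)`: partitions of `n` in which exactly one part value congruent to `r` mod `p`
appears at least `k` times, all other part values congruent to `r` mod `p` appear at most
`k - 1` times, and parts not congruent to `r` mod `p` are unrestricted. -/
noncomputable def dP (p n k r : ℕ) : ℕ :=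
  Nat.card {lam : n.Partition //
    ∃ j, j % p = r ∧ k ≤ lam.parts.count j ∧
      ∀ i, i % p = r → i ≠ j → lam.parts.count i ≤ k - 1}

/-- `f_p(n,k,r)`: partitions of `n` in which the set of parts congruent to `kr` modulo `pk`
is a singleton. -/
noncomputable def fP (p n k r : ℕ) : ℕ :=
  Nat.card {lam : n.Partition //
    ∃ j, j % (p * k) = (k * r) % (p * k) ∧ j ∈ lam.parts ∧
      ∀ i ∈ lam.parts, i % (p * k) = (k * r) % (p * k) → i = j}


namespace DPFP

variable (p k r : ℕ)

/-- values congruent to `r` mod `p` (positive). -/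
def Sm (m : ℕ) : Prop := m % p = r ∧ m ≠ 0

instance : DecidablePred (Sm p r) := fun _ => instDecidableAnd

/-- values of the form `k * i` with `Sm i`. -/
def KSm (m : ℕ) : Prop := k ∣ m ∧ Sm p r (m / k)

instance : DecidablePred (KSm p k r) := fun _ => instDecidableAnd

lemma KSm.ne_zero {m : ℕ} (h : KSm p k r m) : m ≠ 0 := by
  rintro rfl
  exact h.2.2 (by simp)

lemma KSm_k_mul (hk : 2 ≤ k) (m : ℕ) : KSm p k r (k * m) ↔ Sm p r m := by
  have hk0 : k ≠ 0 := by omega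
  constructor
  · rintro ⟨-, h⟩
    rwa [Nat.mul_div_cancel_left _ (by omega)] at h
  · intro h
    exact ⟨Dvd.intro m rfl, by rwa [Nat.mul_div_cancel_left _ (by omega)]⟩

def depth (m : ℕ) : ℕ :=
  if h : 2 ≤ k ∧ KSm p k r m then depth (m / k) + 1 else 0
termination_by m
decreasing_by
  exact Nat.div_lt_self (Nat.pos_of_ne_zero (KSm.ne_zero p k r h.2)) h.1

lemma depth_of_KSm (hk : 2 ≤ k) {m : ℕ} (h : KSm p k r m) :
    depth p k r m = depth p k r (m / k) + 1 := by
  rw [depth]; simp [hk, h]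

lemma depth_of_not_KSm {m : ℕ} (h : ¬ KSm p k r m) : depth p k r m = 0 := by
  rw [depth]; simp [h]

lemma pow_depth_dvd (hk : 2 ≤ k) (m : ℕ) : k ^ depth p k r m ∣ m := by
  induction m using Nat.strong_induction_on with
  | _ m ih =>
    by_cases h : KSm p k r m
    · have hm : m ≠ 0 := h.ne_zero p k r
      rw [depth_of_KSm p k r hk h]
      have hlt : m / k < m := Nat.div_lt_self (Nat.pos_of_ne_zero hm) hk
      have h2 := ih _ hlt
      have hmk : k * (m / k) = m := Nat.mul_div_cancel' h.1
      have h3 : k * k ^ depth p k r (m / k) ∣ k * (m / k) := mul_dvd_mul_left k h2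
      rw [hmk] at h3
      rw [pow_succ, mul_comm (k ^ _) k]
      exact h3
    · rw [depth_of_not_KSm p k r h]; simp

def root (m : ℕ) : ℕ := m / k ^ depth p k r m

lemma root_mul_pow (hk : 2 ≤ k) (m : ℕ) :
    root p k r m * k ^ depth p k r m = m :=
  Nat.div_mul_cancel (pow_depth_dvd p k r hk m)

lemma root_eq_zero_iff (hk : 2 ≤ k) (m : ℕ) : root p k r m = 0 ↔ m = 0 := by
  constructor
  · intro h
    have := root_mul_pow p k r hk m
    rw [h] at this; simpa using this.symm
  · rintro rfl
    simp [root, depth_of_not_KSm, Nat.zero_div]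

lemma depth_k_mul (hk : 2 ≤ k) {m : ℕ} (h : Sm p r m) :
    depth p k r (k * m) = depth p k r m + 1 := by
  rw [depth_of_KSm p k r hk ((KSm_k_mul p k r hk m).2 h),
    Nat.mul_div_cancel_left _ (by omega : 0 < k)]

lemma root_k_mul (hk : 2 ≤ k) {m : ℕ} (h : Sm p r m) :
    root p k r (k * m) = root p k r m := by
  rw [root, root, depth_k_mul p k r hk h, pow_succ, mul_comm (k ^ _) k,
    ← Nat.div_div_eq_div_mul, Nat.mul_div_cancel_left _ (by omega : 0 < k)]

lemma not_KSm_root (hk : 2 ≤ k) (m : ℕ) : ¬ KSm p k r (root p k r m) := by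
  induction m using Nat.strong_induction_on with
  | _ m ih =>
    by_cases h : KSm p k r m
    · have hm : m ≠ 0 := h.ne_zero p k r
      have hlt : m / k < m := Nat.div_lt_self (Nat.pos_of_ne_zero hm) hk
      have hroot : root p k r m = root p k r (m / k) := by
        have hmk : m = k * (m / k) := (Nat.mul_div_cancel' h.1 ).symm
        conv_lhs => rw [hmk]
        exact root_k_mul p k r hk h.2
      rw [hroot]
      exact ih _ hlt
    · have : root p k r m = m := by
        rw [root, depth_of_not_KSm p k r h]; simp
      rwa [this]

/-- the chain property: all positions strictly below the depth are in `S`. -/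
lemma Sm_of_lt_depth (hk : 2 ≤ k) (m : ℕ) :
    ∀ s < depth p k r m, Sm p r (root p k r m * k ^ s) := by
  induction m using Nat.strong_induction_on with
  | _ m ih =>
    intro s hs
    by_cases h : KSm p k r m
    · have hm : m ≠ 0 := h.ne_zero p k r
      have hlt : m / k < m := Nat.div_lt_self (Nat.pos_of_ne_zero hm) hk
      have hroot : root p k r m = root p k r (m / k) := by
        have hmk : m = k * (m / k) := (Nat.mul_div_cancel' h.1).symm
        conv_lhs => rw [hmk]
        exact root_k_mul p k r hk h.2
      rw [depth_of_KSm p k r hk h] at hs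
      rcases Nat.lt_succ_iff_lt_or_eq.1 hs with hs' | rfl
      · rw [hroot]; exact ih _ hlt s hs'
      · rw [hroot, root_mul_pow p k r hk]
        exact h.2
    · rw [depth_of_not_KSm p k r h] at hs; omega

/-- coordinates: a valid position `(u, t)` determines depth and root. -/
lemma depth_root_coord (hk : 2 ≤ k) {u : ℕ} (hu : ¬ KSm p k r u) (hu0 : u ≠ 0)
    (t : ℕ) (hV : ∀ s < t, Sm p r (u * k ^ s)) :
    depth p k r (u * k ^ t) = t ∧ root p k r (u * k ^ t) = u := by
  induction t with
  | zero =>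
    simp only [pow_zero, mul_one]
    exact ⟨depth_of_not_KSm p k r hu, by rw [root, depth_of_not_KSm p k r hu]; simp⟩
  | succ t ih =>
    have hV' : ∀ s < t, Sm p r (u * k ^ s) := fun s hs => hV s (by omega)
    obtain ⟨hd, hr⟩ := ih hV'
    have hSt : Sm p r (u * k ^ t) := hV t (by omega)
    have heq : u * k ^ (t + 1) = k * (u * k ^ t) := by ring
    constructor
    · rw [heq, depth_k_mul p k r hk hSt, hd]
    · rw [heq, root_k_mul p k r hk hSt, hr]


/-! ## Finsupp machinery -/

noncomputable def weight (f : ℕ →₀ ℕ) : ℕ := f.sum fun m c => m * c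

noncomputable def collapse (f : ℕ →₀ ℕ) : ℕ →₀ ℕ :=
  f.sum fun m c => Finsupp.single (root p k r m) (c * k ^ depth p k r m)

lemma collapse_apply (f : ℕ →₀ ℕ) (u : ℕ) :
    collapse p k r f u =
      f.sum fun m c => if root p k r m = u then c * k ^ depth p k r m else 0 := by
  rw [collapse, Finsupp.sum_apply]
  exact Finsupp.sum_congr fun m _ => Finsupp.single_apply

lemma weight_collapse (hk : 2 ≤ k) (f : ℕ →₀ ℕ) :
    weight (collapse p k r f) = weight f := by
  rw [collapse, weight, Finsupp.sum_sum_index (by simp) (by intros; rw [mul_add])]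
  refine Finsupp.sum_congr fun m _ => ?_
  rw [Finsupp.sum_single_index (by simp)]
  have hmp : root p k r m * k ^ depth p k r m = m := root_mul_pow p k r hk m
  calc root p k r m * (f m * k ^ depth p k r m)
      = (root p k r m * k ^ depth p k r m) * f m := by ring
    _ = m * f m := by rw [hmp]

def expandFun (h : ℕ →₀ ℕ) (m : ℕ) : ℕ :=
  if m = 0 then 0
  else if Sm p r m then h (root p k r m) / k ^ depth p k r m % k
  else h (root p k r m) / k ^ depth p k r m

noncomputable def expand (hk : 2 ≤ k) (h : ℕ →₀ ℕ) : ℕ →₀ ℕ :=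
  Finsupp.onFinset (Finset.range ((h.support.sup fun u => u * h u) + 1))
    (expandFun p k r h) (by
      intro m hm
      rw [Finset.mem_range, Nat.lt_succ_iff]
      have hm0 : m ≠ 0 := by rintro rfl; simp [expandFun] at hm
      have hdiv : h (root p k r m) / k ^ depth p k r m ≠ 0 := by
        intro h0
        rw [expandFun, if_neg hm0] at hm
        rcases ite_eq_or_eq (Sm p r m) (h (root p k r m) / k ^ depth p k r m % k)
          (h (root p k r m) / k ^ depth p k r m) with he | he <;>
          rw [he, h0] at hm <;> simp at hm
      have hle : k ^ depth p k r m ≤ h (root p k r m) := by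
        rcases Nat.lt_or_ge (h (root p k r m)) (k ^ depth p k r m) with hlt | hge
        · exact absurd (Nat.div_eq_of_lt hlt) hdiv
        · exact hge
      have hu : root p k r m ∈ h.support := by
        rw [Finsupp.mem_support_iff]
        intro h0; rw [h0] at hle; simp at hle
        exact hdiv (by rw [h0]; simp)
      calc m = root p k r m * k ^ depth p k r m := (root_mul_pow p k r hk m).symm
        _ ≤ root p k r m * h (root p k r m) := Nat.mul_le_mul_left _ hle
        _ ≤ h.support.sup fun u => u * h u := Finset.le_sup (f := fun u => u * h u) hu)

lemma expand_apply (hk : 2 ≤ k) (h : ℕ →₀ ℕ) (m : ℕ) :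
    expand p k r hk h m = expandFun p k r h m := rfl

lemma expand_zero_apply (hk : 2 ≤ k) (h : ℕ →₀ ℕ) : expand p k r hk h 0 = 0 := rfl

/-- validity of position `t` in the chain rooted at `u`. -/
def V (u t : ℕ) : Prop := ∀ s < t, Sm p r (u * k ^ s)

instance (u : ℕ) : DecidablePred (V p k r u) := fun _ => Nat.decidableBallLT _ _

lemma V_zero (u : ℕ) : V p k r u 0 := fun s hs => absurd hs (by omega)

lemma V_mono {u t s : ℕ} (h : V p k r u t) (hle : s ≤ t) : V p k r u s :=
  fun i hi => h i (by omega)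

/-- telescoping: the chain digit expansion of `N` sums to `N`. -/
lemma chain_tele (u N : ℕ) (T : ℕ) :
    (∑ t ∈ Finset.range T, if V p k r u t then
        (if Sm p r (u * k ^ t) then N / k ^ t % k else N / k ^ t) * k ^ t else 0)
      + (if V p k r u T then N / k ^ T * k ^ T else 0) = N := by
  induction T with
  | zero => simp [V_zero]
  | succ T ih =>
    rw [Finset.sum_range_succ, add_assoc]
    conv_rhs => rw [← ih]
    congr 1
    by_cases hVT : V p k r u T
    · by_cases hS : Sm p r (u * k ^ T)
      · have hVT1 : V p k r u (T + 1) := by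
          intro s hs
          rcases Nat.lt_succ_iff_lt_or_eq.1 hs with h' | rfl
          · exact hVT s h'
          · exact hS
        rw [if_pos hVT, if_pos hS, if_pos hVT1, if_pos hVT]
        have hq : N / k ^ (T + 1) = N / k ^ T / k := by
          rw [pow_succ, ← Nat.div_div_eq_div_mul]
        rw [hq, pow_succ]
        calc N / k ^ T % k * k ^ T + N / k ^ T / k * (k ^ T * k)
            = (N / k ^ T % k + k * (N / k ^ T / k)) * k ^ T := by ring
          _ = N / k ^ T * k ^ T := by rw [Nat.mod_add_div]
      · have hVT1 : ¬ V p k r u (T + 1) := fun hV => hS (hV T (by omega))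
        rw [if_pos hVT, if_neg hS, if_neg hVT1, if_pos hVT]
        simp
    · have hVT1 : ¬ V p k r u (T + 1) := fun hV => hVT (V_mono p k r hV (by omega))
      rw [if_neg hVT, if_neg hVT1, if_neg hVT]

lemma geom_bound (hk : 2 ≤ k) (t : ℕ) :
    (∑ s ∈ Finset.range t, (k - 1) * k ^ s) = k ^ t - 1 := by
  induction t with
  | zero => simp
  | succ t ih =>
    rw [Finset.sum_range_succ, ih, pow_succ]
    have h1 : 1 ≤ k ^ t := Nat.one_le_pow _ _ (by omega)
    have h3 : (k - 1) * k ^ t = k * k ^ t - k ^ t := by rw [Nat.sub_mul, one_mul]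
    have h4 : k ^ t * k = k * k ^ t := mul_comm _ _
    have h5 : k ^ t ≤ k * k ^ t := Nat.le_mul_of_pos_left _ (by omega)
    omega

/-- digit extraction: recovering the chain digits from the collapsed total. -/
lemma chain_digits (hk : 2 ≤ k) (u : ℕ) (c : ℕ → ℕ)
    (hc : ∀ s, Sm p r (u * k ^ s) → c s < k) (T t : ℕ) (ht : t < T)
    (hV : V p k r u t) :
    (if Sm p r (u * k ^ t) then
        (∑ s ∈ Finset.range T, if V p k r u s then c s * k ^ s else 0) / k ^ t % k
      else (∑ s ∈ Finset.range T, if V p k r u s then c s * k ^ s else 0) / k ^ t)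
      = c t := by
  set N := ∑ s ∈ Finset.range T, if V p k r u s then c s * k ^ s else 0 with hN
  have hkt : 0 < k ^ t := Nat.pow_pos (by omega)
  -- split the sum
  have hsplit : N = (∑ s ∈ Finset.range t, if V p k r u s then c s * k ^ s else 0)
      + (∑ s ∈ Finset.Ico t T, if V p k r u s then c s * k ^ s else 0) :=
    (Finset.sum_range_add_sum_Ico _ (le_of_lt ht)).symm
  set Low := ∑ s ∈ Finset.range t, if V p k r u s then c s * k ^ s else 0 with hLow
  set High := ∑ s ∈ Finset.Ico t T, if V p k r u s then c s * k ^ (s - t) else 0 with hHigh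
  have hIco : (∑ s ∈ Finset.Ico t T, if V p k r u s then c s * k ^ s else 0)
      = High * k ^ t := by
    rw [hHigh, Finset.sum_mul]
    refine Finset.sum_congr rfl fun s hs => ?_
    rw [Finset.mem_Ico] at hs
    by_cases hVs : V p k r u s
    · rw [if_pos hVs, if_pos hVs, mul_assoc, ← pow_add, Nat.sub_add_cancel hs.1]
    · rw [if_neg hVs, if_neg hVs, zero_mul]
  have hLowlt : Low < k ^ t := by
    have hbd : Low ≤ ∑ s ∈ Finset.range t, (k - 1) * k ^ s := by
      refine Finset.sum_le_sum fun s hs => ?_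
      rw [Finset.mem_range] at hs
      by_cases hVs : V p k r u s
      · rw [if_pos hVs]
        have := hc s (hV s hs)
        exact Nat.mul_le_mul_right _ (by omega)
      · rw [if_neg hVs]; exact Nat.zero_le _
    rw [geom_bound k hk] at hbd
    have : 1 ≤ k ^ t := Nat.one_le_pow _ _ (by omega)
    omega
  have hdiv : N / k ^ t = High := by
    rw [hsplit, hIco, Nat.add_mul_div_right _ _ hkt, Nat.div_eq_of_lt hLowlt, zero_add]
  have hHighsplit : High = c t + (∑ s ∈ Finset.Ico (t + 1) T, if V p k r u s then
      c s * k ^ (s - t) else 0) := by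
    rw [hHigh, Finset.sum_eq_sum_Ico_succ_bot ht, if_pos hV, Nat.sub_self, pow_zero, mul_one]
  by_cases hS : Sm p r (u * k ^ t)
  · rw [if_pos hS, hdiv, hHighsplit]
    have hRest : (∑ s ∈ Finset.Ico (t + 1) T, if V p k r u s then c s * k ^ (s - t) else 0)
        = k * ∑ s ∈ Finset.Ico (t + 1) T, if V p k r u s then c s * k ^ (s - t - 1) else 0 := by
      rw [Finset.mul_sum]
      refine Finset.sum_congr rfl fun s hs => ?_
      rw [Finset.mem_Ico] at hs
      by_cases hVs : V p k r u s
      · rw [if_pos hVs, if_pos hVs]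
        have hpow : k ^ (s - t) = k * k ^ (s - t - 1) := by
          have h9 : s - t - 1 + 1 = s - t := by omega
          conv_lhs => rw [← h9]
          rw [pow_succ]; ring
        rw [hpow]; ring
      · rw [if_neg hVs, if_neg hVs, mul_zero]
    rw [hRest, Nat.add_mul_mod_self_left, Nat.mod_eq_of_lt (hc t hS)]
  · rw [if_neg hS, hdiv, hHighsplit]
    have : (∑ s ∈ Finset.Ico (t + 1) T, if V p k r u s then c s * k ^ (s - t) else 0) = 0 := by
      refine Finset.sum_eq_zero fun s hs => ?_
      rw [Finset.mem_Ico] at hs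
      have hVs : ¬ V p k r u s := fun hVs => hS (hVs t (by omega))
      rw [if_neg hVs]
    rw [this, add_zero]


/-- the value of `collapse X` at a root `u` is the chain-weighted sum. -/
lemma collapse_eq_chain_sum (hk : 2 ≤ k) (X : ℕ →₀ ℕ) {u : ℕ}
    (hu : ¬ KSm p k r u) (hu0 : u ≠ 0) (T : ℕ) (hB : ∀ m ∈ X.support, m < k ^ T) :
    collapse p k r X u
      = ∑ t ∈ Finset.range T, if V p k r u t then X (u * k ^ t) * k ^ t else 0 := by
  rw [collapse_apply, Finsupp.sum]
  rw [← Finset.sum_filter, ← Finset.sum_filter]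
  have hsub : ((Finset.range T).filter (fun t => V p k r u t)).sum
        (fun t => X (u * k ^ t) * k ^ t)
      = ((Finset.range T).filter
          (fun t => V p k r u t ∧ u * k ^ t ∈ X.support)).sum
        (fun t => X (u * k ^ t) * k ^ t) := by
    refine (Finset.sum_subset (fun t ht => ?_) (fun t ht hnt => ?_)).symm
    · rw [Finset.mem_filter] at ht ⊢
      exact ⟨ht.1, ht.2.1⟩
    · rw [Finset.mem_filter] at ht hnt
      have : u * k ^ t ∉ X.support := by
        intro hmem
        exact hnt ⟨ht.1, ht.2, hmem⟩
      rw [Finsupp.notMem_support_iff] at this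
      rw [this, zero_mul]
  rw [hsub]
  refine Finset.sum_nbij' (fun m => depth p k r m) (fun t => u * k ^ t) ?_ ?_ ?_ ?_ ?_
  · intro m hm
    rw [Finset.mem_filter] at hm
    obtain ⟨hms, hmr⟩ := hm
    rw [Finset.mem_filter, Finset.mem_range]
    have hVd : V p k r u (depth p k r m) := by
      intro s hs
      have := Sm_of_lt_depth p k r hk m s hs
      rwa [hmr] at this
    have hmeq : u * k ^ depth p k r m = m := by
      rw [← hmr]; exact root_mul_pow p k r hk m
    refine ⟨?_, hVd, by rwa [hmeq]⟩
    have h1 : k ^ depth p k r m ≤ m := by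
      conv_rhs => rw [← hmeq]
      exact Nat.le_mul_of_pos_left _ (Nat.pos_of_ne_zero hu0)
    have h2 : m < k ^ T := hB m hms
    have := lt_of_le_of_lt h1 h2
    exact (Nat.pow_lt_pow_iff_right (by omega : 1 < k)).1 this
  · intro t ht
    rw [Finset.mem_filter] at ht
    obtain ⟨-, hVt, hmem⟩ := ht
    rw [Finset.mem_filter]
    exact ⟨hmem, (depth_root_coord p k r hk hu hu0 t hVt).2⟩
  · intro m hm
    rw [Finset.mem_filter] at hm
    rw [← hm.2]; exact root_mul_pow p k r hk m
  · intro t ht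
    rw [Finset.mem_filter] at ht
    exact (depth_root_coord p k r hk hu hu0 t ht.2.1).1
  · intro m hm
    rw [Finset.mem_filter] at hm
    have hmeq : u * k ^ depth p k r m = m := by
      rw [← hm.2]; exact root_mul_pow p k r hk m
    rw [hmeq, mul_comm]


lemma collapse_apply_of_KSm (hk : 2 ≤ k) (X : ℕ →₀ ℕ) (hX0 : X 0 = 0) {u : ℕ}
    (hu : KSm p k r u) : collapse p k r X u = 0 := by
  rw [collapse_apply, Finsupp.sum]
  refine Finset.sum_eq_zero fun m hm => ?_
  have hm0 : m ≠ 0 := by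
    intro h0; rw [Finsupp.mem_support_iff, h0] at hm; exact hm hX0
  have : root p k r m ≠ u := by
    intro he; exact not_KSm_root p k r hk m (he ▸ hu)
  rw [if_neg this]

lemma collapse_apply_zero (hk : 2 ≤ k) (X : ℕ →₀ ℕ) (hX0 : X 0 = 0) :
    collapse p k r X 0 = 0 := by
  rw [collapse_apply, Finsupp.sum]
  refine Finset.sum_eq_zero fun m hm => ?_
  have hm0 : m ≠ 0 := by
    intro h0; rw [Finsupp.mem_support_iff, h0] at hm; exact hm hX0
  rw [if_neg (fun he => hm0 ((root_eq_zero_iff p k r hk m).1 he))]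

lemma expand_lt (hk : 2 ≤ k) (h : ℕ →₀ ℕ) (m : ℕ) (hS : Sm p r m) :
    expand p k r hk h m < k := by
  rw [expand_apply, expandFun, if_neg hS.2, if_pos hS]
  exact Nat.mod_lt _ (by omega)

lemma lt_pow_bound (hk : 2 ≤ k) (B : ℕ) : B < k ^ (B + 1) := by
  calc B < 2 ^ (B + 1) := by
        have := Nat.lt_two_pow_self (n := B)
        have h2 : (2 : ℕ) ^ B ≤ 2 ^ (B + 1) := Nat.pow_le_pow_right (by omega) (by omega)
        omega
    _ ≤ k ^ (B + 1) := Nat.pow_le_pow_left (by omega) _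

/-- collapse is a left inverse of expand on root-supported functions. -/
lemma collapse_expand (hk : 2 ≤ k) (h : ℕ →₀ ℕ) (h0 : h 0 = 0)
    (hroot : ∀ m, KSm p k r m → h m = 0) :
    collapse p k r (expand p k r hk h) = h := by
  have hX0 : expand p k r hk h 0 = 0 := rfl
  ext u
  by_cases hu0 : u = 0
  · subst hu0
    rw [collapse_apply_zero p k r hk _ hX0, h0]
  by_cases hKu : KSm p k r u
  · rw [collapse_apply_of_KSm p k r hk _ hX0 hKu, hroot u hKu]
  -- main case : u is a root
  set B := (h.support.sup fun v => v * h v) with hB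
  set T := B + 1 with hT
  have hbound : ∀ m ∈ (expand p k r hk h).support, m < k ^ T := by
    intro m hm
    have := Finsupp.support_onFinset_subset hm
    rw [Finset.mem_range] at this
    calc m ≤ B := by omega
      _ < k ^ T := by rw [hT]; exact lt_pow_bound k hk B
  rw [collapse_eq_chain_sum p k r hk _ hKu hu0 T hbound]
  have hsum : (∑ t ∈ Finset.range T,
      if V p k r u t then expand p k r hk h (u * k ^ t) * k ^ t else 0)
      = ∑ t ∈ Finset.range T, if V p k r u t then
          (if Sm p r (u * k ^ t) then h u / k ^ t % k else h u / k ^ t) * k ^ t else 0 := by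
    refine Finset.sum_congr rfl fun t ht => ?_
    by_cases hVt : V p k r u t
    · rw [if_pos hVt, if_pos hVt]
      obtain ⟨hd, hr⟩ := depth_root_coord p k r hk hKu hu0 t hVt
      have hne : u * k ^ t ≠ 0 :=
        Nat.mul_ne_zero hu0 (pow_ne_zero _ (by omega))
      rw [expand_apply, expandFun, if_neg hne, hd, hr]
    · rw [if_neg hVt, if_neg hVt]
  rw [hsum]
  have htele := chain_tele p k r u (h u) T
  have hdivT : h u / k ^ T = 0 := by
    apply Nat.div_eq_of_lt
    rcases Nat.eq_zero_or_pos (h u) with h' | h'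
    · rw [h']; exact Nat.pow_pos (by omega)
    · have hu_mem : u ∈ h.support := Finsupp.mem_support_iff.2 (by omega)
      have : u * h u ≤ B := Finset.le_sup (f := fun v => v * h v) hu_mem
      have h1 : h u ≤ u * h u := Nat.le_mul_of_pos_left _ (Nat.pos_of_ne_zero hu0)
      calc h u ≤ B := le_trans h1 this
        _ < k ^ T := by rw [hT]; exact lt_pow_bound k hk B
  rw [hdivT, zero_mul] at htele
  simpa using htele

/-- expand is a left inverse of collapse on good functions. -/
lemma expand_collapse (hk : 2 ≤ k) (f : ℕ →₀ ℕ) (hf0 : f 0 = 0)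
    (hgood : ∀ m, Sm p r m → f m < k) :
    expand p k r hk (collapse p k r f) = f := by
  ext m
  by_cases hm0 : m = 0
  · subst hm0; rw [expand_zero_apply, hf0]
  have hu0 : root p k r m ≠ 0 := fun h => hm0 ((root_eq_zero_iff p k r hk m).1 h)
  have hKu : ¬ KSm p k r (root p k r m) := not_KSm_root p k r hk m
  set u := root p k r m with hu
  set t := depth p k r m with ht
  set T := (f.support.sup id) + t + 1 with hT
  have hbound : ∀ m' ∈ f.support, m' < k ^ T := by
    intro m' hm'
    have h1 : m' ≤ f.support.sup id := Finset.le_sup (f := id) hm'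
    calc m' ≤ f.support.sup id := h1
      _ < k ^ (f.support.sup id + 1) := lt_pow_bound k hk _
      _ ≤ k ^ T := Nat.pow_le_pow_right (by omega) (by omega)
  have hN : collapse p k r f u
      = ∑ s ∈ Finset.range T, if V p k r u s then f (u * k ^ s) * k ^ s else 0 :=
    collapse_eq_chain_sum p k r hk f hKu hu0 T hbound
  have hVt : V p k r u t := fun s hs => Sm_of_lt_depth p k r hk m s hs
  have htT : t < T := by omega
  have hdig := chain_digits p k r hk u (fun s => f (u * k ^ s))
    (fun s hs => hgood _ hs) T t htT hVt
  have hmeq : u * k ^ t = m := root_mul_pow p k r hk m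
  rw [expand_apply, expandFun, if_neg hm0, ← hu, ← ht, ← hN] at *
  simpa [hmeq] using hdig

/-! ## plumbing -/

lemma weight_add (f g : ℕ →₀ ℕ) : weight (f + g) = weight f + weight g :=
  Finsupp.sum_add_index' (by simp) (fun a b c => mul_add a b c)

lemma weight_single (a b : ℕ) : weight (Finsupp.single a b) = a * b :=
  Finsupp.sum_single_index (by simp)

lemma weight_toFinsupp (s : Multiset ℕ) : weight (s.toFinsupp) = s.sum := by
  induction s using Multiset.induction with
  | empty => simp [weight]
  | cons a s ih =>
    rw [← Multiset.singleton_add, Multiset.toFinsupp_add, weight_add,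
      Multiset.toFinsupp_singleton, weight_single, Multiset.singleton_add,
      Multiset.sum_cons, ih, mul_one]

lemma weight_toMultiset (g : ℕ →₀ ℕ) : g.toMultiset.sum = weight g := by
  conv_lhs => rw [← weight_toFinsupp, Finsupp.toMultiset_toFinsupp]

/-- the congruence condition in `fP` is exactly `KSm`. -/
lemma mod_iff (hk : 2 ≤ k) (hp : 2 ≤ p) (hr : r < p) (m : ℕ) (hm : m ≠ 0) :
    m % (p * k) = (k * r) % (p * k) ↔ KSm p k r m := by
  have hkr : k * r < p * k := by nlinarith
  have h1 : (k * r) % (p * k) = k * r := Nat.mod_eq_of_lt hkr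
  rw [h1]
  constructor
  · intro h
    have h2 := Nat.div_add_mod m (p * k)
    rw [h] at h2
    set q := m / (p * k) with hq
    have hm_eq : m = k * (p * q + r) := by rw [← h2]; ring
    refine ⟨Dvd.intro _ hm_eq.symm, ?_, ?_⟩
    · rw [hm_eq, Nat.mul_div_cancel_left _ (by omega : 0 < k), Nat.add_comm,
        Nat.add_mul_mod_self_left, Nat.mod_eq_of_lt hr]
    · rw [hm_eq, Nat.mul_div_cancel_left _ (by omega : 0 < k)]
      intro h0
      have : q = 0 ∧ r = 0 := by
        constructor <;> nlinarith [Nat.eq_zero_of_add_eq_zero_right h0]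
      exact hm (by rw [hm_eq, this.1, this.2]; ring)
  · rintro ⟨⟨i, rfl⟩, hSm⟩
    rw [Nat.mul_div_cancel_left _ (by omega : 0 < k)] at hSm
    have h3 := Nat.div_add_mod i p
    rw [hSm.1] at h3
    set d := i / p with hd
    have h4 : k * i = p * k * d + k * r := by rw [← h3]; ring
    rw [h4, Nat.mul_add_mod, Nat.mod_eq_of_lt hkr]

/-- build a partition from a finsupp of multiplicities. -/
noncomputable def mkPart (n : ℕ) (g : ℕ →₀ ℕ) (hg0 : g 0 = 0) (hw : weight g = n) : n.Partition where
  parts := g.toMultiset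
  parts_pos := by
    intro i hi
    rw [Finsupp.mem_toMultiset, Finsupp.mem_support_iff] at hi
    rcases Nat.eq_zero_or_pos i with h | h
    · exact absurd (h ▸ hg0) hi
    · exact h
  parts_sum := by rw [weight_toMultiset, hw]

@[simp] lemma mkPart_count (n : ℕ) (g : ℕ →₀ ℕ) (hg0 : g 0 = 0) (hw : weight g = n) (i : ℕ) :
    (mkPart n g hg0 hw).parts.count i = g i := by
  simp [mkPart, Finsupp.count_toMultiset]

lemma weight_expand (hk : 2 ≤ k) (h : ℕ →₀ ℕ) (hh0 : h 0 = 0)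
    (hroot : ∀ m, KSm p k r m → h m = 0) :
    weight (expand p k r hk h) = weight h := by
  conv_rhs => rw [← collapse_expand p k r hk h hh0 hroot]
  rw [weight_collapse p k r hk]

/-! ## the marked maps -/

noncomputable def phi (j : ℕ) (f : ℕ →₀ ℕ) : ℕ →₀ ℕ :=
  collapse p k r (f.erase j + Finsupp.single j (f j % k)) + Finsupp.single (k * j) (f j / k)

noncomputable def psi (hk : 2 ≤ k) (j' : ℕ) (g : ℕ →₀ ℕ) : ℕ →₀ ℕ :=
  expand p k r hk (g.erase j') + Finsupp.single (j' / k) (k * g j')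

lemma phi_props (hk : 2 ≤ k) (f : ℕ →₀ ℕ) (hf0 : f 0 = 0) {j : ℕ} (hSj : Sm p r j)
    (hjk : k ≤ f j) (hother : ∀ i, Sm p r i → i ≠ j → f i < k) :
    phi p k r j f 0 = 0 ∧
    weight (phi p k r j f) = weight f ∧
    phi p k r j f (k * j) = f j / k ∧
    1 ≤ f j / k ∧
    (∀ i, KSm p k r i → i ≠ k * j → phi p k r j f i = 0) ∧
    psi p k r hk (k * j) (phi p k r j f) = f := by
  have hj0 : j ≠ 0 := hSj.2
  have hkj : KSm p k r (k * j) := (KSm_k_mul p k r hk j).2 hSj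
  have hkj0 : k * j ≠ 0 := KSm.ne_zero p k r hkj
  set f' : ℕ →₀ ℕ := f.erase j + Finsupp.single j (f j % k) with hf'
  have hf'j : f' j = f j % k := by
    rw [hf', Finsupp.add_apply, Finsupp.erase_same, Finsupp.single_eq_same, zero_add]
  have hf'ne : ∀ i, i ≠ j → f' i = f i := by
    intro i hi
    rw [hf', Finsupp.add_apply, Finsupp.erase_ne hi,
      Finsupp.single_eq_of_ne' (Ne.symm hi), add_zero]
  have hf'0 : f' 0 = 0 := by
    rw [hf'ne 0 (fun h => hj0 h.symm)]; exact hf0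
  have hf'good : ∀ m, Sm p r m → f' m < k := by
    intro m hm
    by_cases hmj : m = j
    · subst hmj; rw [hf'j]; exact Nat.mod_lt _ (by omega)
    · rw [hf'ne m hmj]; exact hother m hm hmj
  have hdecomp : f' + Finsupp.single j (k * (f j / k)) = f := by
    ext i
    by_cases hi : i = j
    · subst hi
      rw [Finsupp.add_apply, hf'j, Finsupp.single_eq_same, Nat.mod_add_div]
    · rw [Finsupp.add_apply, hf'ne i hi, Finsupp.single_eq_of_ne' (Ne.symm hi), add_zero]
  have hphikj : phi p k r j f (k * j) = f j / k := by
    rw [phi, Finsupp.add_apply, ← hf', collapse_apply_of_KSm p k r hk f' hf'0 hkj,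
      Finsupp.single_eq_same, zero_add]
  have hphiKS : ∀ i, KSm p k r i → i ≠ k * j → phi p k r j f i = 0 := by
    intro i hKi hik
    rw [phi, Finsupp.add_apply, ← hf', collapse_apply_of_KSm p k r hk f' hf'0 hKi,
      Finsupp.single_eq_of_ne' (Ne.symm hik), add_zero]
  refine ⟨?_, ?_, hphikj, ?_, hphiKS, ?_⟩
  · rw [phi, Finsupp.add_apply, ← hf', collapse_apply_zero p k r hk f' hf'0,
      Finsupp.single_eq_of_ne' hkj0, add_zero]
  · rw [phi, ← hf', weight_add, weight_collapse p k r hk, weight_single]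
    conv_rhs => rw [← hdecomp, weight_add, weight_single]
    ring
  · exact (Nat.one_le_div_iff (by omega)).2 hjk
  · have h1 : (phi p k r j f).erase (k * j) = collapse p k r f' := by
      ext i
      by_cases hi : i = k * j
      · subst hi
        rw [Finsupp.erase_same, collapse_apply_of_KSm p k r hk f' hf'0 hkj]
      · rw [Finsupp.erase_ne hi, phi, Finsupp.add_apply, ← hf',
          Finsupp.single_eq_of_ne' (Ne.symm hi), add_zero]
    have h3 : k * j / k = j := Nat.mul_div_cancel_left j (by omega)
    rw [psi, h1, hphikj, h3, expand_collapse p k r hk f' hf'0 hf'good, hdecomp]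

lemma psi_props (hk : 2 ≤ k) (g : ℕ →₀ ℕ) (hg0 : g 0 = 0) {j' : ℕ}
    (hKj' : KSm p k r j') (hM : 1 ≤ g j')
    (hsing : ∀ i, KSm p k r i → i ≠ j' → g i = 0) :
    psi p k r hk j' g 0 = 0 ∧
    weight (psi p k r hk j' g) = weight g ∧
    Sm p r (j' / k) ∧
    k ≤ psi p k r hk j' g (j' / k) ∧
    (∀ i, Sm p r i → i ≠ j' / k → psi p k r hk j' g i < k) ∧
    phi p k r (j' / k) (psi p k r hk j' g) = g := by
  have hj'0 : j' ≠ 0 := KSm.ne_zero p k r hKj'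
  have hSj : Sm p r (j' / k) := hKj'.2
  have hj0 : j' / k ≠ 0 := hSj.2
  have hkj : k * (j' / k) = j' := Nat.mul_div_cancel' hKj'.1
  set h : ℕ →₀ ℕ := g.erase j' with hh
  have hh0 : h 0 = 0 := by rw [hh, Finsupp.erase_ne (fun he => hj'0 he.symm)]; exact hg0
  have hroot : ∀ m, KSm p k r m → h m = 0 := by
    intro m hKm
    by_cases hmj : m = j'
    · subst hmj; exact Finsupp.erase_same
    · rw [hh, Finsupp.erase_ne hmj]; exact hsing m hKm hmj
  have hgdecomp : h + Finsupp.single j' (g j') = g := Finsupp.erase_add_single j' g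
  have hexlt : expand p k r hk h (j' / k) < k := expand_lt p k r hk h _ hSj
  have hpsij : psi p k r hk j' g (j' / k)
      = expand p k r hk h (j' / k) + k * g j' := by
    rw [psi, Finsupp.add_apply, Finsupp.single_eq_same, hh]
  have hpsine : ∀ i, i ≠ j' / k → psi p k r hk j' g i = expand p k r hk h i := by
    intro i hi
    rw [psi, Finsupp.add_apply, Finsupp.single_eq_of_ne' (Ne.symm hi), add_zero, hh]
  refine ⟨?_, ?_, hSj, ?_, ?_, ?_⟩
  · rw [hpsine 0 (fun he => hj0 he.symm), expand_zero_apply]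
  · have hw : (j' / k) * (k * g j') = j' * g j' := by
      calc (j' / k) * (k * g j') = (k * (j' / k)) * g j' := by ring
        _ = j' * g j' := by rw [hkj]
    rw [psi, weight_add, weight_single, ← hh, weight_expand p k r hk h hh0 hroot, hw]
    conv_rhs => rw [← hgdecomp, weight_add, weight_single]
  · rw [hpsij]
    have : k * 1 ≤ k * g j' := Nat.mul_le_mul_left _ hM
    omega
  · intro i hSi hij
    rw [hpsine i hij]
    exact expand_lt p k r hk h i hSi
  · set f : ℕ →₀ ℕ := psi p k r hk j' g with hf
    have hfj : f (j' / k) = expand p k r hk h (j' / k) + k * g j' := hpsij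
    have hfjmod : f (j' / k) % k = expand p k r hk h (j' / k) := by
      rw [hfj, Nat.add_mul_mod_self_left, Nat.mod_eq_of_lt hexlt]
    have hfjdiv : f (j' / k) / k = g j' := by
      rw [hfj, Nat.add_mul_div_left _ _ (by omega : 0 < k),
        Nat.div_eq_of_lt hexlt, zero_add]
    have h1 : f.erase (j' / k) + Finsupp.single (j' / k) (f (j' / k) % k)
        = expand p k r hk h := by
      ext i
      by_cases hi : i = j' / k
      · subst hi
        rw [Finsupp.add_apply, Finsupp.erase_same, Finsupp.single_eq_same, zero_add, hfjmod]
      · rw [Finsupp.add_apply, Finsupp.erase_ne hi,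
          Finsupp.single_eq_of_ne' (Ne.symm hi), add_zero, hpsine i hi]
    rw [phi, h1, hfjdiv, collapse_expand p k r hk h hh0 hroot, hkj, hgdecomp]

/-! ## partition-level assembly -/

lemma parts_toFinsupp_apply {n : ℕ} (lam : n.Partition) (i : ℕ) :
    lam.parts.toFinsupp i = lam.parts.count i := Multiset.toFinsupp_apply _ _

lemma parts_toFinsupp_zero {n : ℕ} (lam : n.Partition) : lam.parts.toFinsupp 0 = 0 := by
  rw [parts_toFinsupp_apply]
  exact Multiset.count_eq_zero_of_notMem (fun h => absurd (lam.parts_pos h) (by omega))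

lemma parts_toFinsupp_weight {n : ℕ} (lam : n.Partition) :
    weight lam.parts.toFinsupp = n := by
  rw [weight_toFinsupp, lam.parts_sum]

lemma mkPart_toFinsupp (n : ℕ) (g : ℕ →₀ ℕ) (hg0 : g 0 = 0) (hw : weight g = n) :
    (mkPart n g hg0 hw).parts.toFinsupp = g := Finsupp.toMultiset_toFinsupp g

lemma DC_derive {n : ℕ} (hk : 2 ≤ k) (lam : n.Partition) {j : ℕ}
    (hj : j % p = r ∧ k ≤ lam.parts.count j ∧
      ∀ i, i % p = r → i ≠ j → lam.parts.count i ≤ k - 1) :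
    Sm p r j ∧ k ≤ lam.parts.toFinsupp j ∧
      ∀ i, Sm p r i → i ≠ j → lam.parts.toFinsupp i < k := by
  have hj0 : j ≠ 0 := by
    intro h0; subst h0
    have h1 : lam.parts.count 0 = 0 :=
      Multiset.count_eq_zero_of_notMem (fun h => absurd (lam.parts_pos h) (by omega))
    have := hj.2.1; omega
  refine ⟨⟨hj.1, hj0⟩, by rw [parts_toFinsupp_apply]; exact hj.2.1, ?_⟩
  intro i hSi hij
  have := hj.2.2 i hSi.1 hij
  rw [parts_toFinsupp_apply]; omega

lemma FC_derive {n : ℕ} (hk : 2 ≤ k) (hp : 2 ≤ p) (hr : r < p) (mu : n.Partition) {j' : ℕ}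
    (hj' : j' % (p * k) = (k * r) % (p * k) ∧ j' ∈ mu.parts ∧
      ∀ i ∈ mu.parts, i % (p * k) = (k * r) % (p * k) → i = j') :
    KSm p k r j' ∧ 1 ≤ mu.parts.toFinsupp j' ∧
      ∀ i, KSm p k r i → i ≠ j' → mu.parts.toFinsupp i = 0 := by
  have hj'0 : j' ≠ 0 := by
    intro h0; subst h0
    exact absurd (mu.parts_pos hj'.2.1) (by omega)
  refine ⟨(mod_iff p k r hk hp hr j' hj'0).1 hj'.1, ?_, ?_⟩
  · rw [parts_toFinsupp_apply]
    exact Multiset.count_pos.2 hj'.2.1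
  · intro i hKi hij
    rw [parts_toFinsupp_apply]
    by_contra hne
    have himem : i ∈ mu.parts := Multiset.count_pos.1 (by omega)
    exact hij (hj'.2.2 i himem ((mod_iff p k r hk hp hr i (KSm.ne_zero p k r hKi)).2 hKi))

noncomputable def fwdPart (n : ℕ) (hk : 2 ≤ k) (lam : n.Partition)
    (hD : ∃ j, j % p = r ∧ k ≤ lam.parts.count j ∧
      ∀ i, i % p = r → i ≠ j → lam.parts.count i ≤ k - 1) : n.Partition :=
  mkPart n (phi p k r hD.choose lam.parts.toFinsupp)
    (by
      have d := DC_derive p k r hk lam hD.choose_spec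
      exact (phi_props p k r hk _ (parts_toFinsupp_zero lam) d.1 d.2.1 d.2.2).1)
    (by
      have d := DC_derive p k r hk lam hD.choose_spec
      rw [(phi_props p k r hk _ (parts_toFinsupp_zero lam) d.1 d.2.1 d.2.2).2.1,
        parts_toFinsupp_weight])

noncomputable def bwdPart (n : ℕ) (hk : 2 ≤ k) (hp : 2 ≤ p) (hr : r < p) (mu : n.Partition)
    (hF : ∃ j, j % (p * k) = (k * r) % (p * k) ∧ j ∈ mu.parts ∧
      ∀ i ∈ mu.parts, i % (p * k) = (k * r) % (p * k) → i = j) : n.Partition :=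
  mkPart n (psi p k r hk hF.choose mu.parts.toFinsupp)
    (by
      have d := FC_derive p k r hk hp hr mu hF.choose_spec
      exact (psi_props p k r hk _ (parts_toFinsupp_zero mu) d.1 d.2.1 d.2.2).1)
    (by
      have d := FC_derive p k r hk hp hr mu hF.choose_spec
      rw [(psi_props p k r hk _ (parts_toFinsupp_zero mu) d.1 d.2.1 d.2.2).2.1,
        parts_toFinsupp_weight])

lemma fwdPart_count {n : ℕ} (hk : 2 ≤ k) (lam : n.Partition) (hD) (i : ℕ) :
    (fwdPart p k r n hk lam hD).parts.count i
      = phi p k r hD.choose lam.parts.toFinsupp i := mkPart_count _ _ _ _ _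

lemma bwdPart_count {n : ℕ} (hk : 2 ≤ k) (hp : 2 ≤ p) (hr : r < p) (mu : n.Partition) (hF)
    (i : ℕ) : (bwdPart p k r n hk hp hr mu hF).parts.count i
      = psi p k r hk hF.choose mu.parts.toFinsupp i := mkPart_count _ _ _ _ _

/-- the image of `fwdPart` satisfies the `fP` condition, with explicit witness `k * j`. -/
lemma fwdPart_FC {n : ℕ} (hk : 2 ≤ k) (hp : 2 ≤ p) (hr : r < p) (lam : n.Partition) (hD) :
    (k * hD.choose) % (p * k) = (k * r) % (p * k) ∧
      k * hD.choose ∈ (fwdPart p k r n hk lam hD).parts ∧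
      ∀ i ∈ (fwdPart p k r n hk lam hD).parts,
        i % (p * k) = (k * r) % (p * k) → i = k * hD.choose := by
  have d := DC_derive p k r hk lam hD.choose_spec
  obtain ⟨h1, h2, h3, h4, h5, h6⟩ :=
    phi_props p k r hk _ (parts_toFinsupp_zero lam) d.1 d.2.1 d.2.2
  have hkj : KSm p k r (k * hD.choose) := (KSm_k_mul p k r hk _).2 d.1
  have hkj0 : k * hD.choose ≠ 0 := KSm.ne_zero p k r hkj
  refine ⟨(mod_iff p k r hk hp hr _ hkj0).2 hkj, ?_, ?_⟩
  · apply Multiset.count_pos.1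
    rw [fwdPart_count p k r hk lam hD, h3]
    omega
  · intro i himem hmod
    have hi0 : i ≠ 0 := by
      intro h0; subst h0
      exact absurd ((fwdPart p k r n hk lam hD).parts_pos himem) (by omega)
    have hKi : KSm p k r i := (mod_iff p k r hk hp hr i hi0).1 hmod
    by_contra hne
    have := h5 i hKi hne
    have hcnt : (fwdPart p k r n hk lam hD).parts.count i ≠ 0 :=
      fun h => by rw [← Multiset.count_pos] at himem; omega
    rw [fwdPart_count p k r hk lam hD, this] at hcnt
    exact hcnt rfl

/-- the image of `bwdPart` satisfies the `dP` condition, with explicit witness `j' / k`. -/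
lemma bwdPart_DC {n : ℕ} (hk : 2 ≤ k) (hp : 2 ≤ p) (hr : r < p) (mu : n.Partition) (hF) :
    (hF.choose / k) % p = r ∧
      k ≤ (bwdPart p k r n hk hp hr mu hF).parts.count (hF.choose / k) ∧
      ∀ i, i % p = r → i ≠ hF.choose / k →
        (bwdPart p k r n hk hp hr mu hF).parts.count i ≤ k - 1 := by
  have d := FC_derive p k r hk hp hr mu hF.choose_spec
  obtain ⟨h1, h2, h3, h4, h5, h6⟩ :=
    psi_props p k r hk _ (parts_toFinsupp_zero mu) d.1 d.2.1 d.2.2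
  refine ⟨h3.1, ?_, ?_⟩
  · rw [bwdPart_count p k r hk hp hr mu hF]; exact h4
  · intro i hir hine
    rw [bwdPart_count p k r hk hp hr mu hF]
    by_cases hi0 : i = 0
    · subst hi0
      rw [h1]; omega
    · have := h5 i ⟨hir, hi0⟩ hine
      omega

lemma fwdPart_toFinsupp {n : ℕ} (hk : 2 ≤ k) (lam : n.Partition) (hD) :
    (fwdPart p k r n hk lam hD).parts.toFinsupp
      = phi p k r hD.choose lam.parts.toFinsupp := mkPart_toFinsupp _ _ _ _

lemma bwdPart_toFinsupp {n : ℕ} (hk : 2 ≤ k) (hp : 2 ≤ p) (hr : r < p) (mu : n.Partition)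
    (hF) : (bwdPart p k r n hk hp hr mu hF).parts.toFinsupp
      = psi p k r hk hF.choose mu.parts.toFinsupp := mkPart_toFinsupp _ _ _ _

lemma bwd_fwd {n : ℕ} (hk : 2 ≤ k) (hp : 2 ≤ p) (hr : r < p) (lam : n.Partition) (hD)
    (hF : ∃ j, j % (p * k) = (k * r) % (p * k) ∧ j ∈ (fwdPart p k r n hk lam hD).parts ∧
      ∀ i ∈ (fwdPart p k r n hk lam hD).parts, i % (p * k) = (k * r) % (p * k) → i = j) :
    bwdPart p k r n hk hp hr (fwdPart p k r n hk lam hD) hF = lam := by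
  have d := DC_derive p k r hk lam hD.choose_spec
  obtain ⟨h1, h2, h3, h4, h5, h6⟩ :=
    phi_props p k r hk _ (parts_toFinsupp_zero lam) d.1 d.2.1 d.2.2
  have hw := fwdPart_FC p k r hk hp hr lam hD
  have hchoose : hF.choose = k * hD.choose :=
    (hF.choose_spec.2.2 (k * hD.choose) hw.2.1 hw.1).symm
  apply Nat.Partition.ext
  apply Multiset.ext.2
  intro a
  rw [bwdPart_count p k r hk hp hr _ hF, hchoose, fwdPart_toFinsupp p k r hk lam hD, h6,
    parts_toFinsupp_apply]

lemma fwd_bwd {n : ℕ} (hk : 2 ≤ k) (hp : 2 ≤ p) (hr : r < p) (mu : n.Partition) (hF)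
    (hD : ∃ j, j % p = r ∧ k ≤ (bwdPart p k r n hk hp hr mu hF).parts.count j ∧
      ∀ i, i % p = r → i ≠ j →
        (bwdPart p k r n hk hp hr mu hF).parts.count i ≤ k - 1) :
    fwdPart p k r n hk (bwdPart p k r n hk hp hr mu hF) hD = mu := by
  have d := FC_derive p k r hk hp hr mu hF.choose_spec
  obtain ⟨h1, h2, h3, h4, h5, h6⟩ :=
    psi_props p k r hk _ (parts_toFinsupp_zero mu) d.1 d.2.1 d.2.2
  have hw := bwdPart_DC p k r hk hp hr mu hF
  have hchoose : hD.choose = hF.choose / k := by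
    by_contra hne
    have hs := hD.choose_spec
    have hle := hw.2.2 hD.choose hs.1 hne
    have := hs.2.1
    omega
  apply Nat.Partition.ext
  apply Multiset.ext.2
  intro a
  rw [fwdPart_count p k r hk _ hD, hchoose, bwdPart_toFinsupp p k r hk hp hr mu hF, h6,
    parts_toFinsupp_apply]

end DPFP

theorem dP_eq_fP (k p : ℕ) (hk : 2 ≤ k) (hp : 2 ≤ p) (r : ℕ) (hr : r < p) (n : ℕ)
    (hn : 1 ≤ n) : dP p n k r = fP p n k r := by
  rw [dP, fP]
  refine Nat.card_congr
    ⟨fun x => ⟨DPFP.fwdPart p k r n hk x.1 x.2,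
        ⟨k * x.2.choose, DPFP.fwdPart_FC p k r hk hp hr x.1 x.2⟩⟩,
      fun y => ⟨DPFP.bwdPart p k r n hk hp hr y.1 y.2,
        ⟨y.2.choose / k, DPFP.bwdPart_DC p k r hk hp hr y.1 y.2⟩⟩,
      fun x => Subtype.ext (DPFP.bwd_fwd p k r hk hp hr x.1 x.2 _),
      fun y => Subtype.ext (DPFP.fwd_bwd p k r hk hp hr y.1 y.2 _)⟩
end

section
/- Let p, k ≥ 2. For all n ≥ 0, the number of partitions of n in which exactly one part value is repeated at least pk times (all other values appear at most pk−1 times) equals the number of partitions of n in which exactly one part value divisible by p appears at least k times (all other values divisible by p appear at most k−1 times, and values not divisible by p are unrestricted). -/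
set_option linter.unusedVariables false
set_option linter.unusedSectionVars false

open Finsupp

/-- `d_m(n)`: partitions of `n` in which exactly one part value is repeated at least `m`
times, all other part values appearing at most `m - 1` times. -/
noncomputable def dRep (m n : ℕ) : ℕ :=
  Nat.card {lam : n.Partition //
    ∃ j, m ≤ lam.parts.count j ∧ ∀ i, i ≠ j → lam.parts.count i ≤ m - 1}

/-- `d_p(n,k,0)`: partitions of `n` in which exactly one part value divisible by `p` appears
at least `k` times, all other part values divisible by `p` appear at most `k - 1` times,
and part values not divisible by `p` are unrestricted. -/
noncomputable def dPZero (p n k : ℕ) : ℕ :=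
  Nat.card {lam : n.Partition //
    ∃ j, p ∣ j ∧ k ≤ lam.parts.count j ∧
      ∀ i, p ∣ i → i ≠ j → lam.parts.count i ≤ k - 1}


/-- weight of a multiplicity function -/
noncomputable def wt : (ℕ →₀ ℕ) →+ ℕ := Finsupp.liftAddHom fun i => AddMonoidHom.mulLeft i

lemma wt_single (i c : ℕ) : wt (Finsupp.single i c) = i * c := by
  simp [wt]

lemma wt_apply (f : ℕ →₀ ℕ) : wt f = ∑ i ∈ f.support, i * f i := by
  rw [wt, Finsupp.liftAddHom_apply, Finsupp.sum]
  rfl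

/-- `a`-th digit of `c` in base `m` -/
def dig (m a c : ℕ) : ℕ := c / m ^ a % m

lemma dig_lt {m : ℕ} (hm : 2 ≤ m) (a c : ℕ) : dig m a c < m :=
  Nat.mod_lt _ (by omega)

/-- digit reconstruction -/
lemma dig_sum {m : ℕ} (hm : 2 ≤ m) {c T : ℕ} (h : c < m ^ T) :
    ∑ a ∈ Finset.range T, m ^ a * dig m a c = c := by
  induction T generalizing c with
  | zero => simp at h ⊢; omega
  | succ T ih =>
    rw [Finset.sum_range_succ']
    have h1 : ∀ a, m ^ (a + 1) * dig m (a + 1) c = m * (m ^ a * dig m a (c / m)) := by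
      intro a
      rw [dig, dig, Nat.div_div_eq_div_mul, pow_succ']
      ring
    simp only [h1]
    rw [← Finset.mul_sum, ih (by
      rw [Nat.div_lt_iff_lt_mul (by omega), ← pow_succ]; exact h)]
    simp only [dig, pow_zero, Nat.div_one, one_mul]
    exact Nat.div_add_mod c m

/-- digit extraction -/
lemma dig_extract {m : ℕ} (hm : 2 ≤ m) (d : ℕ → ℕ) (hd : ∀ a, d a < m) (b T : ℕ) :
    dig m b (∑ a ∈ Finset.range T, m ^ a * d a) = if b < T then d b else 0 := by
  induction T generalizing b d with
  | zero => simp [dig]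
  | succ T ih =>
    rw [Finset.sum_range_succ']
    have h1 : ∀ a, m ^ (a + 1) * d (a + 1) = m * (m ^ a * d (a + 1)) := by
      intro a; ring
    simp only [h1, ← Finset.mul_sum, pow_zero, one_mul]
    match b with
    | 0 =>
      rw [if_pos (Nat.succ_pos T)]
      rw [dig, pow_zero, Nat.div_one, Nat.add_comm, Nat.add_mul_mod_self_left,
        Nat.mod_eq_of_lt (hd 0)]
    | b + 1 =>
      have key : dig m (b + 1) (m * (∑ i ∈ Finset.range T, m ^ i * d (i + 1)) + d 0)
          = dig m b (∑ i ∈ Finset.range T, m ^ i * d (i + 1)) := by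
        rw [dig, dig, pow_succ', ← Nat.div_div_eq_div_mul,
          Nat.mul_add_div (by omega : 0 < m), Nat.div_eq_of_lt (hd 0), Nat.add_zero]
      rw [key, ih (fun a => d (a + 1)) (fun a => hd _)]
      simp

/-- exponent of `m` in `i` -/
def expo (m i : ℕ) : ℕ := m.maxPowDiv i
/-- `i` with all factors of `m` removed -/
def bse (m i : ℕ) : ℕ := i / m ^ expo m i

lemma expo_mul_bse (m i : ℕ) : m ^ expo m i * bse m i = i :=
  Nat.mul_div_cancel' (Nat.maxPowDiv.pow_dvd (p := m) (n := i))

lemma bse_ne_zero {m i : ℕ} (hi : i ≠ 0) : bse m i ≠ 0 := by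
  intro h
  have := expo_mul_bse m i
  rw [h, mul_zero] at this
  exact hi this.symm

lemma not_dvd_bse {m i : ℕ} (hm : 2 ≤ m) (hi : i ≠ 0) : ¬ m ∣ bse m i := by
  rintro ⟨c, hc⟩
  have hdvd : m ^ (expo m i + 1) ∣ i := by
    refine ⟨c, ?_⟩
    conv_lhs => rw [← expo_mul_bse m i]
    rw [hc, pow_succ]
    ring
  have h2 : expo m i + 1 ≤ expo m i :=
    (Nat.pow_dvd_iff_le_padicValNat (by omega : m ≠ 1) hi).mp hdvd
  omega

lemma expo_eq_zero {m u : ℕ} (hm : 2 ≤ m) (hu : ¬ m ∣ u) : expo m u = 0 := by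
  by_contra h
  exact hu (dvd_trans (dvd_pow_self m h) (Nat.maxPowDiv.pow_dvd (p := m) (n := u)))

lemma expo_pow_mul {m u : ℕ} (hm : 2 ≤ m) (hu : ¬ m ∣ u) (a : ℕ) :
    expo m (m ^ a * u) = a := by
  have hu0 : u ≠ 0 := fun h => hu (h ▸ dvd_zero m)
  rw [expo, Nat.maxPowDiv, Nat.maxPowDiv.base_pow_mul (by omega) hu0]
  rw [show padicValNat m u = 0 from expo_eq_zero hm hu]
  omega

lemma bse_pow_mul {m u : ℕ} (hm : 2 ≤ m) (hu : ¬ m ∣ u) (a : ℕ) :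
    bse m (m ^ a * u) = u := by
  rw [bse, expo_pow_mul hm hu, Nat.mul_div_cancel_left _ (by positivity)]

lemma pow_mul_inj {m u v a b : ℕ} (hm : 2 ≤ m) (hu : ¬ m ∣ u) (hv : ¬ m ∣ v)
    (h : m ^ a * u = m ^ b * v) : a = b ∧ u = v := by
  have ha : a = b := by
    have := expo_pow_mul hm hu a
    rw [h, expo_pow_mul hm hv] at this
    omega
  subst ha
  exact ⟨rfl, Nat.eq_of_mul_eq_mul_left (by positivity) h⟩

/-- decomposition of a nonzero natural as `m ^ a * u` -/
lemma eq_pow_mul_bse {m : ℕ} (i : ℕ) : i = m ^ expo m i * bse m i := (expo_mul_bse m i).symm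

/-- Glaisher "merge" map -/
noncomputable def glaUp (m : ℕ) (f : ℕ →₀ ℕ) : ℕ →₀ ℕ :=
  ∑ i ∈ f.support, Finsupp.single (bse m i) (m ^ expo m i * f i)

/-- Glaisher "split" map -/
noncomputable def glaDown (m : ℕ) (g : ℕ →₀ ℕ) : ℕ →₀ ℕ :=
  ∑ u ∈ g.support, ∑ a ∈ Finset.range (g u), Finsupp.single (m ^ a * u) (dig m a (g u))

/-- multiply all indices by p -/
noncomputable def pmul (p : ℕ) (f : ℕ →₀ ℕ) : ℕ →₀ ℕ :=
  ∑ i ∈ f.support, Finsupp.single (p * i) (f i)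

/-- restrict to indices divisible by p and divide them by p -/
noncomputable def pdiv (p : ℕ) (g : ℕ →₀ ℕ) : ℕ →₀ ℕ :=
  ∑ u ∈ g.support.filter (p ∣ ·), Finsupp.single (u / p) (g u)

lemma pmul_apply_mul {p : ℕ} (hp : 0 < p) (f : ℕ →₀ ℕ) (i : ℕ) :
    pmul p f (p * i) = f i := by
  rw [pmul, Finsupp.finset_sum_apply]
  simp only [Finsupp.single_apply, Nat.mul_left_cancel_iff hp]
  rw [Finset.sum_ite_eq' f.support i f]
  split
  · rfl
  · exact (Finsupp.notMem_support_iff.mp (by assumption)).symm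

lemma pmul_apply_not_dvd {p : ℕ} (f : ℕ →₀ ℕ) {x : ℕ} (hx : ¬ p ∣ x) :
    pmul p f x = 0 := by
  rw [pmul, Finsupp.finset_sum_apply]
  refine Finset.sum_eq_zero fun i _ => ?_
  rw [Finsupp.single_apply, if_neg (fun h => hx ⟨i, h.symm⟩)]

lemma pdiv_apply {p : ℕ} (hp : 0 < p) (g : ℕ →₀ ℕ) (i : ℕ) :
    pdiv p g i = g (p * i) := by
  rw [pdiv, Finsupp.finset_sum_apply]
  rw [Finset.sum_eq_single (p * i)]
  · rw [Finsupp.single_apply, Nat.mul_div_cancel_left _ hp, if_pos rfl]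
  · rintro u hu hne
    simp only [Finset.mem_filter] at hu
    obtain ⟨c, rfl⟩ := hu.2
    rw [Finsupp.single_apply, Nat.mul_div_cancel_left _ hp]
    rw [if_neg (fun h => hne (by rw [h]))]
  · intro h
    simp only [Finset.mem_filter, Finsupp.mem_support_iff, not_and_or, not_not] at h
    rcases h with h | h
    · rw [Finsupp.single_apply, Nat.mul_div_cancel_left _ hp, if_pos rfl, h]
    · exact absurd ⟨i, rfl⟩ h

lemma not_dvd_ne_zero {m u : ℕ} (hu : ¬ m ∣ u) : u ≠ 0 := fun h => hu (h ▸ dvd_zero m)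

lemma bse_zero (m : ℕ) : bse m 0 = 0 := by simp [bse]

lemma lt_pow_mul {m a u : ℕ} (hm : 2 ≤ m) (hu : u ≠ 0) : a < m ^ a * u :=
  lt_of_lt_of_le ((Nat.lt_two_pow_self (n := a))) <|
    le_trans (Nat.pow_le_pow_left (by omega) a) (Nat.le_mul_of_pos_right _ (Nat.pos_of_ne_zero hu))

lemma glaUp_sum {m : ℕ} (hm : 2 ≤ m) (f : ℕ →₀ ℕ) {u : ℕ} (hu : ¬ m ∣ u) {T : ℕ}
    (hT : ∀ a, f (m ^ a * u) ≠ 0 → a < T) :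
    glaUp m f u = ∑ a ∈ Finset.range T, m ^ a * f (m ^ a * u) := by
  have hu0 : u ≠ 0 := not_dvd_ne_zero hu
  rw [glaUp, Finsupp.finset_sum_apply]
  simp only [Finsupp.single_apply]
  rw [← Finset.sum_filter]
  have hsplit : (Finset.range T) = (Finset.range T).filter (fun a => m ^ a * u ∈ f.support) ∪
      (Finset.range T).filter (fun a => ¬ (m ^ a * u ∈ f.support)) :=
    (Finset.filter_union_filter_not_eq _ _).symm
  rw [hsplit, Finset.sum_union (Finset.disjoint_filter_filter_not _ _ _)]
  have hzero : ∑ a ∈ (Finset.range T).filter (fun a => ¬ (m ^ a * u ∈ f.support)),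
      m ^ a * f (m ^ a * u) = 0 := by
    refine Finset.sum_eq_zero fun a ha => ?_
    simp only [Finset.mem_filter, Finsupp.notMem_support_iff] at ha
    rw [ha.2, mul_zero]
  rw [hzero, add_zero]
  refine Finset.sum_nbij' (fun i => expo m i) (fun a => m ^ a * u) ?_ ?_ ?_ ?_ ?_
  · intro i hi
    simp only [Finset.mem_filter, Finsupp.mem_support_iff] at hi ⊢
    have hi0 : i ≠ 0 := by
      intro h0
      rw [h0, bse_zero] at hi
      exact hu0 hi.2.symm
    have hieq : m ^ expo m i * u = i := by rw [← hi.2]; exact expo_mul_bse m i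
    refine ⟨Finset.mem_range.mpr (hT _ ?_), ?_⟩
    · rw [hieq]; exact hi.1
    · rw [hieq]; exact hi.1
  · intro a ha
    simp only [Finset.mem_filter, Finsupp.mem_support_iff] at ha ⊢
    exact ⟨ha.2, bse_pow_mul hm hu a⟩
  · intro i hi
    simp only [Finset.mem_filter] at hi
    rw [← hi.2]; exact expo_mul_bse m i
  · intro a ha
    exact expo_pow_mul hm hu a
  · intro i hi
    simp only [Finset.mem_filter] at hi
    congr 1
    rw [← hi.2]
    congr 1
    exact (expo_mul_bse m i).symm

lemma glaUp_dig {m : ℕ} (hm : 2 ≤ m) {f : ℕ →₀ ℕ} (hf : ∀ i, f i < m) {u : ℕ}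
    (hu : ¬ m ∣ u) (b : ℕ) : dig m b (glaUp m f u) = f (m ^ b * u) := by
  have hu0 : u ≠ 0 := not_dvd_ne_zero hu
  set T := f.support.sup id + b + 1 with hT
  have hTb : b < T := by omega
  have hTa : ∀ a, f (m ^ a * u) ≠ 0 → a < T := by
    intro a ha
    have hmem : m ^ a * u ∈ f.support := Finsupp.mem_support_iff.mpr ha
    have h1 : m ^ a * u ≤ f.support.sup id := Finset.le_sup (f := id) hmem
    have h2 : a < m ^ a * u := lt_pow_mul hm hu0
    omega
  rw [glaUp_sum hm f hu hTa, dig_extract hm _ (fun a => hf _) b T, if_pos hTb]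

lemma glaUp_apply_of_dvd {m : ℕ} (hm : 2 ≤ m) {f : ℕ →₀ ℕ} (hf0 : f 0 = 0) {x : ℕ}
    (hx : m ∣ x) : glaUp m f x = 0 := by
  rw [glaUp, Finsupp.finset_sum_apply]
  refine Finset.sum_eq_zero fun i hi => ?_
  have hi0 : i ≠ 0 := by
    intro h; rw [h] at hi; exact Finsupp.mem_support_iff.mp hi hf0
  rw [Finsupp.single_apply, if_neg]
  intro h
  exact not_dvd_bse hm hi0 (h ▸ hx)

lemma wt_glaUp (m : ℕ) (f : ℕ →₀ ℕ) : wt (glaUp m f) = wt f := by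
  rw [glaUp, map_sum, wt_apply]
  refine Finset.sum_congr rfl fun i _ => ?_
  rw [wt_single, ← mul_assoc, mul_comm (bse m i) (m ^ expo m i), expo_mul_bse]

lemma glaUp_inj {m : ℕ} (hm : 2 ≤ m) {f g : ℕ →₀ ℕ}
    (hf0 : f 0 = 0) (hg0 : g 0 = 0) (hf : ∀ i, f i < m) (hg : ∀ i, g i < m)
    (h : glaUp m f = glaUp m g) : f = g := by
  ext i
  rcases eq_or_ne i 0 with rfl | hi0
  · rw [hf0, hg0]
  · have h1 := glaUp_dig hm hf (not_dvd_bse hm hi0) (expo m i)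
    have h2 := glaUp_dig hm hg (not_dvd_bse hm hi0) (expo m i)
    rw [expo_mul_bse] at h1 h2
    rw [← h1, ← h2, h]

lemma glaDown_apply_zero {m : ℕ} (hm : 2 ≤ m) {g : ℕ →₀ ℕ} (hg : ∀ i, m ∣ i → g i = 0) :
    glaDown m g 0 = 0 := by
  rw [glaDown, Finsupp.finset_sum_apply]
  refine Finset.sum_eq_zero fun u hu => ?_
  have hu0 : u ≠ 0 := by
    intro h; rw [h] at hu; exact Finsupp.mem_support_iff.mp hu (hg 0 (dvd_zero m))
  rw [Finsupp.finset_sum_apply]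
  refine Finset.sum_eq_zero fun a _ => ?_
  rw [Finsupp.single_apply, if_neg]
  exact Nat.mul_ne_zero (by positivity) hu0

lemma glaDown_pow_mul {m : ℕ} (hm : 2 ≤ m) {g : ℕ →₀ ℕ} (hg : ∀ i, m ∣ i → g i = 0)
    {u : ℕ} (hu : ¬ m ∣ u) (b : ℕ) : glaDown m g (m ^ b * u) = dig m b (g u) := by
  have hu0 : u ≠ 0 := not_dvd_ne_zero hu
  rw [glaDown, Finsupp.finset_sum_apply]
  rw [Finset.sum_eq_single u]
  · rw [Finsupp.finset_sum_apply]
    have hcond : ∀ a, (m ^ a * u = m ^ b * u) ↔ a = b := by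
      intro a
      constructor
      · intro h; exact (pow_mul_inj hm hu hu h).1
      · rintro rfl; rfl
    simp only [Finsupp.single_apply, hcond]
    rw [Finset.sum_ite_eq' (Finset.range (g u)) b]
    split
    · rfl
    · rename_i hb
      rw [Finset.mem_range, not_lt] at hb
      have : g u < m ^ b :=
        lt_of_le_of_lt hb (lt_of_lt_of_le ((Nat.lt_two_pow_self (n := b))) (Nat.pow_le_pow_left (by omega) b))
      rw [dig, Nat.div_eq_of_lt this, Nat.zero_mod]
  · intro v hv hvu
    have hv0 : v ≠ 0 := by
      intro h; rw [h] at hv; exact Finsupp.mem_support_iff.mp hv (hg 0 (dvd_zero m))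
    have hvd : ¬ m ∣ v := by
      intro hd; exact Finsupp.mem_support_iff.mp hv (hg v hd)
    rw [Finsupp.finset_sum_apply]
    refine Finset.sum_eq_zero fun a _ => ?_
    rw [Finsupp.single_apply, if_neg]
    intro h
    exact hvu (pow_mul_inj hm hvd hu h).2
  · intro h
    rw [Finsupp.notMem_support_iff] at h
    rw [h]
    rw [Finsupp.finset_sum_apply]  -- sum over range 0 = empty
    simp [dig]

lemma glaDown_lt {m : ℕ} (hm : 2 ≤ m) {g : ℕ →₀ ℕ} (hg : ∀ i, m ∣ i → g i = 0)
    (x : ℕ) : glaDown m g x < m := by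
  rcases eq_or_ne x 0 with rfl | hx
  · rw [glaDown_apply_zero hm hg]; omega
  · conv_lhs => rw [show x = m ^ expo m x * bse m x from (expo_mul_bse m x).symm]
    rw [glaDown_pow_mul hm hg (not_dvd_bse hm hx)]
    exact dig_lt hm _ _

lemma wt_glaDown {m : ℕ} (hm : 2 ≤ m) (g : ℕ →₀ ℕ) : wt (glaDown m g) = wt g := by
  rw [glaDown, map_sum, wt_apply]
  refine Finset.sum_congr rfl fun u _ => ?_
  rw [map_sum]
  have h1 : ∀ a ∈ Finset.range (g u), wt (Finsupp.single (m ^ a * u) (dig m a (g u)))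
      = u * (m ^ a * dig m a (g u)) := by
    intro a _
    rw [wt_single]; ring
  rw [Finset.sum_congr rfl h1, ← Finset.mul_sum]
  congr 1
  exact dig_sum hm (lt_of_lt_of_le (Nat.lt_two_pow_self) (Nat.pow_le_pow_left (by omega) _))

lemma glaDown_inj {m : ℕ} (hm : 2 ≤ m) {g g' : ℕ →₀ ℕ}
    (hg : ∀ i, m ∣ i → g i = 0) (hg' : ∀ i, m ∣ i → g' i = 0)
    (h : glaDown m g = glaDown m g') : g = g' := by
  ext u
  by_cases hd : m ∣ u
  · rw [hg u hd, hg' u hd]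
  · have hdig : ∀ b, dig m b (g u) = dig m b (g' u) := by
      intro b
      rw [← glaDown_pow_mul hm hg hd b, ← glaDown_pow_mul hm hg' hd b, h]
    set T := max (g u) (g' u) with hT
    have h1 : g u < m ^ T := by
      calc g u ≤ T := le_max_left _ _
      _ < 2 ^ T := Nat.lt_two_pow_self
      _ ≤ m ^ T := Nat.pow_le_pow_left (by omega) T
    have h2 : g' u < m ^ T := by
      calc g' u ≤ T := le_max_right _ _
      _ < 2 ^ T := Nat.lt_two_pow_self
      _ ≤ m ^ T := Nat.pow_le_pow_left (by omega) T
    rw [← dig_sum hm h1, ← dig_sum hm h2]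
    exact Finset.sum_congr rfl fun a _ => by rw [hdig a]

open Classical in
/-- the non-multiples-of-p part -/
noncomputable def offp (p : ℕ) (g : ℕ →₀ ℕ) : ℕ →₀ ℕ := g.filter (fun i => ¬ p ∣ i)

open Classical in
lemma offp_apply_pos {p : ℕ} (g : ℕ →₀ ℕ) {x : ℕ} (h : ¬ p ∣ x) : offp p g x = g x := by
  rw [offp, Finsupp.filter_apply_pos (fun i => ¬ p ∣ i) g h]

open Classical in
lemma offp_apply_neg {p : ℕ} (g : ℕ →₀ ℕ) {x : ℕ} (h : p ∣ x) : offp p g x = 0 := by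
  rw [offp, Finsupp.filter_apply_neg (fun i => ¬ p ∣ i) g (not_not_intro h)]

lemma wt_pmul (p : ℕ) (f : ℕ →₀ ℕ) : wt (pmul p f) = p * wt f := by
  rw [pmul, map_sum, wt_apply, Finset.mul_sum]
  refine Finset.sum_congr rfl fun i _ => ?_
  rw [wt_single]; ring

lemma pmul_inj {p : ℕ} (hp : 0 < p) {f g : ℕ →₀ ℕ} (h : pmul p f = pmul p g) : f = g := by
  ext i
  rw [← pmul_apply_mul hp f i, ← pmul_apply_mul hp g i, h]

/-- decomposition of a multiplicity function into off-p and p parts -/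
lemma offp_add_pmul_pdiv {p : ℕ} (hp : 0 < p) (g : ℕ →₀ ℕ) :
    offp p g + pmul p (pdiv p g) = g := by
  ext x
  rw [Finsupp.add_apply]
  by_cases hx : p ∣ x
  · obtain ⟨c, rfl⟩ := hx
    rw [offp_apply_neg g (Dvd.intro c rfl), pmul_apply_mul hp, pdiv_apply hp, zero_add]
  · rw [offp_apply_pos g hx, pmul_apply_not_dvd _ hx, add_zero]

lemma offp_pmul {p : ℕ} (hp : 0 < p) (f : ℕ →₀ ℕ) : offp p (pmul p f) = 0 := by
  ext x
  by_cases hx : p ∣ x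
  · rw [offp_apply_neg _ hx]; rfl
  · rw [offp_apply_pos _ hx, pmul_apply_not_dvd _ hx]; rfl

lemma offp_offp (p : ℕ) (g : ℕ →₀ ℕ) : offp p (offp p g) = offp p g := by
  ext x
  by_cases hx : p ∣ x
  · rw [offp_apply_neg _ hx, offp_apply_neg _ hx]
  · rw [offp_apply_pos _ hx]

open Classical in
lemma offp_add (p : ℕ) (g g' : ℕ →₀ ℕ) : offp p (g + g') = offp p g + offp p g' := by
  simp [offp, Finsupp.filter_add]

lemma pdiv_add {p : ℕ} (hp : 0 < p) (g g' : ℕ →₀ ℕ) :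
    pdiv p (g + g') = pdiv p g + pdiv p g' := by
  ext i; simp [pdiv_apply hp]

lemma pdiv_offp {p : ℕ} (hp : 0 < p) (g : ℕ →₀ ℕ) : pdiv p (offp p g) = 0 := by
  ext i
  rw [pdiv_apply hp, offp_apply_neg _ (Dvd.intro i rfl)]; rfl

lemma pdiv_pmul {p : ℕ} (hp : 0 < p) (f : ℕ →₀ ℕ) : pdiv p (pmul p f) = f := by
  ext i
  rw [pdiv_apply hp, pmul_apply_mul hp]

section Core
variable {p k : ℕ} (hp : 2 ≤ p) (hk : 2 ≤ k)

/-- forward core map: from multiplicity `< p*k` to (mult of multiples of p) `< k` -/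
noncomputable def fwdCore (p k : ℕ) (f : ℕ →₀ ℕ) : ℕ →₀ ℕ :=
  offp p (glaUp (p * k) f) + pmul p (glaDown k (pdiv p (glaUp (p * k) f)))

/-- backward core map -/
noncomputable def bwdCore (p k : ℕ) (h : ℕ →₀ ℕ) : ℕ →₀ ℕ :=
  glaDown (p * k) (offp p h + pmul p (glaUp k (pdiv p h)))

include hp hk

lemma hm2 : 2 ≤ p * k := le_trans hp (Nat.le_mul_of_pos_right p (by omega))

-- facts about the forward chain
lemma fwd_pdiv_glaUp_cond {f : ℕ →₀ ℕ} (hf0 : f 0 = 0) :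
    ∀ i, k ∣ i → pdiv p (glaUp (p * k) f) i = 0 := by
  rintro i ⟨c, rfl⟩
  rw [pdiv_apply (by omega : 0 < p)]
  exact glaUp_apply_of_dvd (hm2 hp hk) hf0 ⟨c, by ring⟩

lemma fwdCore_zero {f : ℕ →₀ ℕ} (hf0 : f 0 = 0) : fwdCore p k f 0 = 0 := by
  have hp0 : 0 < p := by omega
  rw [fwdCore, Finsupp.add_apply, offp_apply_neg _ (dvd_zero p), zero_add]
  have h2 : pmul p (glaDown k (pdiv p (glaUp (p * k) f))) 0
      = glaDown k (pdiv p (glaUp (p * k) f)) 0 := by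
    simpa using pmul_apply_mul hp0 (glaDown k (pdiv p (glaUp (p * k) f))) 0
  rw [h2, glaDown_apply_zero hk (fwd_pdiv_glaUp_cond hp hk hf0)]

lemma fwdCore_dvd_lt {f : ℕ →₀ ℕ} (hf0 : f 0 = 0) {i : ℕ} (hi : p ∣ i) :
    fwdCore p k f i < k := by
  obtain ⟨c, rfl⟩ := hi
  rw [fwdCore, Finsupp.add_apply, offp_apply_neg _ (Dvd.intro c rfl),
    pmul_apply_mul (by omega : 0 < p), zero_add]
  exact glaDown_lt hk (fwd_pdiv_glaUp_cond hp hk hf0) c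

lemma wt_fwdCore (f : ℕ →₀ ℕ) : wt (fwdCore p k f) = wt f := by
  rw [fwdCore, map_add, wt_pmul, wt_glaDown hk, ← wt_pmul, ← map_add,
    offp_add_pmul_pdiv (by omega : 0 < p), wt_glaUp]

lemma fwdCore_inj {f f' : ℕ →₀ ℕ} (hf0 : f 0 = 0) (hf'0 : f' 0 = 0)
    (hf : ∀ i, f i < p * k) (hf' : ∀ i, f' i < p * k)
    (h : fwdCore p k f = fwdCore p k f') : f = f' := by
  have hp0 : 0 < p := by omega
  have hoff : ∀ g : ℕ →₀ ℕ, offp p (fwdCore p k g) = offp p (glaUp (p * k) g) := by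
    intro g
    rw [fwdCore, offp_add, offp_pmul hp0, add_zero, offp_offp]
  have hpd : ∀ g : ℕ →₀ ℕ, pdiv p (fwdCore p k g) =
      glaDown k (pdiv p (glaUp (p * k) g)) := by
    intro g
    rw [fwdCore, pdiv_add hp0, pdiv_offp hp0, pdiv_pmul hp0, zero_add]
  have h1 : offp p (glaUp (p * k) f) = offp p (glaUp (p * k) f') := by
    rw [← hoff f, ← hoff f', h]
  have h2 : glaDown k (pdiv p (glaUp (p * k) f)) = glaDown k (pdiv p (glaUp (p * k) f')) := by
    rw [← hpd f, ← hpd f', h]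
  have h3 : pdiv p (glaUp (p * k) f) = pdiv p (glaUp (p * k) f') :=
    glaDown_inj hk (fwd_pdiv_glaUp_cond hp hk hf0) (fwd_pdiv_glaUp_cond hp hk hf'0) h2
  have h4 : glaUp (p * k) f = glaUp (p * k) f' := by
    rw [← offp_add_pmul_pdiv hp0 (glaUp (p * k) f), ← offp_add_pmul_pdiv hp0 (glaUp (p * k) f'),
      h1, h3]
  exact glaUp_inj (hm2 hp hk) hf0 hf'0 hf hf' h4

-- facts about the backward chain
lemma bwd_pdiv_cond {h : ℕ →₀ ℕ} (hS : ∀ i, p ∣ i → h i < k) :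
    ∀ i, (pdiv p h) i < k := fun i => by
  rw [pdiv_apply (by omega : 0 < p)]
  exact hS _ (Dvd.intro i rfl)

lemma bwd_pdiv_zero {h : ℕ →₀ ℕ} (hh0 : h 0 = 0) : (pdiv p h) 0 = 0 := by
  rw [pdiv_apply (by omega : 0 < p), mul_zero, hh0]

lemma bwd_g_cond {h : ℕ →₀ ℕ} (hh0 : h 0 = 0) :
    ∀ i, p * k ∣ i → (offp p h + pmul p (glaUp k (pdiv p h))) i = 0 := by
  rintro i ⟨c, rfl⟩
  rw [Finsupp.add_apply, offp_apply_neg _ ⟨k * c, by ring⟩,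
    show p * k * c = p * (k * c) by ring, pmul_apply_mul (by omega : 0 < p),
    glaUp_apply_of_dvd hk (bwd_pdiv_zero hp hk hh0) ⟨c, rfl⟩]

lemma bwdCore_zero {h : ℕ →₀ ℕ} (hh0 : h 0 = 0) : bwdCore p k h 0 = 0 :=
  glaDown_apply_zero (hm2 hp hk) (bwd_g_cond hp hk hh0)

lemma bwdCore_lt {h : ℕ →₀ ℕ} (hh0 : h 0 = 0) (i : ℕ) : bwdCore p k h i < p * k :=
  glaDown_lt (hm2 hp hk) (bwd_g_cond hp hk hh0) i

lemma wt_bwdCore {h : ℕ →₀ ℕ} (hS : ∀ i, p ∣ i → h i < k) : wt (bwdCore p k h) = wt h := by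
  rw [bwdCore, wt_glaDown (hm2 hp hk), map_add, wt_pmul, wt_glaUp, ← wt_pmul, ← map_add,
    offp_add_pmul_pdiv (by omega : 0 < p)]

lemma bwdCore_inj {h h' : ℕ →₀ ℕ} (hh0 : h 0 = 0) (hh'0 : h' 0 = 0)
    (hS : ∀ i, p ∣ i → h i < k) (hS' : ∀ i, p ∣ i → h' i < k)
    (heq : bwdCore p k h = bwdCore p k h') : h = h' := by
  have hp0 : 0 < p := by omega
  have h1 : offp p h + pmul p (glaUp k (pdiv p h))
      = offp p h' + pmul p (glaUp k (pdiv p h')) :=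
    glaDown_inj (hm2 hp hk) (bwd_g_cond hp hk hh0) (bwd_g_cond hp hk hh'0) heq
  have h2 : offp p h = offp p h' := by
    have := congrArg (offp p) h1
    rwa [offp_add, offp_add, offp_pmul hp0, offp_pmul hp0, add_zero, add_zero,
      offp_offp, offp_offp] at this
  have h3 : glaUp k (pdiv p h) = glaUp k (pdiv p h') := by
    have := congrArg (pdiv p) h1
    rwa [pdiv_add hp0, pdiv_add hp0, pdiv_offp hp0, pdiv_offp hp0, pdiv_pmul hp0,
      pdiv_pmul hp0, zero_add, zero_add] at this
  have h4 : pdiv p h = pdiv p h' :=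
    glaUp_inj hk (bwd_pdiv_zero hp hk hh0) (bwd_pdiv_zero hp hk hh'0)
      (bwd_pdiv_cond hp hk hS) (bwd_pdiv_cond hp hk hS') h3
  rw [← offp_add_pmul_pdiv hp0 h, ← offp_add_pmul_pdiv hp0 h', h2, h4]

end Core

lemma update_apply_self (f : ℕ →₀ ℕ) (a b : ℕ) : f.update a b a = b := by
  simp

lemma update_apply_ne (f : ℕ →₀ ℕ) (a b : ℕ) {c : ℕ} (h : c ≠ a) : f.update a b c = f c := by
  rw [Finsupp.coe_update, Function.update_of_ne h]

lemma update_add_single {M : ℕ} (hM : 0 < M) (f : ℕ →₀ ℕ) (j : ℕ) :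
    f.update j (f j % M) + Finsupp.single j (f j / M * M) = f := by
  ext x
  rw [Finsupp.add_apply, Finsupp.single_apply]
  rcases eq_or_ne x j with rfl | hx
  · rw [update_apply_self, if_pos rfl, Nat.mod_add_div']
  · rw [update_apply_ne _ _ _ hx, if_neg (fun h => hx h.symm), add_zero]

/-- full forward map, `j` the exceptional value of `f` -/
noncomputable def fwdFull (p k j : ℕ) (f : ℕ →₀ ℕ) : ℕ →₀ ℕ :=
  fwdCore p k (f.update j (f j % (p * k))) + Finsupp.single (p * j) (f j / (p * k) * k)

/-- full backward map, `p * j` the exceptional value of `h` -/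
noncomputable def bwdFull (p k j : ℕ) (h : ℕ →₀ ℕ) : ℕ →₀ ℕ :=
  bwdCore p k (h.update (p * j) (h (p * j) % k)) + Finsupp.single j (h (p * j) / k * (p * k))

section Outer
variable {p k : ℕ} (hp : 2 ≤ p) (hk : 2 ≤ k) {f h : ℕ →₀ ℕ} {j : ℕ}

include hp hk

lemma hm2' : 2 ≤ p * k := le_trans hp (Nat.le_mul_of_pos_right p (by omega))

section Fwd
variable (hf0 : f 0 = 0) (hj : p * k ≤ f j) (hoth : ∀ i, i ≠ j → f i < p * k)
include hf0 hj

lemma fwd_j_ne : j ≠ 0 := by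
  intro h0
  rw [h0, hf0] at hj
  have := hm2' hp hk
  omega

lemma fwd_upd_zero : (f.update j (f j % (p * k))) 0 = 0 := by
  rw [update_apply_ne _ _ _ (Ne.symm (fwd_j_ne hp hk hf0 hj)), hf0]

include hoth

lemma fwd_upd_lt : ∀ i, (f.update j (f j % (p * k))) i < p * k := by
  intro i
  rcases eq_or_ne i j with rfl | hi
  · rw [update_apply_self]
    exact Nat.mod_lt _ (by have := hm2' hp hk; omega)
  · rw [update_apply_ne _ _ _ hi]
    exact hoth i hi

lemma fwdFull_zero : fwdFull p k j f 0 = 0 := by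
  rw [fwdFull, Finsupp.add_apply, fwdCore_zero hp hk (fwd_upd_zero hp hk hf0 hj),
    Finsupp.single_apply, if_neg, add_zero]
  exact Nat.mul_ne_zero (by omega) (fwd_j_ne hp hk hf0 hj)

lemma wt_fwdFull : wt (fwdFull p k j f) = wt f := by
  rw [fwdFull, map_add, wt_fwdCore hp hk, wt_single]
  conv_rhs => rw [← update_add_single (show 0 < p * k by have := hm2' hp hk; omega) f j]
  rw [map_add, wt_single]
  congr 1
  ring

lemma fwdFull_exc_ge : k ≤ fwdFull p k j f (p * j) := by
  rw [fwdFull, Finsupp.add_apply, Finsupp.single_apply, if_pos rfl]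
  have hb : 1 ≤ f j / (p * k) := (Nat.one_le_div_iff (by have := hm2' hp hk; omega)).mpr hj
  have : k ≤ f j / (p * k) * k := le_trans (by omega) (Nat.mul_le_mul_right k hb)
  omega

lemma fwdFull_exc_lt : ∀ i, p ∣ i → i ≠ p * j → fwdFull p k j f i < k := by
  intro i hdvd hne
  rw [fwdFull, Finsupp.add_apply, Finsupp.single_apply, if_neg (fun hh => hne hh.symm), add_zero]
  exact fwdCore_dvd_lt hp hk (fwd_upd_zero hp hk hf0 hj) hdvd

end Fwd

lemma fwdFull_inj {f f' : ℕ →₀ ℕ} {j j' : ℕ}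
    (hf0 : f 0 = 0) (hj : p * k ≤ f j) (hoth : ∀ i, i ≠ j → f i < p * k)
    (hf'0 : f' 0 = 0) (hj' : p * k ≤ f' j') (hoth' : ∀ i, i ≠ j' → f' i < p * k)
    (heq : fwdFull p k j f = fwdFull p k j' f') : f = f' ∧ j = j' := by
  have hk0 : 0 < k := by omega
  have hpk0 : 0 < p * k := by have := hm2' hp hk; omega
  -- j = j'
  have hje : j = j' := by
    by_contra hne
    have h1 : k ≤ fwdFull p k j' f' (p * j') := fwdFull_exc_ge hp hk hf'0 hj' hoth'
    rw [← heq] at h1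
    have h2 : fwdFull p k j f (p * j') < k :=
      fwdFull_exc_lt hp hk hf0 hj hoth (p * j') ⟨j', rfl⟩
        (fun hcon => hne (Nat.eq_of_mul_eq_mul_left (by omega) hcon.symm))
    omega
  subst hje
  refine ⟨?_, rfl⟩
  -- recover b
  set u := f.update j (f j % (p * k)) with hu
  set u' := f'.update j (f' j % (p * k)) with hu'
  have hul : fwdCore p k u (p * j) < k := fwdCore_dvd_lt hp hk (fwd_upd_zero hp hk hf0 hj) ⟨j, rfl⟩
  have hul' : fwdCore p k u' (p * j) < k :=
    fwdCore_dvd_lt hp hk (fwd_upd_zero hp hk hf'0 hj') ⟨j, rfl⟩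
  have happ : ∀ x, fwdCore p k u x + Finsupp.single (p * j) (f j / (p * k) * k) x
      = fwdCore p k u' x + Finsupp.single (p * j) (f' j / (p * k) * k) x := by
    intro x
    have := congrArg (fun z => z x) heq
    simpa [fwdFull, Finsupp.add_apply] using this
  have hb : f j / (p * k) = f' j / (p * k) := by
    have h3 := happ (p * j)
    rw [Finsupp.single_apply, if_pos rfl, Finsupp.single_apply, if_pos rfl] at h3
    have e1 : (fwdCore p k u (p * j) + f j / (p * k) * k) / k = f j / (p * k) := by
      rw [Nat.add_mul_div_right _ _ hk0, Nat.div_eq_of_lt hul, zero_add]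
    have e2 : (fwdCore p k u' (p * j) + f' j / (p * k) * k) / k = f' j / (p * k) := by
      rw [Nat.add_mul_div_right _ _ hk0, Nat.div_eq_of_lt hul', zero_add]
    rw [← e1, ← e2, h3]
  have hcore : fwdCore p k u = fwdCore p k u' := by
    ext x
    have h3 := happ x
    rcases eq_or_ne x (p * j) with rfl | hx
    · rw [Finsupp.single_apply, if_pos rfl, Finsupp.single_apply, if_pos rfl, hb] at h3
      omega
    · rwa [Finsupp.single_apply, if_neg (fun hh => hx hh.symm),
        Finsupp.single_apply, if_neg (fun hh => hx hh.symm), add_zero, add_zero] at h3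
  have huu : u = u' :=
    fwdCore_inj hp hk (fwd_upd_zero hp hk hf0 hj) (fwd_upd_zero hp hk hf'0 hj')
      (fwd_upd_lt hp hk hf0 hj hoth) (fwd_upd_lt hp hk hf'0 hj' hoth') hcore
  calc f = u + Finsupp.single j (f j / (p * k) * (p * k)) := by
        rw [hu, update_add_single hpk0]
    _ = u' + Finsupp.single j (f' j / (p * k) * (p * k)) := by rw [huu, hb]
    _ = f' := by rw [hu', update_add_single hpk0]

section Bwd
variable (hh0 : h 0 = 0) (hj2 : k ≤ h (p * j)) (hoth2 : ∀ i, p ∣ i → i ≠ p * j → h i < k)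
include hh0 hj2

lemma bwd_j_ne : j ≠ 0 := by
  intro h0
  rw [h0, Nat.mul_zero, hh0] at hj2
  omega

lemma bwd_upd_zero : (h.update (p * j) (h (p * j) % k)) 0 = 0 := by
  rw [update_apply_ne, hh0]
  exact Ne.symm (Nat.mul_ne_zero (by omega) (bwd_j_ne hp hk hh0 hj2))

include hoth2

lemma bwd_upd_lt : ∀ i, p ∣ i → (h.update (p * j) (h (p * j) % k)) i < k := by
  intro i hdvd
  rcases eq_or_ne i (p * j) with rfl | hi
  · rw [update_apply_self]
    exact Nat.mod_lt _ (by omega)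
  · rw [update_apply_ne _ _ _ hi]
    exact hoth2 i hdvd hi

lemma bwdFull_zero : bwdFull p k j h 0 = 0 := by
  rw [bwdFull, Finsupp.add_apply, bwdCore_zero hp hk (bwd_upd_zero hp hk hh0 hj2),
    Finsupp.single_apply, if_neg (bwd_j_ne hp hk hh0 hj2), add_zero]

lemma wt_bwdFull : wt (bwdFull p k j h) = wt h := by
  rw [bwdFull, map_add, wt_bwdCore hp hk (bwd_upd_lt hp hk hh0 hj2 hoth2), wt_single]
  conv_rhs => rw [← update_add_single (show 0 < k by omega) h (p * j)]
  rw [map_add, wt_single]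
  congr 1
  ring

lemma bwdFull_exc_ge : p * k ≤ bwdFull p k j h j := by
  rw [bwdFull, Finsupp.add_apply, Finsupp.single_apply, if_pos rfl]
  have hb : 1 ≤ h (p * j) / k := (Nat.one_le_div_iff (by omega)).mpr hj2
  have : p * k ≤ h (p * j) / k * (p * k) :=
    le_trans (by omega) (Nat.mul_le_mul_right (p * k) hb)
  omega

lemma bwdFull_exc_lt : ∀ i, i ≠ j → bwdFull p k j h i < p * k := by
  intro i hne
  rw [bwdFull, Finsupp.add_apply, Finsupp.single_apply, if_neg (fun hh => hne hh.symm), add_zero]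
  exact bwdCore_lt hp hk (bwd_upd_zero hp hk hh0 hj2) i

end Bwd

lemma bwdFull_inj {h h' : ℕ →₀ ℕ} {j j' : ℕ}
    (hh0 : h 0 = 0) (hj2 : k ≤ h (p * j)) (hoth2 : ∀ i, p ∣ i → i ≠ p * j → h i < k)
    (hh'0 : h' 0 = 0) (hj2' : k ≤ h' (p * j')) (hoth2' : ∀ i, p ∣ i → i ≠ p * j' → h' i < k)
    (heq : bwdFull p k j h = bwdFull p k j' h') : h = h' ∧ j = j' := by
  have hk0 : 0 < k := by omega
  have hpk0 : 0 < p * k := by have := hm2' hp hk; omega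
  have hje : j = j' := by
    by_contra hne
    have h1 : p * k ≤ bwdFull p k j' h' j' := bwdFull_exc_ge hp hk hh'0 hj2' hoth2'
    rw [← heq] at h1
    have h2 : bwdFull p k j h j' < p * k :=
      bwdFull_exc_lt hp hk hh0 hj2 hoth2 j' (fun hcon => hne hcon.symm) -- careful direction
    omega
  subst hje
  refine ⟨?_, rfl⟩
  set u := h.update (p * j) (h (p * j) % k) with hu
  set u' := h'.update (p * j) (h' (p * j) % k) with hu'
  have hul : bwdCore p k u j < p * k := bwdCore_lt hp hk (bwd_upd_zero hp hk hh0 hj2) j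
  have hul' : bwdCore p k u' j < p * k := bwdCore_lt hp hk (bwd_upd_zero hp hk hh'0 hj2') j
  have happ : ∀ x, bwdCore p k u x + Finsupp.single j (h (p * j) / k * (p * k)) x
      = bwdCore p k u' x + Finsupp.single j (h' (p * j) / k * (p * k)) x := by
    intro x
    have := congrArg (fun z => z x) heq
    simpa [bwdFull, Finsupp.add_apply] using this
  have hb : h (p * j) / k = h' (p * j) / k := by
    have h3 := happ j
    rw [Finsupp.single_apply, if_pos rfl, Finsupp.single_apply, if_pos rfl] at h3
    have e1 : (bwdCore p k u j + h (p * j) / k * (p * k)) / (p * k) = h (p * j) / k := by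
      rw [Nat.add_mul_div_right _ _ hpk0, Nat.div_eq_of_lt hul, zero_add]
    have e2 : (bwdCore p k u' j + h' (p * j) / k * (p * k)) / (p * k) = h' (p * j) / k := by
      rw [Nat.add_mul_div_right _ _ hpk0, Nat.div_eq_of_lt hul', zero_add]
    rw [← e1, ← e2, h3]
  have hcore : bwdCore p k u = bwdCore p k u' := by
    ext x
    have h3 := happ x
    rcases eq_or_ne x j with rfl | hx
    · rw [Finsupp.single_apply, if_pos rfl, Finsupp.single_apply, if_pos rfl, hb] at h3
      omega
    · rwa [Finsupp.single_apply, if_neg (fun hh => hx hh.symm),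
        Finsupp.single_apply, if_neg (fun hh => hx hh.symm), add_zero, add_zero] at h3
  have huu : u = u' :=
    bwdCore_inj hp hk (bwd_upd_zero hp hk hh0 hj2) (bwd_upd_zero hp hk hh'0 hj2')
      (bwd_upd_lt hp hk hh0 hj2 hoth2) (bwd_upd_lt hp hk hh'0 hj2' hoth2') hcore
  calc h = u + Finsupp.single (p * j) (h (p * j) / k * k) := by
        rw [hu, update_add_single hk0]
    _ = u' + Finsupp.single (p * j) (h' (p * j) / k * k) := by rw [huu, hb]
    _ = h' := by rw [hu', update_add_single hk0]

end Outer

lemma wt_toFinsupp (s : Multiset ℕ) : wt (Multiset.toFinsupp s) = s.sum := by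
  induction s using Multiset.induction_on with
  | empty => simp
  | cons a s ih =>
    rw [← Multiset.singleton_add, map_add, map_add, Multiset.toFinsupp_singleton, wt_single,
      Multiset.sum_add, Multiset.sum_singleton, ih, mul_one]

/-- build a partition of `n` from a multiplicity function -/
noncomputable def mkPart {n : ℕ} (h : ℕ →₀ ℕ) (h0 : h 0 = 0) (hw : wt h = n) : n.Partition where
  parts := Multiset.toFinsupp.symm h
  parts_pos := by
    intro i hi
    rcases Nat.eq_zero_or_pos i with rfl | hpos
    · exfalso
      rw [← Multiset.count_pos, ← Multiset.toFinsupp_apply,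
        AddEquiv.apply_symm_apply] at hi
      omega
    · exact hpos
  parts_sum := by
    have h1 : Multiset.toFinsupp ((Multiset.toFinsupp.symm h : Multiset ℕ)) = h :=
      AddEquiv.apply_symm_apply _ _
    rw [← wt_toFinsupp, h1, hw]

lemma mkPart_count {n : ℕ} (h : ℕ →₀ ℕ) (h0 : h 0 = 0) (hw : wt h = n) (i : ℕ) :
    (mkPart h h0 hw).parts.count i = h i := by
  show Multiset.count i (Multiset.toFinsupp.symm h) = h i
  rw [← Multiset.toFinsupp_apply, AddEquiv.apply_symm_apply]

lemma mkPart_inj {n : ℕ} {h h' : ℕ →₀ ℕ} {h0 h0' hw hw'}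
    (he : mkPart (n := n) h h0 hw = mkPart (n := n) h' h0' hw') : h = h' := by
  have h2 := congrArg Nat.Partition.parts he
  simp only [mkPart] at h2
  exact Multiset.toFinsupp.symm.injective h2

lemma count_toFinsupp (lam : Multiset ℕ) (i : ℕ) :
    Multiset.toFinsupp lam i = lam.count i := rfl

lemma partition_count_zero {n : ℕ} (lam : n.Partition) :
    Multiset.toFinsupp lam.parts 0 = 0 := by
  rw [count_toFinsupp, Multiset.count_eq_zero]
  intro hmem
  exact absurd (lam.parts_pos hmem) (lt_irrefl 0)

theorem dRep_eq_dPZero (p k : ℕ) (hp : 2 ≤ p) (hk : 2 ≤ k) (n : ℕ) :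
    dRep (p * k) n = dPZero p n k := by
  classical
  have hpk2 : 2 ≤ p * k := le_trans hp (Nat.le_mul_of_pos_right p (by omega))
  rw [dRep, dPZero]
  refine le_antisymm ?_ ?_
  · -- forward injection
    have key : ∀ x : {lam : n.Partition //
        ∃ j, p * k ≤ lam.parts.count j ∧ ∀ i, i ≠ j → lam.parts.count i ≤ p * k - 1},
        ∃ j, p * k ≤ Multiset.toFinsupp x.1.parts j ∧
          ∀ i, i ≠ j → Multiset.toFinsupp x.1.parts i < p * k := by
      intro x
      obtain ⟨j, h1, h2⟩ := x.2
      exact ⟨j, h1, fun i hi => by have := h2 i hi; rw [count_toFinsupp]; omega⟩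
    refine Nat.card_le_card_of_injective (fun x => ?_) ?_
    · refine ⟨mkPart (fwdFull p k (key x).choose (Multiset.toFinsupp x.1.parts))
        (fwdFull_zero hp hk (partition_count_zero x.1) (key x).choose_spec.1
          (key x).choose_spec.2)
        (by rw [wt_fwdFull hp hk (partition_count_zero x.1) (key x).choose_spec.1
            (key x).choose_spec.2, wt_toFinsupp, x.1.parts_sum]), ?_⟩
      refine ⟨p * (key x).choose, ⟨(key x).choose, rfl⟩, ?_, ?_⟩
      · rw [mkPart_count]
        exact fwdFull_exc_ge hp hk (partition_count_zero x.1) (key x).choose_spec.1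
          (key x).choose_spec.2
      · intro i hdvd hne
        rw [mkPart_count]
        have := fwdFull_exc_lt hp hk (partition_count_zero x.1) (key x).choose_spec.1
          (key x).choose_spec.2 i hdvd hne
        omega
    · intro x y hxy
      rw [Subtype.mk.injEq] at hxy
      have h1 := mkPart_inj hxy
      have h2 := fwdFull_inj hp hk (partition_count_zero x.1) (key x).choose_spec.1
        (key x).choose_spec.2 (partition_count_zero y.1) (key y).choose_spec.1
        (key y).choose_spec.2 h1
      have h3 : x.1.parts = y.1.parts :=
        Multiset.toFinsupp.injective h2.1
      exact Subtype.ext (Nat.Partition.ext h3)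
  · -- backward injection
    have key : ∀ x : {lam : n.Partition //
        ∃ j, p ∣ j ∧ k ≤ lam.parts.count j ∧
          ∀ i, p ∣ i → i ≠ j → lam.parts.count i ≤ k - 1},
        ∃ j, k ≤ Multiset.toFinsupp x.1.parts (p * j) ∧
          ∀ i, p ∣ i → i ≠ p * j → Multiset.toFinsupp x.1.parts i < k := by
      intro x
      obtain ⟨j, hdvd, h1, h2⟩ := x.2
      obtain ⟨j', rfl⟩ := hdvd
      exact ⟨j', h1, fun i hdi hi => by have := h2 i hdi hi; rw [count_toFinsupp]; omega⟩
    refine Nat.card_le_card_of_injective (fun x => ?_) ?_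
    · refine ⟨mkPart (bwdFull p k (key x).choose (Multiset.toFinsupp x.1.parts))
        (bwdFull_zero hp hk (partition_count_zero x.1) (key x).choose_spec.1
          (key x).choose_spec.2)
        (by rw [wt_bwdFull hp hk (partition_count_zero x.1) (key x).choose_spec.1
            (key x).choose_spec.2, wt_toFinsupp, x.1.parts_sum]), ?_⟩
      refine ⟨(key x).choose, ?_, ?_⟩
      · rw [mkPart_count]
        exact bwdFull_exc_ge hp hk (partition_count_zero x.1) (key x).choose_spec.1
          (key x).choose_spec.2
      · intro i hne
        rw [mkPart_count]
        have := bwdFull_exc_lt hp hk (partition_count_zero x.1) (key x).choose_spec.1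
          (key x).choose_spec.2 i hne
        omega
    · intro x y hxy
      rw [Subtype.mk.injEq] at hxy
      have h1 := mkPart_inj hxy
      have h2 := bwdFull_inj hp hk (partition_count_zero x.1) (key x).choose_spec.1
        (key x).choose_spec.2 (partition_count_zero y.1) (key y).choose_spec.1
        (key y).choose_spec.2 h1
      have h3 : x.1.parts = y.1.parts :=
        Multiset.toFinsupp.injective h2.1
      exact Subtype.ext (Nat.Partition.ext h3)
end
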